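/- arXiv:1212.4663 — 6 statements merged into one kernel-verified Lean document; each statement's English description precedes it below -/
import Mathlib

section
/- Let U_1, ..., U_n be independent real random variables such that for each k, U_k ∈ [a_k, b_k] almost surely for some constants a_k < b_k, and let μ_n = Σ_{k=1}^n E[U_k]. For each k set p_k = (E[U_k] − a_k)/(b_k − a_k), and define c_k = (1 − 2p_k)/(4 ln((1 − p_k)/p_k)) if p_k ≠ 1/2 and c_k = 1/8 if p_k = 1/2. Then for every r ≥ 0, P(|Σ_{k=1}^n U_k − μ_n| ≥ r) ≤ 2 exp(−r² / (4 Σ_{k=1}^n c_k (b_k − a_k)²)). (Kearns–Saul inequality.) -/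
open MeasureTheory ProbabilityTheory

/-- The Kearns--Saul coefficient `c(p)`: `(1 - 2p)/(4 ln((1-p)/p))` for `p ≠ 1/2`,
and `1/8` for `p = 1/2`. -/
noncomputable def ksCoeff (p : ℝ) : ℝ :=
  if p = 1/2 then 1/8 else (1 - 2*p) / (4 * Real.log ((1 - p) / p))

namespace KSaux

noncomputable def E (p s : ℝ) : ℝ := 1 - p + p * Real.exp s
noncomputable def psi (p c s : ℝ) : ℝ := c * s^2 + p * s - Real.log (E p s)
noncomputable def g (p c s : ℝ) : ℝ := 2*c*s + p - p * Real.exp s / E p s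
noncomputable def G (p c s : ℝ) : ℝ := 2*c - p*(1-p)*Real.exp s/(E p s)^2

lemma E_pos {p : ℝ} (hp0 : 0 < p) (hp1 : p < 1) (s : ℝ) : 0 < E p s := by
  have := Real.exp_pos s
  unfold E; nlinarith

lemma hasDerivAt_E (p s : ℝ) : HasDerivAt (E p) (p * Real.exp s) s := by
  unfold E
  simpa using ((Real.hasDerivAt_exp s).const_mul p).const_add (1-p)

lemma hasDerivAt_psi {p : ℝ} (hp0 : 0 < p) (hp1 : p < 1) (c s : ℝ) :
    HasDerivAt (psi p c) (g p c s) s := by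
  have h1 : HasDerivAt (fun s : ℝ => c * s^2) (c * (2*s)) s := by
    simpa using (hasDerivAt_pow 2 s).const_mul c
  have h2 : HasDerivAt (fun s : ℝ => p * s) p s := by
    simpa using (hasDerivAt_id s).const_mul p
  have h3 : HasDerivAt (fun s : ℝ => Real.log (E p s)) (p * Real.exp s / E p s) s :=
    (hasDerivAt_E p s).log (E_pos hp0 hp1 s).ne'
  refine ((h1.add h2).sub h3).congr_deriv ?_
  unfold g; ring

lemma hasDerivAt_g {p : ℝ} (hp0 : 0 < p) (hp1 : p < 1) (c s : ℝ) :
    HasDerivAt (g p c) (G p c s) s := by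
  have h1 : HasDerivAt (fun s : ℝ => 2*c*s + p) (2*c) s := by
    simpa using ((hasDerivAt_id s).const_mul (2*c)).add_const p
  have h2 : HasDerivAt (fun s : ℝ => p * Real.exp s / E p s)
      ((p * Real.exp s * E p s - p * Real.exp s * (p * Real.exp s)) / (E p s)^2) s :=
    ((Real.hasDerivAt_exp s).const_mul p).div (hasDerivAt_E p s) (E_pos hp0 hp1 s).ne'
  refine (h1.sub h2).congr_deriv ?_
  have hE := (E_pos hp0 hp1 s).ne'
  unfold G E at *
  field_simp
  ring

lemma hasDerivAt_G {p : ℝ} (hp0 : 0 < p) (hp1 : p < 1) (c s : ℝ) :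
    HasDerivAt (G p c)
      (-(p*(1-p)*Real.exp s*(1 - p - p*Real.exp s))/(E p s)^3) s := by
  have hE := E_pos hp0 hp1 s
  have h2 : HasDerivAt (fun s : ℝ => (E p s)^2) (2 * E p s * (p * Real.exp s)) s := by
    simpa [mul_comm, mul_assoc, mul_left_comm] using ((hasDerivAt_E p s).fun_pow 2)
  have h3 : HasDerivAt (fun s : ℝ => p*(1-p)*Real.exp s/(E p s)^2)
      ((p*(1-p)*Real.exp s * (E p s)^2 - p*(1-p)*Real.exp s * (2 * E p s * (p * Real.exp s)))
        / ((E p s)^2)^2) s :=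
    ((Real.hasDerivAt_exp s).const_mul (p*(1-p))).div h2 (by positivity)
  have h1 : HasDerivAt (fun _ : ℝ => 2*c) (0:ℝ) s := hasDerivAt_const s (2*c)
  refine (h1.sub h3).congr_deriv ?_
  unfold E at *
  field_simp
  ring

end KSaux

namespace KSaux

lemma psi_zero (p c : ℝ) : psi p c 0 = 0 := by
  simp [psi, E]

lemma g_zero (p c : ℝ) : g p c 0 = 0 := by
  simp [g, E]

variable {p : ℝ}

lemma L_pos (hp0 : 0 < p) (hp2 : p < 1/2) : 0 < Real.log ((1-p)/p) :=
  Real.log_pos (by rw [lt_div_iff₀ hp0]; linarith)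

lemma p_exp_L (hp0 : 0 < p) (hp2 : p < 1/2) :
    p * Real.exp (Real.log ((1-p)/p)) = 1 - p := by
  rw [Real.exp_log (by rw [lt_div_iff₀ hp0]; linarith : (0:ℝ) < (1-p)/p)]
  field_simp

lemma c_id (hp0 : 0 < p) (hp2 : p < 1/2) :
    4 * ((1 - 2*p) / (4 * Real.log ((1-p)/p))) * Real.log ((1-p)/p) = 1 - 2*p := by
  have h := L_pos hp0 hp2
  field_simp

end KSaux

namespace KSaux

variable {p : ℝ}

lemma E_shift (hp0 : 0 < p) (hp2 : p < 1/2) (u : ℝ) :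
    E p (Real.log ((1-p)/p) + u) = Real.exp u * E p (Real.log ((1-p)/p) - u) := by
  have h := p_exp_L hp0 hp2
  have h1 : Real.exp (Real.log ((1-p)/p) + u) = Real.exp (Real.log ((1-p)/p)) * Real.exp u :=
    Real.exp_add _ _
  have h2 : Real.exp (Real.log ((1-p)/p) - u) = Real.exp (Real.log ((1-p)/p)) / Real.exp u := by
    rw [Real.exp_sub]
  have he := (Real.exp_pos u).ne'
  unfold E
  rw [h1, h2]
  field_simp
  nlinarith [Real.exp_pos u, h]

lemma psi_symm (hp0 : 0 < p) (hp2 : p < 1/2) (u : ℝ) :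
    psi p ((1 - 2*p) / (4 * Real.log ((1-p)/p))) (Real.log ((1-p)/p) + u)
      = psi p ((1 - 2*p) / (4 * Real.log ((1-p)/p))) (Real.log ((1-p)/p) - u) := by
  set L := Real.log ((1-p)/p) with hL
  set c := (1 - 2*p) / (4 * L) with hc
  have hEpos : 0 < E p (L - u) := E_pos hp0 (by linarith) _
  have hlog : Real.log (E p (L + u)) = u + Real.log (E p (L - u)) := by
    rw [E_shift hp0 hp2 u, Real.log_mul (Real.exp_pos u).ne' hEpos.ne', Real.log_exp]
  have hcid : 4 * c * L = 1 - 2*p := c_id hp0 hp2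
  have key : c*(L+u)^2 + p*(L+u) - (c*(L-u)^2 + p*(L-u)) = u := by
    linear_combination u * hcid
  unfold psi
  rw [hlog]
  linarith [key]

end KSaux

namespace KSaux

variable {p : ℝ}

lemma g_L (hp0 : 0 < p) (hp2 : p < 1/2) :
    g p ((1 - 2*p) / (4 * Real.log ((1-p)/p))) (Real.log ((1-p)/p)) = 0 := by
  set L := Real.log ((1-p)/p) with hL
  set c := (1 - 2*p) / (4 * L) with hc
  have hpe : p * Real.exp L = 1 - p := p_exp_L hp0 hp2
  have hcid : 4 * c * L = 1 - 2*p := c_id hp0 hp2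
  have hE : E p L = 2*(1-p) := by unfold E; linarith
  have h1p : (0:ℝ) < 1 - p := by linarith
  have hLne : L ≠ 0 := (L_pos hp0 hp2).ne'
  unfold g
  rw [hE, hpe]
  field_simp
  linear_combination (1 - p) * hcid + (p - 2*p^2) * (mul_inv_cancel₀ hLne)

lemma g_concave (hp0 : 0 < p) (hp2 : p < 1/2) (c : ℝ) :
    ConcaveOn ℝ (Set.Iic (Real.log ((1-p)/p))) (g p c) := by
  have hp1 : p < 1 := by linarith
  set L := Real.log ((1-p)/p) with hL
  apply concaveOn_of_hasDerivWithinAt2_nonpos (f' := G p c)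
    (f'' := fun s => -(p*(1-p)*Real.exp s*(1 - p - p*Real.exp s))/(E p s)^3)
    (convex_Iic L)
  · exact (Differentiable.continuous
      (fun s => (hasDerivAt_g hp0 hp1 c s).differentiableAt)).continuousOn
  · exact fun s _ => (hasDerivAt_g hp0 hp1 c s).hasDerivWithinAt
  · exact fun s _ => (hasDerivAt_G hp0 hp1 c s).hasDerivWithinAt
  · intro s hs
    rw [interior_Iic] at hs
    have hpe : p * Real.exp L = 1 - p := p_exp_L hp0 hp2
    have hmon : Real.exp s < Real.exp L := Real.exp_lt_exp.2 hs
    have h1 : 0 ≤ 1 - p - p * Real.exp s := by nlinarith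
    have hE := E_pos hp0 hp1 s
    have hnum : 0 ≤ p*(1-p)*Real.exp s*(1 - p - p*Real.exp s) := by
      have := Real.exp_pos s
      have h1p : (0:ℝ) < 1 - p := by linarith
      positivity
    have : (0:ℝ) < (E p s)^3 := by positivity
    exact div_nonpos_of_nonpos_of_nonneg (by linarith) this.le

end KSaux

namespace KSaux

variable {p : ℝ}

lemma psi_nonneg_lt_half (hp0 : 0 < p) (hp2 : p < 1/2) (s : ℝ) :
    0 ≤ psi p ((1 - 2*p) / (4 * Real.log ((1-p)/p))) s := by
  have hp1 : p < 1 := by linarith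
  set L := Real.log ((1-p)/p) with hL
  set c := (1 - 2*p) / (4 * L) with hc
  have hLpos : 0 < L := L_pos hp0 hp2
  have hconc : ConcaveOn ℝ (Set.Iic L) (g p c) := g_concave hp0 hp2 c
  have hg0 : g p c 0 = 0 := g_zero p c
  have hgL : g p c L = 0 := g_L hp0 hp2
  -- g ≥ 0 on [0, L]
  have hg_nonneg : ∀ x ∈ Set.Icc (0:ℝ) L, 0 ≤ g p c x := by
    intro x hx
    rcases hx with ⟨hx0, hxL⟩
    have hpt : ((L-x)/L) • (0:ℝ) + (x/L) • L = x := by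
      simp only [smul_eq_mul, mul_zero, zero_add]
      field_simp
    have h := hconc.2 (Set.mem_Iic.2 hLpos.le) (Set.mem_Iic.2 le_rfl)
      (show (0:ℝ) ≤ (L-x)/L from div_nonneg (by linarith) hLpos.le)
      (show (0:ℝ) ≤ x/L from div_nonneg hx0 hLpos.le)
      (by field_simp; ring)
    rw [hpt, hg0, hgL] at h
    simpa using h
  -- g ≤ 0 on Iic 0
  have hg_nonpos : ∀ x ∈ Set.Iic (0:ℝ), g p c x ≤ 0 := by
    intro x hx
    rcases eq_or_lt_of_le (Set.mem_Iic.1 hx) with hE | hx0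
    · rw [hE, hg0]
    · have hden : 0 < L - x := by linarith
      have hpt : (L/(L-x)) • x + ((-x)/(L-x)) • L = (0:ℝ) := by
        simp only [smul_eq_mul]
        field_simp
        ring
      have h := hconc.2 (Set.mem_Iic.2 (by linarith : x ≤ L)) (Set.mem_Iic.2 le_rfl)
        (show (0:ℝ) ≤ L/(L-x) from div_nonneg hLpos.le hden.le)
        (show (0:ℝ) ≤ (-x)/(L-x) from div_nonneg (by linarith) hden.le)
        (by field_simp; ring)
      rw [hpt, hg0, hgL] at h
      simp only [smul_eq_mul, mul_zero, add_zero] at h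
      have hap : 0 < L/(L-x) := div_pos hLpos hden
      nlinarith [h]
  -- psi is continuous and differentiable with derivative g
  have hpsicont : Continuous (psi p c) :=
    Differentiable.continuous (fun x => (hasDerivAt_psi hp0 hp1 c x).differentiableAt)
  -- psi antitone on Iic 0
  have hanti : AntitoneOn (psi p c) (Set.Iic 0) := by
    apply antitoneOn_of_hasDerivWithinAt_nonpos (f' := g p c) (convex_Iic 0)
      hpsicont.continuousOn
      (fun x _ => (hasDerivAt_psi hp0 hp1 c x).hasDerivWithinAt)
    intro x hx
    rw [interior_Iic] at hx
    exact hg_nonpos x (Set.mem_Iic.2 hx.le)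
  -- psi monotone on Icc 0 L
  have hmono : MonotoneOn (psi p c) (Set.Icc 0 L) := by
    apply monotoneOn_of_hasDerivWithinAt_nonneg (f' := g p c) (convex_Icc 0 L)
      hpsicont.continuousOn
      (fun x _ => (hasDerivAt_psi hp0 hp1 c x).hasDerivWithinAt)
    intro x hx
    rw [interior_Icc] at hx
    exact hg_nonneg x ⟨hx.1.le, hx.2.le⟩
  have hpsi0 : psi p c 0 = 0 := psi_zero p c
  have key : ∀ x ≤ L, 0 ≤ psi p c x := by
    intro x hxL
    rcases le_or_gt x 0 with hx0 | hx0
    · have := hanti (Set.mem_Iic.2 hx0) (Set.mem_Iic.2 le_rfl) hx0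
      rw [hpsi0] at this
      exact this
    · have := hmono (Set.mem_Icc.2 ⟨le_rfl, hLpos.le⟩) (Set.mem_Icc.2 ⟨hx0.le, hxL⟩) hx0.le
      rw [hpsi0] at this
      exact this
  rcases le_or_gt s L with hsL | hsL
  · exact key s hsL
  · have hsym := psi_symm hp0 hp2 (s - L)
    have h2 : L - (s - L) = 2*L - s := by ring
    have h1 : L + (s - L) = s := by ring
    rw [h1, h2] at hsym
    rw [hsym]
    exact key _ (by linarith)

end KSaux

namespace KSaux

lemma psi_nonneg_half (s : ℝ) : 0 ≤ psi (1/2) (1/8) s := by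
  have hp0 : (0:ℝ) < 1/2 := by norm_num
  have hp1 : (1:ℝ)/2 < 1 := by norm_num
  have hGnn : ∀ x : ℝ, 0 ≤ G (1/2) (1/8) x := by
    intro x
    have hE := E_pos hp0 hp1 x
    have hex := Real.exp_pos x
    have hEx : E (1/2) x = 1/2 + (1/2) * Real.exp x := by unfold E; norm_num
    have hsq : (0:ℝ) ≤ (1 - Real.exp x)^2 := sq_nonneg _
    unfold G
    rw [sub_nonneg, div_le_iff₀ (by positivity)]
    rw [hEx]
    nlinarith [hex, hsq]
  have hgmono : Monotone (g (1/2) (1/8)) :=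
    monotone_of_hasDerivAt_nonneg (fun x => hasDerivAt_g hp0 hp1 (1/8) x) hGnn
  have hg0 : g (1/2) (1/8) 0 = 0 := g_zero _ _
  have hpsicont : Continuous (psi (1/2) (1/8)) :=
    Differentiable.continuous (fun x => (hasDerivAt_psi hp0 hp1 (1/8) x).differentiableAt)
  have hanti : AntitoneOn (psi (1/2) (1/8)) (Set.Iic 0) := by
    apply antitoneOn_of_hasDerivWithinAt_nonpos (f' := g (1/2) (1/8)) (convex_Iic 0)
      hpsicont.continuousOn
      (fun x _ => (hasDerivAt_psi hp0 hp1 (1/8) x).hasDerivWithinAt)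
    intro x hx
    rw [interior_Iic] at hx
    have := hgmono hx.le
    rw [hg0] at this
    exact this
  have hmono : MonotoneOn (psi (1/2) (1/8)) (Set.Ici 0) := by
    apply monotoneOn_of_hasDerivWithinAt_nonneg (f' := g (1/2) (1/8)) (convex_Ici 0)
      hpsicont.continuousOn
      (fun x _ => (hasDerivAt_psi hp0 hp1 (1/8) x).hasDerivWithinAt)
    intro x hx
    rw [interior_Ici] at hx
    have := hgmono hx.le
    rw [hg0] at this
    exact this
  have hpsi0 : psi (1/2) (1/8) 0 = 0 := psi_zero _ _
  rcases le_or_gt s 0 with hs | hs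
  · have := hanti (Set.mem_Iic.2 hs) (Set.mem_Iic.2 le_rfl) hs
    rw [hpsi0] at this; exact this
  · have := hmono (Set.mem_Ici.2 le_rfl) (Set.mem_Ici.2 hs.le) hs.le
    rw [hpsi0] at this; exact this

end KSaux

namespace KSaux

lemma ksCoeff_symm {p : ℝ} (hp : p ≠ 1/2) : ksCoeff (1 - p) = ksCoeff p := by
  have h1 : (1:ℝ) - p ≠ 1/2 := fun h => hp (by linarith)
  unfold ksCoeff
  rw [if_neg h1, if_neg hp]
  have harg : (1 - (1-p)) / (1 - p) = ((1-p)/p)⁻¹ := by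
    rw [inv_div]
    norm_num
  rw [harg, Real.log_inv]
  rw [mul_neg, div_neg, ← neg_div, neg_sub]
  ring_nf

lemma ksCoeff_nonneg {p : ℝ} (hp0 : 0 ≤ p) (hp1 : p ≤ 1) : 0 ≤ ksCoeff p := by
  unfold ksCoeff
  split_ifs with h
  · norm_num
  rcases eq_or_lt_of_le hp0 with h0 | h0
  · simp [← h0]
  rcases eq_or_lt_of_le hp1 with h1 | h1
  · simp [h1]
  rcases lt_or_gt_of_ne h with hlt | hgt
  · have hl : 0 < Real.log ((1-p)/p) := Real.log_pos (by rw [lt_div_iff₀ h0]; linarith)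
    have : 0 < 1 - 2*p := by linarith
    positivity
  · have hl : Real.log ((1-p)/p) < 0 := by
      apply Real.log_neg
      · apply div_pos (by linarith) h0
      · rw [div_lt_one h0]; linarith
    exact div_nonneg_iff.2 (Or.inr ⟨by linarith, by linarith⟩)

/-- The key scalar Kearns-Saul estimate. -/
lemma ks_key {p : ℝ} (hp0 : 0 ≤ p) (hp1 : p ≤ 1) (s : ℝ) :
    (1 - p) + p * Real.exp s ≤ Real.exp (p * s + ksCoeff p * s^2) := by
  rcases eq_or_lt_of_le hp0 with h0 | h0
  · have hc : ksCoeff 0 = 0 := by unfold ksCoeff; norm_num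
    rw [← h0]
    simp [← h0, hc]
  rcases eq_or_lt_of_le hp1 with h1 | h1
  · have hc : ksCoeff 1 = 0 := by unfold ksCoeff; norm_num
    rw [h1]
    simp [h1, hc]
  -- now 0 < p < 1; reduce to psi ≥ 0
  have hE : (0:ℝ) < 1 - p + p * Real.exp s := E_pos h0 h1 s
  rw [show (1:ℝ) - p + p * Real.exp s = E p s from rfl] at hE ⊢
  rw [← Real.log_le_iff_le_exp hE]
  -- i.e. 0 ≤ psi p (ksCoeff p) s
  have key : 0 ≤ psi p (ksCoeff p) s := by
    rcases lt_trichotomy p (1/2) with hlt | heq | hgt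
    · have : ksCoeff p = (1 - 2*p) / (4 * Real.log ((1-p)/p)) := by
        unfold ksCoeff; rw [if_neg (by linarith)]
      rw [this]
      exact psi_nonneg_lt_half h0 hlt s
    · have : ksCoeff p = 1/8 := by unfold ksCoeff; rw [if_pos heq]
      rw [this, heq]
      exact psi_nonneg_half s
    · -- use symmetry p ↦ 1 - p, s ↦ -s
      have hq0 : 0 < 1 - p := by linarith
      have hq2 : 1 - p < 1/2 := by linarith
      have h := psi_nonneg_lt_half hq0 hq2 (-s)
      have hco : (1 - 2*(1-p)) / (4 * Real.log ((1-(1-p))/(1-p))) = ksCoeff p := by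
        have := ksCoeff_symm (p := p) (by intro hh; linarith [hh])
        rw [← this]
        unfold ksCoeff
        rw [if_neg (by intro hh; linarith [hh] : (1:ℝ) - p ≠ 1/2)]
      rw [hco] at h
      unfold psi E at h ⊢
      have hpos : (0:ℝ) < 1 - (1-p) + (1-p) * Real.exp (-s) := E_pos hq0 (by linarith) (-s)
      have hsplit : Real.log (1 - p + p * Real.exp s)
          = s + Real.log (1 - (1-p) + (1-p) * Real.exp (-s)) := by
        have hfac : 1 - p + p * Real.exp s
            = Real.exp s * (1 - (1-p) + (1-p) * Real.exp (-s)) := by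
          have hme : Real.exp s * Real.exp (-s) = 1 := by
            rw [← Real.exp_add]; simp
          nlinarith [hme]
        rw [hfac, Real.log_mul (Real.exp_pos s).ne' hpos.ne', Real.log_exp]
      rw [hsplit]
      nlinarith [h]
  unfold psi at key
  linarith [key]

end KSaux

open MeasureTheory ProbabilityTheory

namespace KSaux

variable {Ω : Type*} [MeasurableSpace Ω] {μ : Measure Ω} [IsProbabilityMeasure μ]
  {X : Ω → ℝ} {a b : ℝ}

lemma integrable_exp_bdd (hX : Measurable X) (hbdd : ∀ᵐ ω ∂μ, X ω ∈ Set.Icc a b) (t : ℝ) :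
    Integrable (fun ω => Real.exp (t * X ω)) μ := by
  apply Integrable.mono' (integrable_const (max (Real.exp (t*a)) (Real.exp (t*b))))
  · exact ((hX.const_mul t).exp).aestronglyMeasurable
  · filter_upwards [hbdd] with ω hω
    rw [Real.norm_eq_abs, abs_of_pos (Real.exp_pos _)]
    rcases le_total 0 t with ht | ht
    · exact le_max_of_le_right (Real.exp_le_exp.2 (mul_le_mul_of_nonneg_left hω.2 ht))
    · exact le_max_of_le_left (Real.exp_le_exp.2 (mul_le_mul_of_nonpos_left hω.1 ht))

lemma integrable_bdd (hX : Measurable X) (hbdd : ∀ᵐ ω ∂μ, X ω ∈ Set.Icc a b) :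
    Integrable X μ := by
  apply Integrable.mono' (integrable_const (max |a| |b|)) hX.aestronglyMeasurable
  filter_upwards [hbdd] with ω hω
  rw [Real.norm_eq_abs]
  exact abs_le_max_abs_abs hω.1 hω.2

lemma mean_mem_Icc (hX : Measurable X) (hbdd : ∀ᵐ ω ∂μ, X ω ∈ Set.Icc a b) :
    μ[X] ∈ Set.Icc a b := by
  have hint := integrable_bdd hX hbdd
  constructor
  · have h := integral_mono_ae (integrable_const a) hint
      (by filter_upwards [hbdd] with ω hω using hω.1)
    simpa using h
  · have h := integral_mono_ae hint (integrable_const b)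
      (by filter_upwards [hbdd] with ω hω using hω.2)
    simpa using h

lemma mgf_le_ks (hab : a < b) (hX : Measurable X) (hbdd : ∀ᵐ ω ∂μ, X ω ∈ Set.Icc a b) (t : ℝ) :
    mgf X μ t ≤ Real.exp (t * μ[X] + ksCoeff ((μ[X] - a)/(b-a)) * (b-a)^2 * t^2) := by
  have hba : (0:ℝ) < b - a := by linarith
  have hint := integrable_bdd hX hbdd
  set m := μ[X] with hm
  obtain ⟨hm1, hm2⟩ := mean_mem_Icc hX hbdd
  set p := (m - a)/(b - a) with hp
  have hp0 : 0 ≤ p := div_nonneg (by linarith) hba.le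
  have hp1 : p ≤ 1 := (div_le_one hba).2 (by linarith)
  set c₁ := Real.exp (t*a)/(b-a) with hc₁
  set c₂ := Real.exp (t*b)/(b-a) with hc₂
  have hpoint : ∀ᵐ ω ∂μ, Real.exp (t * X ω) ≤ c₁ * (b - X ω) + c₂ * (X ω - a) := by
    filter_upwards [hbdd] with ω hω
    have h := convexOn_exp.2 (Set.mem_univ (t*a)) (Set.mem_univ (t*b))
      (show (0:ℝ) ≤ (b - X ω)/(b-a) from div_nonneg (by linarith [hω.2]) hba.le)
      (show (0:ℝ) ≤ (X ω - a)/(b-a) from div_nonneg (by linarith [hω.1]) hba.le)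
      (by field_simp; ring)
    have harg : ((b - X ω)/(b-a)) • (t*a) + ((X ω - a)/(b-a)) • (t*b) = t * X ω := by
      simp only [smul_eq_mul]
      field_simp
      ring
    rw [harg] at h
    calc Real.exp (t * X ω) ≤ (b - X ω)/(b-a) * Real.exp (t*a)
          + (X ω - a)/(b-a) * Real.exp (t*b) := by simpa [smul_eq_mul] using h
      _ = c₁ * (b - X ω) + c₂ * (X ω - a) := by rw [hc₁, hc₂]; ring
  have hf₁ : Integrable (fun ω => c₁ * (b - X ω)) μ :=
    ((integrable_const b).sub hint).const_mul c₁
  have hf₂ : Integrable (fun ω => c₂ * (X ω - a)) μ :=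
    (hint.sub (integrable_const a)).const_mul c₂
  have hFint : Integrable (fun ω => c₁ * (b - X ω) + c₂ * (X ω - a)) μ := hf₁.add hf₂
  have h1 : μ[fun ω => c₁ * (b - X ω)] = c₁ * (b - m) := by
    rw [integral_const_mul _ _, integral_sub (integrable_const b) hint]
    simp [hm]
  have h2 : μ[fun ω => c₂ * (X ω - a)] = c₂ * (m - a) := by
    rw [integral_const_mul _ _, integral_sub hint (integrable_const a)]
    simp [hm]
  have hIF : μ[fun ω => c₁ * (b - X ω) + c₂ * (X ω - a)] = c₁ * (b - m) + c₂ * (m - a) := by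
    rw [integral_add hf₁ hf₂, h1, h2]
  have step1 : mgf X μ t ≤ c₁ * (b - m) + c₂ * (m - a) := by
    rw [← hIF]
    exact integral_mono_ae (integrable_exp_bdd hX hbdd t) hFint hpoint
  have step2 : c₁ * (b - m) + c₂ * (m - a)
      = Real.exp (t*a) * ((1 - p) + p * Real.exp (t*(b-a))) := by
    rw [hc₁, hc₂, show t*b = t*a + t*(b-a) by ring, Real.exp_add, hp]
    field_simp
    ring
  have step3 : Real.exp (t*a) * ((1 - p) + p * Real.exp (t*(b-a)))
      ≤ Real.exp (t*a) * Real.exp (p * (t*(b-a)) + ksCoeff p * (t*(b-a))^2) :=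
    mul_le_mul_of_nonneg_left (ks_key hp0 hp1 (t*(b-a))) (Real.exp_pos _).le
  have hpm : p * (b - a) = m - a := div_mul_cancel₀ _ hba.ne'
  have step4 : Real.exp (t*a) * Real.exp (p * (t*(b-a)) + ksCoeff p * (t*(b-a))^2)
      = Real.exp (t * m + ksCoeff p * (b-a)^2 * t^2) := by
    rw [← Real.exp_add]
    congr 1
    linear_combination t * hpm
  linarith [step1, step2 ▸ step1, step3, step4 ▸ step3]

end KSaux

/-- **Kearns–Saul inequality.** Let `U 0, ..., U (n-1)` be independent real random variables
with `U k ∈ [a k, b k]` almost surely, `a k < b k`. With `p k = (E[U k] - a k)/(b k - a k)` and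
`c k = ksCoeff (p k)`, for every `r ≥ 0`,
`P(|∑ U k - ∑ E[U k]| ≥ r) ≤ 2 exp(- r² / (4 ∑ c k (b k - a k)²))`. -/
theorem kearns_saul_inequality {Ω : Type*} [MeasurableSpace Ω] {μ : Measure Ω}
    [IsProbabilityMeasure μ] {n : ℕ} (U : Fin n → Ω → ℝ) (a b : Fin n → ℝ)
    (hab : ∀ k, a k < b k)
    (hmeas : ∀ k, Measurable (U k))
    (hindep : iIndepFun U μ)
    (hbdd : ∀ k, ∀ᵐ ω ∂μ, U k ω ∈ Set.Icc (a k) (b k))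
    {r : ℝ} (hr : 0 ≤ r) :
    μ {ω | r ≤ |(∑ k, U k ω) - ∑ k, ∫ ω', U k ω' ∂μ|} ≤
      ENNReal.ofReal (2 * Real.exp (-(r^2) /
        (4 * ∑ k, ksCoeff (((∫ ω', U k ω' ∂μ) - a k) / (b k - a k)) * (b k - a k)^2))) := by
  classical
  set C : ℝ := ∑ k, ksCoeff (((∫ ω', U k ω' ∂μ) - a k) / (b k - a k)) * (b k - a k)^2 with hC
  set M : ℝ := ∑ k, ∫ ω', U k ω' ∂μ with hM
  have hmem : ∀ k, (∫ ω', U k ω' ∂μ) ∈ Set.Icc (a k) (b k) :=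
    fun k => KSaux.mean_mem_Icc (hmeas k) (hbdd k)
  have hCnn : 0 ≤ C := Finset.sum_nonneg fun k _ => mul_nonneg
    (KSaux.ksCoeff_nonneg
      (div_nonneg (by linarith [(hmem k).1]) (by linarith [hab k]))
      ((div_le_one (by linarith [hab k])).2 (by linarith [(hmem k).2])))
    (sq_nonneg _)
  have htriv : (1 : ENNReal) ≤ ENNReal.ofReal 2 := by
    rw [ENNReal.ofReal_ofNat]; exact one_le_two
  by_cases hdeg : r = 0 ∨ C = 0
  · refine le_trans prob_le_one ?_
    rcases hdeg with h | h
    · rw [h]; norm_num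
    · rw [h]; norm_num
  push_neg at hdeg
  have hrpos : 0 < r := lt_of_le_of_ne hr (Ne.symm hdeg.1)
  have hCpos : 0 < C := lt_of_le_of_ne hCnn (Ne.symm hdeg.2)
  set S : Ω → ℝ := fun ω => ∑ k, U k ω with hS
  have hSmeas : Measurable S := Finset.measurable_sum _ (fun k _ => hmeas k)
  have hSeq : (∑ k, U k) = S := by ext ω; simp [hS, Finset.sum_apply]
  have hSbdd : ∀ᵐ ω ∂μ, S ω ∈ Set.Icc (∑ k, a k) (∑ k, b k) := by
    filter_upwards [ae_all_iff.2 hbdd] with ω hω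
    exact ⟨Finset.sum_le_sum fun k _ => (hω k).1, Finset.sum_le_sum fun k _ => (hω k).2⟩
  have hSint : ∀ t : ℝ, Integrable (fun ω => Real.exp (t * S ω)) μ :=
    fun t => KSaux.integrable_exp_bdd hSmeas hSbdd t
  have hmgf : ∀ t : ℝ, mgf S μ t ≤ Real.exp (t * M + C * t^2) := by
    intro t
    rw [← hSeq, hindep.mgf_sum hmeas Finset.univ]
    calc ∏ k, mgf (U k) μ t
        ≤ ∏ k, Real.exp (t * (∫ ω', U k ω' ∂μ)
            + ksCoeff (((∫ ω', U k ω' ∂μ) - a k) / (b k - a k)) * (b k - a k)^2 * t^2) :=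
          Finset.prod_le_prod (fun k _ => mgf_nonneg)
            (fun k _ => KSaux.mgf_le_ks (hab k) (hmeas k) (hbdd k) t)
      _ = Real.exp (∑ k, (t * (∫ ω', U k ω' ∂μ)
            + ksCoeff (((∫ ω', U k ω' ∂μ) - a k) / (b k - a k)) * (b k - a k)^2 * t^2)) :=
          (Real.exp_sum _ _).symm
      _ = Real.exp (t * M + C * t^2) := by
          congr 1
          rw [Finset.sum_add_distrib, ← Finset.mul_sum, ← Finset.sum_mul, hM, hC]
  set t : ℝ := r / (2*C) with ht
  have htpos : 0 < t := by positivity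
  have hval : -t * r + C * t^2 = -(r^2) / (4*C) := by
    rw [ht]; field_simp; ring
  have hup : (μ {ω | M + r ≤ S ω}).toReal ≤ Real.exp (-(r^2) / (4*C)) :=
    calc (μ {ω | M + r ≤ S ω}).toReal
        ≤ Real.exp (-t * (M + r)) * mgf S μ t :=
          measure_ge_le_exp_mul_mgf (M + r) htpos.le (hSint t)
      _ ≤ Real.exp (-t * (M + r)) * Real.exp (t * M + C * t^2) :=
          mul_le_mul_of_nonneg_left (hmgf t) (Real.exp_pos _).le
      _ = Real.exp (-(r^2) / (4*C)) := by
          rw [← Real.exp_add, ← hval]; congr 1; ring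
  have hdown : (μ {ω | S ω ≤ M - r}).toReal ≤ Real.exp (-(r^2) / (4*C)) :=
    calc (μ {ω | S ω ≤ M - r}).toReal
        ≤ Real.exp (-(-t) * (M - r)) * mgf S μ (-t) :=
          measure_le_le_exp_mul_mgf (M - r) (by linarith) (hSint (-t))
      _ ≤ Real.exp (-(-t) * (M - r)) * Real.exp ((-t) * M + C * (-t)^2) :=
          mul_le_mul_of_nonneg_left (hmgf (-t)) (Real.exp_pos _).le
      _ = Real.exp (-(r^2) / (4*C)) := by
          rw [← Real.exp_add, ← hval]; congr 1; ring
  have hsub : {ω | r ≤ |S ω - M|} ⊆ {ω | M + r ≤ S ω} ∪ {ω | S ω ≤ M - r} := by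
    intro ω hω
    have hω' : r ≤ |S ω - M| := hω
    rcases le_abs.1 hω' with h | h
    · exact Or.inl (by simp only [Set.mem_setOf_eq]; linarith)
    · exact Or.inr (by simp only [Set.mem_setOf_eq]; linarith)
  have hB1 : μ {ω | M + r ≤ S ω} ≤ ENNReal.ofReal (Real.exp (-(r^2) / (4*C))) :=
    (ENNReal.le_ofReal_iff_toReal_le (measure_ne_top μ _) (Real.exp_pos _).le).2 hup
  have hB2 : μ {ω | S ω ≤ M - r} ≤ ENNReal.ofReal (Real.exp (-(r^2) / (4*C))) :=
    (ENNReal.le_ofReal_iff_toReal_le (measure_ne_top μ _) (Real.exp_pos _).le).2 hdown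
  calc μ {ω | r ≤ |(∑ k, U k ω) - M|}
      ≤ μ ({ω | M + r ≤ S ω} ∪ {ω | S ω ≤ M - r}) := measure_mono hsub
    _ ≤ μ {ω | M + r ≤ S ω} + μ {ω | S ω ≤ M - r} := measure_union_le _ _
    _ ≤ ENNReal.ofReal (Real.exp (-(r^2) / (4*C))) + ENNReal.ofReal (Real.exp (-(r^2) / (4*C))) :=
        add_le_add hB1 hB2
    _ = ENNReal.ofReal (2 * Real.exp (-(r^2) / (4*C))) := by
        rw [← ENNReal.ofReal_add (Real.exp_pos _).le (Real.exp_pos _).le]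
        congr 1
        ring
end

section
/- Let (X_k, F_k)_{k=0}^n be a real-valued martingale such that, for some constants d, σ > 0, the conditions |X_k − X_{k−1}| ≤ d and E[(X_k − X_{k−1})² | F_{k−1}] ≤ σ² hold almost surely for every k ∈ {1,...,n}. Let γ = σ²/d² and, for α ≥ 0, let δ = α/d. Then for every α ≥ 0, P(|X_n − X_0| ≥ αn) ≤ 2 exp(−n · d((δ+γ)/(1+γ) ‖ γ/(1+γ))), where d(p‖q) = p ln(p/q) + (1−p) ln((1−p)/(1−q)) is the binary relative entropy. Moreover, if δ > 1 then P(|X_n − X_0| ≥ αn) = 0. -/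
open MeasureTheory ProbabilityTheory
open Real

/-- Binary relative entropy `d(p‖q) = p ln(p/q) + (1-p) ln((1-p)/(1-q))`. -/
noncomputable def binDiv (p q : ℝ) : ℝ :=
  p * Real.log (p / q) + (1 - p) * Real.log ((1 - p) / (1 - q))


noncomputable def psiAux (x : ℝ) : ℝ := ∫ t in (0:ℝ)..1, (1 - t) * Real.exp (x * t)

lemma psiAux_nonneg (x : ℝ) : 0 ≤ psiAux x := by
  apply intervalIntegral.integral_nonneg (by norm_num)
  intro t ht
  have h1 : t ≤ 1 := ht.2
  have : (0:ℝ) ≤ 1 - t := by linarith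
  positivity

lemma psiAux_mono : Monotone psiAux := by
  intro x y hxy
  apply intervalIntegral.integral_mono_on (by norm_num)
  · exact (Continuous.intervalIntegrable (by continuity) _ _)
  · exact (Continuous.intervalIntegrable (by continuity) _ _)
  · intro t ht
    have h0 : 0 ≤ t := ht.1
    have h1 : t ≤ 1 := ht.2
    have : Real.exp (x * t) ≤ Real.exp (y * t) := by
      apply Real.exp_le_exp.2
      exact mul_le_mul_of_nonneg_right hxy h0
    nlinarith

lemma sq_mul_psiAux (x : ℝ) : x^2 * psiAux x = Real.exp x - 1 - x := by
  rcases eq_or_ne x 0 with rfl | hx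
  · simp
  · have key : psiAux x = (Real.exp x - 1 - x) / x^2 := by
      have h : ∀ t ∈ Set.uIcc (0:ℝ) 1, HasDerivAt (fun t => Real.exp (x*t) * ((x+1)/x^2 - t/x))
          ((1 - t) * Real.exp (x * t)) t := by
        intro t _
        have h1 : HasDerivAt (fun t : ℝ => x * t) x t := by simpa using (hasDerivAt_id t).const_mul x
        have h2 : HasDerivAt (fun t : ℝ => Real.exp (x*t)) (Real.exp (x*t) * x) t :=
          (Real.hasDerivAt_exp (x*t)).comp t h1
        have h3 : HasDerivAt (fun t : ℝ => (x+1)/x^2 - t/x) (-(1/x)) t := by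
          simpa using ((hasDerivAt_id t).div_const x).const_sub ((x+1)/x^2)
        have := h2.mul h3
        refine this.congr_deriv ?_
        field_simp
        ring
      have := intervalIntegral.integral_eq_sub_of_hasDerivAt h
        ((Continuous.intervalIntegrable (by continuity) _ _))
      rw [psiAux, this]
      field_simp
      simp only [mul_zero, mul_one, Real.exp_zero]
      ring
    rw [key]
    field_simp

-- key: exp lies below the tangent-plus-quadratic on (-∞, dd]
lemma exp_le_quad {l u dd : ℝ} (hl : 0 < l) (hud : u < dd) {y : ℝ} (hy : y ≤ dd) :
    Real.exp (l*y) ≤ Real.exp (l*u) * (1 + l*(y-u))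
      + ((Real.exp (l*dd) - Real.exp (l*u)*(1 + l*(dd-u)))/(dd-u)^2) * (y-u)^2 := by
  have hD : (0:ℝ) < dd - u := by linarith
  have hc : (Real.exp (l*dd) - Real.exp (l*u)*(1 + l*(dd-u)))/(dd-u)^2
      = Real.exp (l*u) * l^2 * psiAux (l*(dd-u)) := by
    have h1 : Real.exp (l*dd) - Real.exp (l*u)*(1 + l*(dd-u))
        = Real.exp (l*u) * ((l*(dd-u))^2 * psiAux (l*(dd-u))) := by
      rw [sq_mul_psiAux]
      rw [show l*dd = l*u + l*(dd-u) by ring, Real.exp_add]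
      ring
    rw [h1]
    field_simp
  rw [hc]
  have h2 : Real.exp (l*y) - Real.exp (l*u)*(1 + l*(y-u))
      = Real.exp (l*u) * (l^2 * (y-u)^2 * psiAux (l*(y-u))) := by
    rw [show l^2*(y-u)^2 = (l*(y-u))^2 by ring, sq_mul_psiAux,
      show l*y = l*u + l*(y-u) by ring, Real.exp_add]
    ring
  have h3 : psiAux (l*(y-u)) ≤ psiAux (l*(dd-u)) :=
    psiAux_mono (by nlinarith)
  have h4 : Real.exp (l*u) * (l^2 * (y-u)^2 * psiAux (l*(y-u)))
      ≤ Real.exp (l*u) * (l^2 * (y-u)^2 * psiAux (l*(dd-u))) := by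
    have hb : (0:ℝ) ≤ Real.exp (l*u) * (l^2 * (y-u)^2) := by positivity
    calc Real.exp (l*u) * (l^2 * (y-u)^2 * psiAux (l*(y-u)))
        = (Real.exp (l*u) * (l^2 * (y-u)^2)) * psiAux (l*(y-u)) := by ring
      _ ≤ (Real.exp (l*u) * (l^2 * (y-u)^2)) * psiAux (l*(dd-u)) :=
          mul_le_mul_of_nonneg_left h3 hb
      _ = Real.exp (l*u) * (l^2 * (y-u)^2 * psiAux (l*(dd-u))) := by ring
  nlinarith [h4]

lemma quad_coeff_nonneg {l u dd : ℝ} (hl : 0 < l) (hud : u < dd) :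
    0 ≤ (Real.exp (l*dd) - Real.exp (l*u)*(1 + l*(dd-u)))/(dd-u)^2 := by
  have hD : (0:ℝ) < dd - u := by linarith
  have h1 : Real.exp (l*dd) - Real.exp (l*u)*(1 + l*(dd-u))
      = Real.exp (l*u) * ((l*(dd-u))^2 * psiAux (l*(dd-u))) := by
    rw [sq_mul_psiAux, show l*dd = l*u + l*(dd-u) by ring, Real.exp_add]; ring
  rw [h1]
  have := psiAux_nonneg (l*(dd-u))
  positivity

-- algebra: A0 + σ² A2 = B
lemma coeff_algebra (d σ l E0 E1 : ℝ) (hd : 0 < d) (hσ : 0 < σ) :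
    E0*(1 - l*(-σ^2/d)) + ((E1 - E0*(1 + l*(d-(-σ^2/d))))/(d-(-σ^2/d))^2)*(-σ^2/d)^2
      + σ^2*((E1 - E0*(1 + l*(d-(-σ^2/d))))/(d-(-σ^2/d))^2)
      = (σ^2/d^2*E1 + E0)/(1+σ^2/d^2) := by
  have h1 : d - (-σ^2/d) = (d^2+σ^2)/d := by field_simp; ring
  have h2 : (0:ℝ) < d^2 + σ^2 := by positivity
  rw [h1]
  field_simp
  ring

lemma integrable_of_ae_abs_bound {Ω : Type*} {m0 : MeasurableSpace Ω} {μ : Measure Ω}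
    [IsFiniteMeasure μ] {f : Ω → ℝ} (hf : AEStronglyMeasurable f μ) {C : ℝ}
    (h : ∀ᵐ ω ∂μ, |f ω| ≤ C) : Integrable f μ :=
  ⟨hf, HasFiniteIntegral.of_bounded (C := C) (by simpa [Real.norm_eq_abs] using h)⟩

lemma tele {x : ℕ → ℝ} {d : ℝ} {n : ℕ} (h : ∀ k ∈ Finset.Icc 1 n, |x k - x (k-1)| ≤ d) :
    ∀ k ≤ n, |x k - x 0| ≤ k * d := by
  intro k hk
  induction k with
  | zero => simp
  | succ m ih =>
    have h1 := h (m+1) (Finset.mem_Icc.2 ⟨Nat.succ_le_succ (Nat.zero_le m), hk⟩)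
    have h2 := ih (le_trans (Nat.le_succ m) hk)
    simp only [Nat.add_sub_cancel] at h1
    have h3 := abs_sub_le (x (m+1)) (x m) (x 0)
    push_cast
    nlinarith

lemma mgf_le_core {Ω : Type*} {m0 : MeasurableSpace Ω} {μ : Measure Ω}
    [IsProbabilityMeasure μ] {ℱ : Filtration ℕ m0} {X : ℕ → Ω → ℝ}
    (hX : Martingale X ℱ μ) {d σ l : ℝ} (hd : 0 < d) (hσ : 0 < σ) (hl : 0 < l) :
    ∀ n : ℕ, (∀ k ∈ Finset.Icc 1 n, ∀ᵐ ω ∂μ, |X k ω - X (k-1) ω| ≤ d) →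
    (∀ k ∈ Finset.Icc 1 n, ∀ᵐ ω ∂μ,
      (μ[fun ω' => (X k ω' - X (k-1) ω')^2 | ℱ (k-1)]) ω ≤ σ^2) →
    ∫ ω, Real.exp (l * (X n ω - X 0 ω)) ∂μ
      ≤ ((σ^2/d^2 * Real.exp (l*d) + Real.exp (l*(-σ^2/d))) / (1+σ^2/d^2)) ^ n := by
  intro n
  induction n with
  | zero => intro _ _; simp
  | succ n ih =>
    intro hjump hvar
    have hsub : ∀ k, k ∈ Finset.Icc 1 n → k ∈ Finset.Icc 1 (n+1) := fun k hk =>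
      Finset.mem_Icc.2 ⟨(Finset.mem_Icc.1 hk).1, (Finset.mem_Icc.1 hk).2.trans (Nat.le_succ n)⟩
    have IH := ih (fun k hk => hjump k (hsub k hk)) (fun k hk => hvar k (hsub k hk))
    have hm : ℱ n ≤ m0 := ℱ.le n
    set Z : Ω → ℝ := fun ω => Real.exp (l * (X n ω - X 0 ω)) with hZdef
    set Y : Ω → ℝ := fun ω => X (n+1) ω - X n ω with hYdef
    set u : ℝ := -σ^2/d with hudef
    have hud : u < d := by
      rw [hudef]
      have h1 : 0 < σ^2/d := by positivity
      have : -σ^2/d < 0 := by rw [neg_div]; linarith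
      linarith
    set c : ℝ := (Real.exp (l*d) - Real.exp (l*u)*(1 + l*(d-u)))/(d-u)^2 with hcdef
    set B : ℝ := (σ^2/d^2 * Real.exp (l*d) + Real.exp (l*(-σ^2/d))) / (1+σ^2/d^2) with hBdef
    set A0 : ℝ := Real.exp (l*u)*(1 - l*u) + c*u^2 with hA0def
    set A1 : ℝ := l*Real.exp (l*u) - 2*c*u with hA1def
    -- measurability
    have hZsm : StronglyMeasurable[ℱ n] Z :=
      (Real.continuous_exp.comp_stronglyMeasurable
        (((hX.stronglyAdapted n).sub ((hX.stronglyAdapted 0).mono (ℱ.mono (Nat.zero_le n)))).const_mul l))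
    have hZsm0 : AEStronglyMeasurable Z μ := (hZsm.mono hm).aestronglyMeasurable
    have hYsm : StronglyMeasurable[m0] Y :=
      ((hX.stronglyAdapted (n+1)).mono (ℱ.le (n+1))).sub ((hX.stronglyAdapted n).mono hm)
    -- a.e. bounds
    have hjn : ∀ᵐ ω ∂μ, ∀ k ∈ Finset.Icc 1 (n+1), |X k ω - X (k-1) ω| ≤ d :=
      (ae_ball_iff (Finset.Icc 1 (n+1)).countable_toSet).2 hjump
    have hZbd : ∀ᵐ ω ∂μ, |Z ω| ≤ Real.exp (l * (n*d)) := by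
      filter_upwards [hjn] with ω hω
      have ht := tele (x := fun k => X k ω) (fun k hk => hω k (hsub k hk)) n le_rfl
      rw [hZdef, abs_of_pos (Real.exp_pos _)]
      exact Real.exp_le_exp.2 (mul_le_mul_of_nonneg_left
        (le_trans (le_abs_self _) ht) hl.le)
    have hYbd : ∀ᵐ ω ∂μ, |Y ω| ≤ d := by
      have h := hjump (n+1) (Finset.mem_Icc.2 ⟨Nat.succ_le_succ (Nat.zero_le n), le_rfl⟩)
      simpa using h
    -- integrability
    have hZint : Integrable Z μ := integrable_of_ae_abs_bound hZsm0 hZbd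
    have hYint : Integrable Y μ := integrable_of_ae_abs_bound hYsm.aestronglyMeasurable hYbd
    have hZYint : Integrable (fun ω => Z ω * Y ω) μ := by
      refine integrable_of_ae_abs_bound ?_ (C := Real.exp (l * (n*d)) * d) ?_
      · exact hZsm0.mul hYsm.aestronglyMeasurable
      filter_upwards [hZbd, hYbd] with ω h1 h2
      rw [abs_mul]
      exact mul_le_mul h1 h2 (abs_nonneg _) (Real.exp_pos _).le
    have hYsqsm : StronglyMeasurable[m0] (fun ω => Y ω^2) := by
      simp only [pow_two]; exact hYsm.mul hYsm
    have hY2int : Integrable (fun ω => Y ω^2) μ := by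
      refine integrable_of_ae_abs_bound hYsqsm.aestronglyMeasurable (C := d^2) ?_
      filter_upwards [hYbd] with ω h2
      rw [abs_pow]
      exact pow_le_pow_left₀ (abs_nonneg _) h2 2
    have hZY2int : Integrable (fun ω => Z ω * Y ω^2) μ := by
      refine integrable_of_ae_abs_bound ?_ (C := Real.exp (l * (n*d)) * d^2) ?_
      · exact hZsm0.mul hYsqsm.aestronglyMeasurable
      filter_upwards [hZbd, hYbd] with ω h1 h2
      rw [abs_mul, abs_pow]
      exact mul_le_mul h1 (pow_le_pow_left₀ (abs_nonneg _) h2 2)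
        (by positivity) (Real.exp_pos _).le
    -- conditional expectation facts
    have hcY : μ[Y|ℱ n] =ᵐ[μ] 0 := by
      have h1 : μ[Y|ℱ n] =ᵐ[μ] μ[X (n+1)|ℱ n] - μ[X n|ℱ n] :=
        condExp_sub (hX.integrable (n+1)) (hX.integrable n) (ℱ n)
      have h2 : μ[X (n+1)|ℱ n] =ᵐ[μ] X n := hX.condExp_ae_eq (Nat.le_succ n)
      have h3 : μ[X n|ℱ n] = X n :=
        condExp_of_stronglyMeasurable hm (hX.stronglyAdapted n) (hX.integrable n)
      filter_upwards [h1, h2] with ω e1 e2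
      simp only [Pi.sub_apply, Pi.zero_apply] at *
      rw [e1, e2, h3]; ring
    have hZY : ∫ ω, Z ω * Y ω ∂μ = 0 := by
      rw [← integral_condExp (f := fun ω => Z ω * Y ω) hm]
      have hpull : μ[fun ω => Z ω * Y ω|ℱ n] =ᵐ[μ] fun ω => Z ω * (μ[Y|ℱ n]) ω :=
        condExp_mul_of_stronglyMeasurable_left hZsm hZYint hYint
      have hzero : μ[fun ω => Z ω * Y ω|ℱ n] =ᵐ[μ] fun _ => (0:ℝ) := by
        filter_upwards [hpull, hcY] with ω e1 e2
        rw [e1, e2]; simp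
      rw [integral_congr_ae hzero, integral_const, smul_zero]
    have hvar' : ∀ᵐ ω ∂μ, (μ[fun ω' => Y ω'^2|ℱ n]) ω ≤ σ^2 := by
      have h := hvar (n+1) (Finset.mem_Icc.2 ⟨Nat.succ_le_succ (Nat.zero_le n), le_rfl⟩)
      simpa using h
    have hcond0 : ∀ᵐ ω ∂μ, 0 ≤ (μ[fun ω' => Y ω'^2|ℱ n]) ω :=
      condExp_nonneg (by filter_upwards with ω; positivity)
    have hZcondint : Integrable (fun ω => Z ω * (μ[fun ω' => Y ω'^2|ℱ n]) ω) μ := by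
      refine integrable_of_ae_abs_bound ?_ (C := Real.exp (l * (n*d)) * σ^2) ?_
      · exact hZsm0.mul (stronglyMeasurable_condExp.mono hm).aestronglyMeasurable
      filter_upwards [hZbd, hvar', hcond0] with ω h1 h2 h3
      rw [abs_mul]
      exact mul_le_mul h1 (by rwa [abs_of_nonneg h3]) (abs_nonneg _) (Real.exp_pos _).le
    have hZY2 : ∫ ω, Z ω * Y ω^2 ∂μ ≤ σ^2 * ∫ ω, Z ω ∂μ := by
      rw [← integral_condExp (f := fun ω => Z ω * Y ω^2) hm]
      have hpull : μ[fun ω => Z ω * Y ω^2|ℱ n] =ᵐ[μ]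
          fun ω => Z ω * (μ[fun ω' => Y ω'^2|ℱ n]) ω :=
        condExp_mul_of_stronglyMeasurable_left hZsm hZY2int hY2int
      rw [integral_congr_ae hpull, ← integral_const_mul]
      apply integral_mono_ae hZcondint (hZint.const_mul _)
      filter_upwards [hvar'] with ω h
      have hZ0 : 0 ≤ Z ω := (Real.exp_pos _).le
      calc Z ω * (μ[fun ω' => Y ω'^2|ℱ n]) ω ≤ Z ω * σ^2 := mul_le_mul_of_nonneg_left h hZ0
        _ = σ^2 * Z ω := mul_comm _ _
    -- positivity facts
    have hZpos : 0 ≤ ∫ ω, Z ω ∂μ := integral_nonneg fun ω => (Real.exp_pos _).le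
    have hcnn : 0 ≤ c := quad_coeff_nonneg hl hud
    have hBnn : 0 ≤ B := by
      rw [hBdef]; positivity
    -- main chain
    have hintRHS : Integrable (fun ω => A0 * Z ω + (A1 * (Z ω * Y ω) + c * (Z ω * Y ω^2))) μ :=
      (hZint.const_mul A0).add ((hZYint.const_mul A1).add (hZY2int.const_mul c))
    have hintLHS : Integrable (fun ω => Real.exp (l * (X (n+1) ω - X 0 ω))) μ := by
      apply integrable_of_ae_abs_bound (C := Real.exp (l * ((n+1)*d)))
      · exact (Real.continuous_exp.comp_stronglyMeasurable
          ((((hX.stronglyAdapted (n+1)).mono (ℱ.le (n+1))).sub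
            ((hX.stronglyAdapted 0).mono (ℱ.le 0))).const_mul l)).aestronglyMeasurable
      · filter_upwards [hjn] with ω hω
        have ht := tele (x := fun k => X k ω) hω (n+1) le_rfl
        rw [abs_of_pos (Real.exp_pos _)]
        apply Real.exp_le_exp.2
        apply mul_le_mul_of_nonneg_left _ hl.le
        calc X (n+1) ω - X 0 ω ≤ |X (n+1) ω - X 0 ω| := le_abs_self _
          _ ≤ (n+1) * d := by exact_mod_cast ht
    calc ∫ ω, Real.exp (l * (X (n+1) ω - X 0 ω)) ∂μ
        ≤ ∫ ω, A0 * Z ω + (A1 * (Z ω * Y ω) + c * (Z ω * Y ω^2)) ∂μ := by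
          apply integral_mono_ae hintLHS hintRHS
          filter_upwards [hYbd] with ω h2
          have hq := exp_le_quad hl hud (le_trans (le_abs_self _) h2)
          have hsplit : Real.exp (l * (X (n+1) ω - X 0 ω)) = Z ω * Real.exp (l * Y ω) := by
            rw [hZdef, hYdef, ← Real.exp_add]
            congr 1; ring
          rw [hsplit]
          calc Z ω * Real.exp (l * Y ω)
              ≤ Z ω * (Real.exp (l*u) * (1 + l*(Y ω-u)) + c*(Y ω-u)^2) :=
                mul_le_mul_of_nonneg_left hq (Real.exp_pos _).le
            _ = A0 * Z ω + (A1 * (Z ω * Y ω) + c * (Z ω * Y ω^2)) := by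
                rw [hA0def, hA1def]; ring
      _ = A0 * (∫ ω, Z ω ∂μ) + (A1 * (∫ ω, Z ω * Y ω ∂μ) + c * (∫ ω, Z ω * Y ω^2 ∂μ)) := by
          rw [integral_add (hZint.const_mul A0)
            (show Integrable (fun ω => A1 * (Z ω * Y ω) + c * (Z ω * Y ω^2)) μ from
              (hZYint.const_mul A1).add (hZY2int.const_mul c)),
            integral_add (hZYint.const_mul A1) (hZY2int.const_mul c),
            integral_const_mul, integral_const_mul, integral_const_mul]
      _ ≤ A0 * (∫ ω, Z ω ∂μ) + (A1 * 0 + c * (σ^2 * ∫ ω, Z ω ∂μ)) := by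
          rw [hZY]
          exact add_le_add_right (add_le_add_right (mul_le_mul_of_nonneg_left hZY2 hcnn) _) _
      _ = (A0 + σ^2 * c) * ∫ ω, Z ω ∂μ := by ring
      _ = B * ∫ ω, Z ω ∂μ := by
          rw [hA0def, hBdef, hcdef, hudef]
          rw [coeff_algebra d σ l (Real.exp (l*(-σ^2/d))) (Real.exp (l*d)) hd hσ]
      _ ≤ B * B^n := mul_le_mul_of_nonneg_left IH hBnn
      _ = B^(n+1) := (pow_succ' B n).symm

lemma exp_diff_integrable {Ω : Type*} {m0 : MeasurableSpace Ω} {μ : Measure Ω}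
    [IsProbabilityMeasure μ] {ℱ : Filtration ℕ m0} {X : ℕ → Ω → ℝ}
    (hX : Martingale X ℱ μ) {d l : ℝ} (hl : 0 < l) (n : ℕ)
    (hjump : ∀ k ∈ Finset.Icc 1 n, ∀ᵐ ω ∂μ, |X k ω - X (k-1) ω| ≤ d) :
    Integrable (fun ω => Real.exp (l * (X n ω - X 0 ω))) μ := by
  have hjn : ∀ᵐ ω ∂μ, ∀ k ∈ Finset.Icc 1 n, |X k ω - X (k-1) ω| ≤ d :=
    (ae_ball_iff (Finset.Icc 1 n).countable_toSet).2 hjump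
  refine integrable_of_ae_abs_bound ?_ (C := Real.exp (l * (n*d))) ?_
  · exact (Real.continuous_exp.comp_stronglyMeasurable
      ((((hX.stronglyAdapted n).mono (ℱ.le n)).sub
        ((hX.stronglyAdapted 0).mono (ℱ.le 0))).const_mul l)).aestronglyMeasurable
  · filter_upwards [hjn] with ω hω
    have ht := tele (x := fun k => X k ω) hω n le_rfl
    rw [abs_of_pos (Real.exp_pos _)]
    exact Real.exp_le_exp.2 (mul_le_mul_of_nonneg_left
      (le_trans (le_abs_self _) ht) hl.le)

lemma tail_two_sided {Ω : Type*} {m0 : MeasurableSpace Ω} {μ : Measure Ω}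
    [IsProbabilityMeasure μ] {ℱ : Filtration ℕ m0} {X : ℕ → Ω → ℝ}
    (hX : Martingale X ℱ μ) {n : ℕ} {d σ l α : ℝ} (hd : 0 < d) (hσ : 0 < σ) (hl : 0 < l)
    (hjump : ∀ k ∈ Finset.Icc 1 n, ∀ᵐ ω ∂μ, |X k ω - X (k-1) ω| ≤ d)
    (hvar : ∀ k ∈ Finset.Icc 1 n, ∀ᵐ ω ∂μ,
      (μ[fun ω' => (X k ω' - X (k-1) ω')^2 | ℱ (k-1)]) ω ≤ σ^2) :
    μ {ω | α * n ≤ |X n ω - X 0 ω|} ≤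
      ENNReal.ofReal (2 * (Real.exp (-(l*α)) *
        ((σ^2/d^2 * Real.exp (l*d) + Real.exp (l*(-σ^2/d))) / (1+σ^2/d^2))) ^ n) := by
  set B : ℝ := (σ^2/d^2 * Real.exp (l*d) + Real.exp (l*(-σ^2/d))) / (1+σ^2/d^2) with hBdef
  have hBnn : 0 ≤ B := by
    have hd' : d ≠ 0 := hd.ne'
    rw [hBdef]; positivity
  have key : ∀ (W : ℕ → Ω → ℝ), Martingale W ℱ μ →
      (∀ k ∈ Finset.Icc 1 n, ∀ᵐ ω ∂μ, |W k ω - W (k-1) ω| ≤ d) →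
      (∀ k ∈ Finset.Icc 1 n, ∀ᵐ ω ∂μ,
        (μ[fun ω' => (W k ω' - W (k-1) ω')^2 | ℱ (k-1)]) ω ≤ σ^2) →
      μ {ω | α * n ≤ W n ω - W 0 ω} ≤ ENNReal.ofReal ((Real.exp (-(l*α)) * B) ^ n) := by
    intro W hW hj hv
    have hmgf := mgf_le_core hW hd hσ hl n hj hv
    have hint : Integrable (fun ω => Real.exp (l * (W n ω - W 0 ω))) μ :=
      exp_diff_integrable hW hl n hj
    have hmark := measure_ge_le_exp_mul_mgf (X := fun ω => W n ω - W 0 ω) (μ := μ)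
      (t := l) (α * n) hl.le hint
    have hmgf' : mgf (fun ω => W n ω - W 0 ω) μ l ≤ B ^ n := hmgf
    have h2 : (μ {ω | α * n ≤ W n ω - W 0 ω}).toReal ≤ (Real.exp (-(l*α)) * B) ^ n := by
      calc (μ {ω | α * n ≤ W n ω - W 0 ω}).toReal
          ≤ Real.exp (-l * (α * n)) * mgf (fun ω => W n ω - W 0 ω) μ l := hmark
        _ ≤ Real.exp (-l * (α * n)) * B ^ n :=
            mul_le_mul_of_nonneg_left hmgf' (Real.exp_pos _).le
        _ = (Real.exp (-(l*α)) * B) ^ n := by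
            rw [mul_pow, ← Real.exp_nat_mul]
            congr 1
            push_cast
            ring
    calc μ {ω | α * n ≤ W n ω - W 0 ω}
        = ENNReal.ofReal ((μ {ω | α * n ≤ W n ω - W 0 ω}).toReal) :=
          (ENNReal.ofReal_toReal (measure_ne_top μ _)).symm
      _ ≤ ENNReal.ofReal ((Real.exp (-(l*α)) * B) ^ n) := ENNReal.ofReal_le_ofReal h2
  have hjneg : ∀ k ∈ Finset.Icc 1 n, ∀ᵐ ω ∂μ, |(-X) k ω - (-X) (k-1) ω| ≤ d := by
    intro k hk
    filter_upwards [hjump k hk] with ω h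
    have : (-X) k ω - (-X) (k-1) ω = -(X k ω - X (k-1) ω) := by
      simp [Pi.neg_apply]; ring
    rw [this, abs_neg]; exact h
  have hvneg : ∀ k ∈ Finset.Icc 1 n, ∀ᵐ ω ∂μ,
      (μ[fun ω' => ((-X) k ω' - (-X) (k-1) ω')^2 | ℱ (k-1)]) ω ≤ σ^2 := by
    intro k hk
    have heq : (fun ω' => ((-X) k ω' - (-X) (k-1) ω')^2)
        = fun ω' => (X k ω' - X (k-1) ω')^2 := by
      funext ω'; simp [Pi.neg_apply]; ring
    rw [heq]; exact hvar k hk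
  have hsubset : {ω | α * n ≤ |X n ω - X 0 ω|} ⊆
      {ω | α * n ≤ X n ω - X 0 ω} ∪ {ω | α * n ≤ (-X) n ω - (-X) 0 ω} := by
    intro ω h
    simp only [Set.mem_setOf_eq, Set.mem_union, Pi.neg_apply] at *
    rcases abs_cases (X n ω - X 0 ω) with ⟨he, _⟩ | ⟨he, _⟩
    · left; linarith
    · right; linarith
  calc μ {ω | α * n ≤ |X n ω - X 0 ω|}
      ≤ μ ({ω | α * n ≤ X n ω - X 0 ω} ∪ {ω | α * n ≤ (-X) n ω - (-X) 0 ω}) :=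
        measure_mono hsubset
    _ ≤ μ {ω | α * n ≤ X n ω - X 0 ω} + μ {ω | α * n ≤ (-X) n ω - (-X) 0 ω} :=
        measure_union_le _ _
    _ ≤ ENNReal.ofReal ((Real.exp (-(l*α)) * B) ^ n)
        + ENNReal.ofReal ((Real.exp (-(l*α)) * B) ^ n) :=
        add_le_add (key X hX hjump hvar) (key (-X) hX.neg hjneg hvneg)
    _ = ENNReal.ofReal (2 * (Real.exp (-(l*α)) * B) ^ n) := by
        rw [← ENNReal.ofReal_add (by positivity) (by positivity)]
        congr 1; ring

-- the δ>1 ⇒ 0 part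
lemma prob_zero {Ω : Type*} {m0 : MeasurableSpace Ω} {μ : Measure Ω}
    [IsProbabilityMeasure μ] {X : ℕ → Ω → ℝ} {n : ℕ} (hn : 0 < n) {d α : ℝ} (hd : 0 < d)
    (hjn : ∀ᵐ ω ∂μ, ∀ k ∈ Finset.Icc 1 n, |X k ω - X (k-1) ω| ≤ d)
    (hδ : 1 < α / d) : μ {ω | α * n ≤ |X n ω - X 0 ω|} = 0 := by
  have hda : d < α := by
    have h1 : (1:ℝ) * d < (α/d) * d := mul_lt_mul_of_pos_right hδ hd
    rw [div_mul_cancel₀ _ hd.ne'] at h1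
    linarith
  have hae : ∀ᵐ ω ∂μ, ¬ (α * n ≤ |X n ω - X 0 ω|) := by
    filter_upwards [hjn] with ω hω
    have ht := tele (x := fun k => X k ω) hω n le_rfl
    push_neg
    calc |X n ω - X 0 ω| ≤ n * d := ht
      _ < n * α := by
          apply mul_lt_mul_of_pos_left hda
          exact_mod_cast hn
      _ = α * n := mul_comm _ _
  exact measure_eq_zero_iff_ae_notMem.2 hae

lemma opt_algebra {d σ α : ℝ} (hd : 0 < d) (hσ : 0 < σ) (hα : 0 < α) (hδ : α/d < 1) :
    ∃ l : ℝ, 0 < l ∧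
      Real.exp (-(l*α)) * ((σ^2/d^2 * Real.exp (l*d) + Real.exp (l*(-σ^2/d))) / (1+σ^2/d^2))
        = Real.exp (-(binDiv ((α/d + σ^2/d^2)/(1+σ^2/d^2)) ((σ^2/d^2)/(1+σ^2/d^2)))) := by
  set γ := σ^2/d^2 with hγ
  have hγ0 : 0 < γ := by rw [hγ]; positivity
  set δ := α/d with hδdef
  have hδ0 : 0 < δ := by rw [hδdef]; positivity
  have h1δ : 0 < 1 - δ := by linarith
  have h1γ : 0 < 1 + γ := by linarith
  set ρ := (γ+δ)/(γ*(1-δ)) with hρdef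
  have hρ0 : 0 < ρ := by rw [hρdef]; positivity
  have hρ1 : 1 < ρ := by
    rw [hρdef, lt_div_iff₀ (by positivity)]
    nlinarith
  have hlog : 0 < Real.log ρ := Real.log_pos hρ1
  set l := Real.log ρ/(d*(1+γ)) with hldef
  have hl : 0 < l := by rw [hldef]; positivity
  refine ⟨l, hl, ?_⟩
  have hα' : α = δ * d := by rw [hδdef]; field_simp
  have e1 : Real.exp (l*d) = ρ ^ ((1+γ)⁻¹ : ℝ) := by
    rw [Real.rpow_def_of_pos hρ0, Real.exp_eq_exp, hldef]
    field_simp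
  have e2 : Real.exp (l*(-σ^2/d)) = ρ ^ (-(γ/(1+γ)) : ℝ) := by
    rw [Real.rpow_def_of_pos hρ0, Real.exp_eq_exp, hldef, hγ]
    field_simp
  have e3 : Real.exp (-(l*α)) = ρ ^ (-(δ/(1+γ)) : ℝ) := by
    rw [Real.rpow_def_of_pos hρ0, Real.exp_eq_exp, hldef, hα']
    field_simp
  have hgr : γ * ρ + 1 = (1+γ)/(1-δ) := by
    rw [hρdef]
    field_simp
    ring
  have hexp : ((1+γ)⁻¹ : ℝ) = -(γ/(1+γ)) + 1 := by field_simp; ring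
  have hLHS : Real.exp (-(l*α)) * ((γ * Real.exp (l*d) + Real.exp (l*(-σ^2/d))) / (1+γ))
      = ρ ^ (-((δ+γ)/(1+γ)) : ℝ) / (1-δ) := by
    rw [e1, e2, e3, hexp, Real.rpow_add hρ0, Real.rpow_one]
    have hsum : γ * (ρ ^ (-(γ/(1+γ)) : ℝ) * ρ) + ρ ^ (-(γ/(1+γ)) : ℝ)
        = ρ ^ (-(γ/(1+γ)) : ℝ) * ((1+γ)/(1-δ)) := by
      rw [← hgr]; ring
    rw [hsum]
    rw [show (-((δ+γ)/(1+γ)) : ℝ) = -(δ/(1+γ)) + -(γ/(1+γ)) by ring, Real.rpow_add hρ0]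
    field_simp
  have hbin : binDiv ((δ+γ)/(1+γ)) (γ/(1+γ))
      = ((δ+γ)/(1+γ)) * Real.log ρ + Real.log (1-δ) := by
    rw [binDiv]
    have h1 : ((δ+γ)/(1+γ)) / (γ/(1+γ)) = ρ * (1-δ) := by
      rw [hρdef]; field_simp; ring
    have h2 : (1 - (δ+γ)/(1+γ)) / (1 - γ/(1+γ)) = 1-δ := by
      field_simp; ring
    have h3 : (1 - (δ+γ)/(1+γ)) = (1-δ)/(1+γ) := by
      field_simp; ring
    rw [h1, h2, Real.log_mul hρ0.ne' h1δ.ne', h3]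
    have h4 : (δ+γ)/(1+γ) + (1-δ)/(1+γ) = 1 := by field_simp; ring
    linear_combination Real.log (1-δ) * h4
  have hRHS : Real.exp (-(binDiv ((δ+γ)/(1+γ)) (γ/(1+γ))))
      = ρ ^ (-((δ+γ)/(1+γ)) : ℝ) / (1-δ) := by
    have hb : -(binDiv ((δ+γ)/(1+γ)) (γ/(1+γ)))
        = Real.log ρ * (-((δ+γ)/(1+γ))) + Real.log ((1-δ)⁻¹) := by
      rw [hbin, Real.log_inv]; ring
    rw [hb, Real.exp_add, ← Real.rpow_def_of_pos hρ0,
      Real.exp_log (by positivity : (0:ℝ) < (1-δ)⁻¹), div_eq_mul_inv]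
    ring_nf
  rw [hLHS, hRHS]

lemma delta_one_case {Ω : Type*} {m0 : MeasurableSpace Ω} {μ : Measure Ω}
    [IsProbabilityMeasure μ] {ℱ : Filtration ℕ m0} {X : ℕ → Ω → ℝ}
    (hX : Martingale X ℱ μ) {n : ℕ} {d σ : ℝ} (hd : 0 < d) (hσ : 0 < σ)
    (hjump : ∀ k ∈ Finset.Icc 1 n, ∀ᵐ ω ∂μ, |X k ω - X (k-1) ω| ≤ d)
    (hvar : ∀ k ∈ Finset.Icc 1 n, ∀ᵐ ω ∂μ,
      (μ[fun ω' => (X k ω' - X (k-1) ω')^2 | ℱ (k-1)]) ω ≤ σ^2) :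
    μ {ω | d * n ≤ |X n ω - X 0 ω|} ≤
      ENNReal.ofReal (2 * Real.exp (-(n:ℝ) * binDiv 1 ((σ^2/d^2)/(1+σ^2/d^2)))) := by
  have hγ0 : 0 < σ^2/d^2 := by positivity
  set γ := σ^2/d^2 with hγ
  have h1γ : 0 < 1 + γ := by linarith
  have hq0 : 0 < γ/(1+γ) := by positivity
  -- target value
  have htarget : 2 * Real.exp (-(n:ℝ) * binDiv 1 (γ/(1+γ))) = 2 * (γ/(1+γ))^n := by
    have hb : binDiv 1 (γ/(1+γ)) = - Real.log (γ/(1+γ)) := by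
      simp only [binDiv, one_mul, sub_self, zero_mul, add_zero, zero_div, one_div]
      rw [Real.log_inv]
    rw [hb]
    rw [show (-(n:ℝ) * - Real.log (γ/(1+γ))) = (n:ℝ) * Real.log (γ/(1+γ)) by ring]
    rw [Real.exp_nat_mul, Real.exp_log hq0]
  rw [htarget]
  -- the family of bounds
  have hbound : ∀ l : ℝ, 0 < l → μ {ω | d * n ≤ |X n ω - X 0 ω|} ≤
      ENNReal.ofReal (2 * ((γ + Real.exp (-(l*(d + σ^2/d))))/(1+γ)) ^ n) := by
    intro l hl
    have h := tail_two_sided hX hd hσ hl (α := d) hjump hvar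
    have heq : Real.exp (-(l*d)) * ((γ * Real.exp (l*d) + Real.exp (l*(-σ^2/d))) / (1+γ))
        = (γ + Real.exp (-(l*(d + σ^2/d))))/(1+γ) := by
      have e1 : Real.exp (-(l*d)) * Real.exp (l*d) = 1 := by
        rw [← Real.exp_add, show -(l*d)+l*d = 0 by ring, Real.exp_zero]
      have e2 : Real.exp (-(l*d)) * Real.exp (l*(-σ^2/d)) = Real.exp (-(l*(d + σ^2/d))) := by
        rw [← Real.exp_add]; congr 1; ring
      calc Real.exp (-(l*d)) * ((γ * Real.exp (l*d) + Real.exp (l*(-σ^2/d))) / (1+γ))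
          = (γ * (Real.exp (-(l*d)) * Real.exp (l*d))
              + Real.exp (-(l*d)) * Real.exp (l*(-σ^2/d))) / (1+γ) := by ring
        _ = (γ + Real.exp (-(l*(d + σ^2/d))))/(1+γ) := by rw [e1, e2, mul_one]
    rw [← heq]
    exact h
  -- limit
  have hc : 0 < d + σ^2/d := by positivity
  have htend0 : Filter.Tendsto (fun l : ℝ => Real.exp (-(l*(d + σ^2/d)))) Filter.atTop (nhds 0) := by
    apply Real.tendsto_exp_atBot.comp
    exact Filter.tendsto_neg_atTop_atBot.comp (Filter.Tendsto.atTop_mul_const hc Filter.tendsto_id)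
  have htend : Filter.Tendsto
      (fun l : ℝ => ENNReal.ofReal (2 * ((γ + Real.exp (-(l*(d + σ^2/d))))/(1+γ)) ^ n))
      Filter.atTop (nhds (ENNReal.ofReal (2 * (γ/(1+γ))^n))) := by
    have h1 : Filter.Tendsto (fun l : ℝ => 2 * ((γ + Real.exp (-(l*(d + σ^2/d))))/(1+γ)) ^ n)
        Filter.atTop (nhds (2 * ((γ + 0)/(1+γ))^n)) := by
      apply Filter.Tendsto.const_mul
      exact (Filter.Tendsto.div_const (Filter.Tendsto.const_add γ htend0) (1+γ)).pow n
    rw [add_zero] at h1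
    exact (ENNReal.continuous_ofReal.tendsto _).comp h1
  apply ge_of_tendsto htend
  filter_upwards [Filter.eventually_gt_atTop 0] with l hl
  exact hbound l hl

/-- Refined Azuma–Hoeffding inequality for martingales with bounded jumps and a bound on the
conditional variance. With `γ = σ²/d²` and `δ = α/d`,
`P(|X_n - X_0| ≥ αn) ≤ 2 exp(-n d((δ+γ)/(1+γ) ‖ γ/(1+γ)))`; moreover if `δ > 1` the
probability is zero. -/
theorem refined_azuma_with_variance {Ω : Type*} {m0 : MeasurableSpace Ω} {μ : Measure Ω}
    [IsProbabilityMeasure μ] {ℱ : Filtration ℕ m0} {X : ℕ → Ω → ℝ}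
    (hX : Martingale X ℱ μ) {n : ℕ} (hn : 0 < n) {d σ : ℝ} (hd : 0 < d) (hσ : 0 < σ)
    (hjump : ∀ k ∈ Finset.Icc 1 n, ∀ᵐ ω ∂μ, |X k ω - X (k-1) ω| ≤ d)
    (hvar : ∀ k ∈ Finset.Icc 1 n, ∀ᵐ ω ∂μ,
      (μ[fun ω' => (X k ω' - X (k-1) ω')^2 | ℱ (k-1)]) ω ≤ σ^2)
    {α : ℝ} (hα : 0 ≤ α) :
    μ {ω | α * n ≤ |X n ω - X 0 ω|} ≤
      ENNReal.ofReal (2 * Real.exp (-(n : ℝ) *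
        binDiv ((α/d + σ^2/d^2) / (1 + σ^2/d^2)) ((σ^2/d^2) / (1 + σ^2/d^2)))) ∧
    (1 < α/d → μ {ω | α * n ≤ |X n ω - X 0 ω|} = 0) := by
  have hjn : ∀ᵐ ω ∂μ, ∀ k ∈ Finset.Icc 1 n, |X k ω - X (k-1) ω| ≤ d :=
    (ae_ball_iff (Finset.Icc 1 n).countable_toSet).2 hjump
  have part2 : 1 < α/d → μ {ω | α * n ≤ |X n ω - X 0 ω|} = 0 := fun hδ =>
    prob_zero hn hd hjn hδ
  refine ⟨?_, part2⟩
  have hγ0 : 0 < σ^2/d^2 := by positivity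
  have h1γ : 0 < 1 + σ^2/d^2 := by linarith
  rcases eq_or_lt_of_le hα with h0 | hα0
  · -- α = 0
    have hp : (α/d + σ^2/d^2)/(1+σ^2/d^2) = (σ^2/d^2)/(1+σ^2/d^2) := by
      rw [← h0, zero_div, zero_add]
    rw [hp]
    have hq0 : ((σ^2/d^2)/(1+σ^2/d^2)) ≠ 0 := (by positivity : (0:ℝ) < _).ne'
    have hqlt : (σ^2/d^2)/(1+σ^2/d^2) < 1 := by rw [div_lt_one h1γ]; linarith
    have hq1 : (1:ℝ) - (σ^2/d^2)/(1+σ^2/d^2) ≠ 0 := by linarith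
    have hb0 : binDiv ((σ^2/d^2)/(1+σ^2/d^2)) ((σ^2/d^2)/(1+σ^2/d^2)) = 0 := by
      rw [binDiv, div_self hq0, div_self hq1, Real.log_one, mul_zero, mul_zero, add_zero]
    rw [hb0, mul_zero, Real.exp_zero, mul_one]
    refine le_trans prob_le_one ?_
    rw [show (1:ENNReal) = ENNReal.ofReal 1 by simp]
    exact ENNReal.ofReal_le_ofReal one_le_two
  · rcases lt_trichotomy (α/d) 1 with hlt | heq1 | hgt
    · obtain ⟨l, hl, hopt⟩ := opt_algebra hd hσ hα0 hlt
      have h := tail_two_sided hX (n := n) hd hσ hl (α := α) hjump hvar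
      refine h.trans (le_of_eq ?_)
      congr 1
      rw [hopt, ← Real.exp_nat_mul]
      congr 1
      ring
    · have hαd : α = d := (div_eq_one_iff_eq hd.ne').1 heq1
      subst hαd
      have h := delta_one_case hX hd hσ hjump hvar
      have hp1 : (α/α + σ^2/α^2)/(1+σ^2/α^2) = 1 := by
        rw [div_self hd.ne', div_self h1γ.ne']
      rw [hp1]
      exact h
    · rw [part2 hgt]; exact zero_le
end

section
/- Let X_1, ..., X_n be independent random variables taking values in a standard Borel space X with joint (product) distribution P, and let f : X^n → ℝ be a measurable function such that exp(λ f(X^n)) is integrable for every λ ∈ ℝ. For i ∈ {1,...,n} and x̄^i = (x_1,...,x_{i−1},x_{i+1},...,x_n) ∈ X^{n−1}, define f_i(y | x̄^i) = f(x_1,...,x_{i−1},y,x_{i+1},...,x_n) for y ∈ X. Suppose there exist constants c_1, ..., c_n > 0 such that for every t > 0, every i ∈ {1,...,n} and every x̄^i ∈ X^{n−1}, D(P_{X_i}^{(t f_i(·|x̄^i))} ‖ P_{X_i}) ≤ c_i t² / 2. Then for every r > 0, P(f(X^n) − E[f(X^n)] ≥ r) ≤ exp(−r² / (2 Σ_{i=1}^n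 c_i)). -/
open MeasureTheory ProbabilityTheory
open scoped ENNReal NNReal Classical
open Real Filter Topology Set

/-- The relative entropy (Kullback–Leibler divergence) `D(Q‖P)`, equal to
`∫ ln(dQ/dP) dQ` when `Q ≪ P` (and the log-likelihood ratio is integrable), and `+∞`
otherwise. -/
noncomputable def relEnt {α : Type*} [MeasurableSpace α] (Q P : Measure α) : ℝ≥0∞ :=
  if Q ≪ P ∧ Integrable (fun x => Real.log (Q.rnDeriv P x).toReal) Q
  then ENNReal.ofReal (∫ x, Real.log (Q.rnDeriv P x).toReal ∂Q) else ⊤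

section Helpers

lemma abs_le_exp_add_exp_neg (u : ℝ) : |u| ≤ Real.exp u + Real.exp (-u) := by
  rcases abs_cases u with ⟨h, _⟩ | ⟨h, _⟩
  · rw [h]; nlinarith [Real.add_one_le_exp u, Real.exp_pos (-u)]
  · rw [h]; nlinarith [Real.add_one_le_exp (-u), Real.exp_pos u]

lemma exp_mul_le_of_between (u : ℝ) {a b t : ℝ} (hat : a ≤ t) (htb : t ≤ b) :
    Real.exp (t * u) ≤ Real.exp (a * u) + Real.exp (b * u) := by
  rcases le_or_gt 0 u with h | h
  · have : t * u ≤ b * u := mul_le_mul_of_nonneg_right htb h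
    exact (Real.exp_le_exp.2 this).trans (le_add_of_nonneg_left (Real.exp_pos _).le)
  · have : t * u ≤ a * u := mul_le_mul_of_nonpos_right hat h.le
    exact (Real.exp_le_exp.2 this).trans (le_add_of_nonneg_right (Real.exp_pos _).le)

variable {α : Type*} [MeasurableSpace α]

lemma integrable_of_forall_exp {μ : Measure α} {g : α → ℝ}
    (hg : AEStronglyMeasurable g μ)
    (hint : ∀ t : ℝ, Integrable (fun y => Real.exp (t * g y)) μ) : Integrable g μ := by
  refine ((hint 1).add (hint (-1))).mono' hg ?_
  filter_upwards with y
  rw [Real.norm_eq_abs]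
  simpa using abs_le_exp_add_exp_neg (g y)

lemma integrable_mul_exp {μ : Measure α} {g : α → ℝ} (hg : Measurable g)
    (hint : ∀ t : ℝ, Integrable (fun y => Real.exp (t * g y)) μ) (t : ℝ) :
    Integrable (fun y => g y * Real.exp (t * g y)) μ := by
  refine ((hint (t+1)).add (hint (t-1))).mono'
    (hg.aestronglyMeasurable.mul ((hg.const_mul t).exp).aestronglyMeasurable) ?_
  filter_upwards with y
  rw [Real.norm_eq_abs, abs_mul, abs_of_pos (Real.exp_pos _)]
  calc |g y| * Real.exp (t * g y)
      ≤ (Real.exp (g y) + Real.exp (-g y)) * Real.exp (t * g y) :=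
        mul_le_mul_of_nonneg_right (abs_le_exp_add_exp_neg _) (Real.exp_pos _).le
    _ = Real.exp ((t+1) * g y) + Real.exp ((t-1) * g y) := by
        rw [add_mul, ← Real.exp_add, ← Real.exp_add]; ring_nf

lemma ofReal_exp_integral_le {μ : Measure α} [IsProbabilityMeasure μ] {u : α → ℝ}
    (hu : Integrable u μ) :
    ENNReal.ofReal (Real.exp (∫ x, u x ∂μ)) ≤ ∫⁻ x, ENNReal.ofReal (Real.exp (u x)) ∂μ := by
  have hmeas : AEStronglyMeasurable (fun x => Real.exp (u x)) μ :=
    Real.continuous_exp.comp_aestronglyMeasurable hu.1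
  rcases eq_top_or_lt_top (∫⁻ x, ENNReal.ofReal (Real.exp (u x)) ∂μ) with h | h
  · rw [h]; exact le_top
  · have hint : Integrable (fun x => Real.exp (u x)) μ := by
      refine ⟨hmeas, ?_⟩
      rw [hasFiniteIntegral_iff_ofReal (ae_of_all _ fun x => (Real.exp_pos _).le)]
      exact h
    rw [← ofReal_integral_eq_lintegral_ofReal hint (ae_of_all _ fun x => (Real.exp_pos _).le)]
    refine ENNReal.ofReal_le_ofReal ?_
    exact convexOn_exp.map_integral_le Real.continuous_exp.continuousOn isClosed_univ
      (ae_of_all _ fun _ => Set.mem_univ _) hu hint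


lemma hasDerivAt_integral_exp {μ : Measure α} {g : α → ℝ}
    (hg : Measurable g) (hint : ∀ t : ℝ, Integrable (fun y => Real.exp (t * g y)) μ) (t₀ : ℝ) :
    HasDerivAt (fun t => ∫ y, Real.exp (t * g y) ∂μ) (∫ y, g y * Real.exp (t₀ * g y) ∂μ) t₀ := by
  have key := hasDerivAt_integral_of_dominated_loc_of_deriv_le (μ := μ)
    (F := fun t y => Real.exp (t * g y)) (F' := fun t y => g y * Real.exp (t * g y))
    (bound := fun y => (Real.exp (g y) + Real.exp (-g y)) *
      (Real.exp ((t₀+1) * g y) + Real.exp ((t₀-1) * g y)))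
    (x₀ := t₀) (Metric.ball_mem_nhds t₀ zero_lt_one)
    (Filter.Eventually.of_forall fun x => ((hg.const_mul x).exp).aestronglyMeasurable)
    (hint t₀)
    (hg.aestronglyMeasurable.mul ((hg.const_mul t₀).exp).aestronglyMeasurable)
    ?_ ?_ ?_
  · exact key.2
  · filter_upwards with y
    intro x hx
    rw [Real.norm_eq_abs, abs_mul, abs_of_pos (Real.exp_pos _)]
    have h1 : |g y| ≤ Real.exp (g y) + Real.exp (-g y) := abs_le_exp_add_exp_neg _
    have hx' : |x - t₀| < 1 := by simpa [Real.dist_eq] using Metric.mem_ball.1 hx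
    have h2 : Real.exp (x * g y) ≤ Real.exp ((t₀-1) * g y) + Real.exp ((t₀+1) * g y) :=
      exp_mul_le_of_between _ (by cases abs_sub_lt_iff.1 hx' with | intro a b => linarith)
        (by cases abs_sub_lt_iff.1 hx' with | intro a b => linarith)
    calc |g y| * Real.exp (x * g y)
        ≤ (Real.exp (g y) + Real.exp (-g y)) * (Real.exp ((t₀-1) * g y) + Real.exp ((t₀+1) * g y)) :=
          mul_le_mul h1 h2 (Real.exp_pos _).le (by positivity)
      _ = _ := by ring
  · have : (fun y => (Real.exp (g y) + Real.exp (-g y)) *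
        (Real.exp ((t₀+1) * g y) + Real.exp ((t₀-1) * g y)))
        = fun y => (Real.exp ((t₀+2) * g y) + Real.exp (t₀ * g y)) +
            (Real.exp (t₀ * g y) + Real.exp ((t₀-2) * g y)) := by
      funext y
      rw [add_mul, mul_add, mul_add, ← Real.exp_add, ← Real.exp_add, ← Real.exp_add, ← Real.exp_add]
      ring_nf
    rw [this]
    exact ((hint (t₀+2)).add (hint t₀)).add ((hint t₀).add (hint (t₀-2)))
  · filter_upwards with y
    intro x _
    have := (hasDerivAt_mul_const (g y)).exp (x := x)
    simpa [mul_comm] using this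

end Helpers

section Herbst
variable {α : Type*} [MeasurableSpace α]

lemma herbst {μ : Measure α} [IsProbabilityMeasure μ] {g : α → ℝ} (hg : Measurable g)
    (hint : ∀ s : ℝ, Integrable (fun y => Real.exp (s * g y)) μ) {c : ℝ} (hc : 0 ≤ c)
    (hD : ∀ s : ℝ, 0 < s → relEnt (μ.tilted fun y => s * g y) μ ≤ ENNReal.ofReal (c * s^2 / 2))
    {t : ℝ} (ht : 0 < t) :
    ∫ y, Real.exp (t * g y) ∂μ ≤ Real.exp (c * t^2 / 2 + t * ∫ y, g y ∂μ) := by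
  haveI : NeZero μ := ⟨IsProbabilityMeasure.ne_zero μ⟩
  set M : ℝ → ℝ := fun s => ∫ y, Real.exp (s * g y) ∂μ with hMdef
  set A : ℝ → ℝ := fun s => ∫ y, g y * Real.exp (s * g y) ∂μ with hAdef
  have hMpos : ∀ s, 0 < M s := fun s => integral_exp_pos (hint s)
  have hMd : ∀ s, HasDerivAt M (A s) s := fun s => hasDerivAt_integral_exp hg hint s
  set ψ : ℝ → ℝ := fun s => Real.log (M s) with hψdef
  have hψd : ∀ s, HasDerivAt ψ (A s / M s) s := fun s => (hMd s).log (hMpos s).ne'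
  have hM0 : M 0 = 1 := by simp [hMdef]
  have hψ0 : ψ 0 = 0 := by simp [hψdef, hM0]
  have hA0 : A 0 = ∫ y, g y ∂μ := by simp [hAdef]
  have key : ∀ s, 0 < s → A s / M s * s - ψ s ≤ c * s ^ 2 / 2 := by
    intro s hs
    haveI : IsProbabilityMeasure (μ.tilted fun y => s * g y) :=
      isProbabilityMeasure_tilted (hint s)
    have hAC : (μ.tilted fun y => s * g y) ≪ μ := tilted_absolutelyContinuous μ _
    have hlog : (fun x => Real.log (((μ.tilted fun y => s * g y).rnDeriv μ) x).toReal)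
        =ᵐ[μ.tilted fun y => s * g y] fun x => s * g x - Real.log (M s) :=
      hAC.ae_eq (log_rnDeriv_tilted_left_self (hint s))
    have htilt_int : Integrable (fun x => s * g x - Real.log (M s)) (μ.tilted fun y => s * g y) := by
      have heq : (μ.tilted fun y => s * g y)
          = μ.withDensity fun y => ENNReal.ofReal (Real.exp (s * g y) / M s) := rfl
      rw [heq, integrable_withDensity_iff (by
          exact (measurable_exp.comp (hg.const_mul s)).div_const _ |>.ennreal_ofReal)
          (ae_of_all _ fun x => ENNReal.ofReal_lt_top)]
      have h1 : Integrable (fun x => (s / M s) * (g x * Real.exp (s * g x))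
          - (Real.log (M s) / M s) * Real.exp (s * g x)) μ :=
        ((integrable_mul_exp hg hint s).const_mul _).sub ((hint s).const_mul _)
      refine h1.congr (ae_of_all _ fun x => ?_)
      have hx : (ENNReal.ofReal (Real.exp (s * g x) / M s)).toReal = Real.exp (s * g x) / M s :=
        ENNReal.toReal_ofReal (div_nonneg (Real.exp_pos _).le (hMpos s).le)
      simp only [hx]
      field_simp
    have hsg : Integrable (fun x => s * g x) (μ.tilted fun y => s * g y) :=
      (htilt_int.add (integrable_const (Real.log (M s)))).congr
        (ae_of_all _ fun x => by simp only [Pi.add_apply]; ring)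
    have hlogint : Integrable (fun x => Real.log (((μ.tilted fun y => s * g y).rnDeriv μ) x).toReal)
        (μ.tilted fun y => s * g y) := htilt_int.congr hlog.symm
    have hrel : relEnt (μ.tilted fun y => s * g y) μ
        = ENNReal.ofReal (∫ x, (s * g x - Real.log (M s)) ∂(μ.tilted fun y => s * g y)) := by
      rw [relEnt, if_pos ⟨hAC, hlogint⟩]
      congr 1
      exact integral_congr_ae hlog
    have hmean : ∫ x, g x ∂(μ.tilted fun y => s * g y) = A s / M s := by
      rw [integral_tilted]
      simp_rw [smul_eq_mul]
      rw [← integral_div]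
      congr 1
      funext x
      have := (hMpos s).ne'
      simp only [hMdef] at this ⊢
      field_simp
    have hval : ∫ x, (s * g x - Real.log (M s)) ∂(μ.tilted fun y => s * g y)
        = s * (A s / M s) - Real.log (M s) := by
      rw [integral_sub hsg (integrable_const _), integral_const, probReal_univ,
        one_smul]
      congr 1
      rw [← hmean]
      exact integral_smul s g
    have hb := hD s hs
    rw [hrel, hval] at hb
    have h3 := (ENNReal.ofReal_le_ofReal_iff (by positivity)).1 hb
    calc A s / M s * s - ψ s = s * (A s / M s) - Real.log (M s) := by rw [hψdef]; ring_nf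
      _ ≤ c * s ^ 2 / 2 := h3
  set φ : ℝ → ℝ := fun s => ψ s / s - c / 2 * s with hφdef
  have hφd : ∀ s ∈ Ioi (0:ℝ), HasDerivAt φ ((A s / M s * s - ψ s * 1) / s ^ 2 - c / 2 * 1) s := by
    intro s hs
    exact ((hψd s).div (hasDerivAt_id s) (ne_of_gt hs)).sub ((hasDerivAt_id s).const_mul (c/2))
  have hanti : AntitoneOn φ (Ioi (0:ℝ)) := by
    refine antitoneOn_of_deriv_nonpos (convex_Ioi 0)
      (fun s hs => (hφd s hs).continuousAt.continuousWithinAt)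
      (by rw [interior_Ioi]; exact fun s hs => (hφd s hs).differentiableAt.differentiableWithinAt)
      ?_
    rw [interior_Ioi]
    intro s hs
    rw [(hφd s hs).deriv]
    have hs2 : (0:ℝ) < s ^ 2 := pow_pos hs 2
    rw [sub_nonpos, mul_one, mul_one, div_le_iff₀ hs2]
    have := key s hs
    nlinarith
  have hslope : Tendsto (fun s => ψ s / s) (𝓝[>] (0:ℝ)) (𝓝 (∫ y, g y ∂μ)) := by
    have h0 := (hψd 0)
    rw [hasDerivAt_iff_tendsto_slope] at h0
    have h0' : Tendsto (slope ψ 0) (𝓝[>] (0:ℝ)) (𝓝 (A 0 / M 0)) :=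
      h0.mono_left (nhdsWithin_mono _ fun x hx => ne_of_gt hx)
    have heq : ∀ s, slope ψ 0 s = ψ s / s := by
      intro s
      rw [slope_def_field, hψ0]
      ring_nf
    rw [hA0, hM0, div_one] at h0'
    exact h0'.congr fun s => heq s
  have hmain : φ t ≤ ∫ y, g y ∂μ := by
    refine ge_of_tendsto hslope ?_
    filter_upwards [Ioo_mem_nhdsGT ht] with s hs
    have h1 : φ t ≤ φ s := hanti hs.1 (by exact ht) hs.2.le
    have h2 : φ s ≤ ψ s / s := by
      rw [hφdef]
      have h4 : 0 ≤ c / 2 * s := mul_nonneg (by linarith) hs.1.le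
      simp only []
      linarith
    exact h1.trans h2
  have hψt : ψ t ≤ (∫ y, g y ∂μ + c / 2 * t) * t := by
    rw [hφdef] at hmain
    simp only [] at hmain
    have h5 := (div_le_iff₀ ht).1 (by linarith : ψ t / t ≤ ∫ y, g y ∂μ + c / 2 * t)
    linarith
  have hMt : M t = Real.exp (ψ t) := (Real.exp_log (hMpos t)).symm
  calc M t = Real.exp (ψ t) := hMt
    _ ≤ Real.exp (c * t ^ 2 / 2 + t * ∫ y, g y ∂μ) := by
        apply Real.exp_le_exp.2
        nlinarith [hψt]

end Herbst

section FinHelpers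

lemma update_succAbove_insertNth {k : ℕ} {β : Type*} (i : Fin (k+1)) (j : Fin k) (a y : β)
    (z : Fin k → β) :
    Function.update (i.insertNth a z) (i.succAbove j) y = i.insertNth (α := fun _ => β) a (Function.update z j y) := by
  funext l
  by_cases hl : l = i
  · subst hl
    rw [Function.update_of_ne (Ne.symm (Fin.succAbove_ne l j))]
    simp
  · obtain ⟨w, rfl⟩ := Fin.exists_succAbove_eq hl
    by_cases hw : w = j
    · subst hw
      simp [Fin.insertNth_apply_succAbove]
    · rw [Function.update_of_ne (fun h => hw (Fin.succAbove_right_injective h)),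
        Fin.insertNth_apply_succAbove, Fin.insertNth_apply_succAbove,
        Function.update_of_ne hw]

end FinHelpers

section UP
variable {𝓧 : Type*} [MeasurableSpace 𝓧]

lemma measurePreserving_update {ι : Type*} [Fintype ι] [DecidableEq ι]
    (P : ι → Measure 𝓧) [∀ i, IsProbabilityMeasure (P i)] (j : ι) :
    MeasurePreserving (fun p : (ι → 𝓧) × 𝓧 => Function.update p.1 j p.2)
      ((Measure.pi P).prod (P j)) (Measure.pi P) := by
  refine ⟨measurable_update', ?_⟩
  refine (Measure.pi_eq fun s hs => ?_).symm
  rw [Measure.map_apply measurable_update' (MeasurableSet.univ_pi hs)]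
  have hpre : (fun p : (ι → 𝓧) × 𝓧 => Function.update p.1 j p.2) ⁻¹' (Set.pi Set.univ s)
      = (Set.pi Set.univ (fun i => if i = j then Set.univ else s i)) ×ˢ (s j) := by
    ext ⟨z, y⟩
    simp only [Set.mem_preimage, Set.mem_pi, Set.mem_univ, forall_true_left, Set.mem_prod]
    constructor
    · intro hzy
      refine ⟨fun i => ?_, by simpa using hzy j⟩
      by_cases hij : i = j
      · simp [hij]
      · simpa [hij, Function.update_of_ne hij] using hzy i
    · rintro ⟨h1, h2⟩ i
      by_cases hij : i = j
      · subst hij; simpa using h2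
      · have := h1 i
        rw [if_neg hij] at this
        simpa [Function.update_of_ne hij] using this
  rw [hpre, Measure.prod_prod, Measure.pi_pi]
  have h1 : (∏ i, P i (if i = j then Set.univ else s i))
      = ∏ i ∈ Finset.univ.erase j, P i (s i) := by
    rw [← Finset.mul_prod_erase Finset.univ _ (Finset.mem_univ j), if_pos rfl, measure_univ,
      one_mul]
    exact Finset.prod_congr rfl fun i hi => by
      rw [if_neg (Finset.ne_of_mem_erase hi)]
  rw [h1, mul_comm, Finset.mul_prod_erase Finset.univ (fun i => P i (s i)) (Finset.mem_univ j)]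

end UP

section Tensor
variable {𝓧 : Type*} [MeasurableSpace 𝓧]

lemma tensor (t : ℝ) :
    ∀ (n : ℕ) (P : Fin n → Measure 𝓧), (∀ i, IsProbabilityMeasure (P i)) →
      ∀ (g : (Fin n → 𝓧) → ℝ), Measurable g → Integrable g (Measure.pi P) →
      ∀ (c : Fin n → ℝ),
      (∀ i : Fin n, ∀ᵐ x ∂(Measure.pi P),
        Integrable (fun y => g (Function.update x i y)) (P i) ∧
        ∫⁻ y, ENNReal.ofReal (Real.exp (t * (g (Function.update x i y)
            - ∫ y', g (Function.update x i y') ∂(P i)))) ∂(P i)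
          ≤ ENNReal.ofReal (Real.exp (c i * t^2 / 2))) →
      ∫⁻ x, ENNReal.ofReal (Real.exp (t * (g x - ∫ x', g x' ∂(Measure.pi P)))) ∂(Measure.pi P)
        ≤ ENNReal.ofReal (Real.exp ((∑ i, c i) * t^2 / 2)) := by
  intro n
  induction n with
  | zero =>
    intro P hP g hg hgi c hSG
    haveI := hP
    haveI : IsProbabilityMeasure (Measure.pi P) := inferInstance
    have hsub : ∀ x : Fin 0 → 𝓧, g x = g (fun i => i.elim0) :=
      fun x => congrArg g (funext fun i => i.elim0)
    have hm : ∫ x', g x' ∂(Measure.pi P) = g (fun i => i.elim0) := by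
      rw [show g = fun _ => g (fun i => i.elim0) from funext hsub]
      simp
    calc ∫⁻ x, ENNReal.ofReal (Real.exp (t * (g x - ∫ x', g x' ∂(Measure.pi P)))) ∂(Measure.pi P)
        = ∫⁻ _, 1 ∂(Measure.pi P) := by
          congr 1
          funext x
          rw [hm, hsub x]
          simp
      _ = 1 := by simp
      _ ≤ _ := by simp [Real.exp_nonneg]
        -- RHS: ofReal (exp (0 * t^2/2)) = 1
  | succ m IH =>
    intro P hP g hg hgi c hSG
    haveI := hP
    haveI : ∀ j : Fin m, IsProbabilityMeasure (P (Fin.succAbove 0 j)) := fun j => hP _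
    haveI : IsProbabilityMeasure (Measure.pi P) := inferInstance
    set e := MeasurableEquiv.piFinSuccAbove (fun _ : Fin (m+1) => 𝓧) 0 with he
    have mp : MeasurePreserving e (Measure.pi P)
        ((P 0).prod (Measure.pi fun j => P (Fin.succAbove 0 j))) :=
      measurePreserving_piFinSuccAbove P 0
    have hπmap : Measure.pi P
        = Measure.map e.symm ((P 0).prod (Measure.pi fun j => P (Fin.succAbove 0 j))) :=
      (mp.symm e).map_eq.symm
    -- pointwise update identities
    have hupd0 : ∀ (a y : 𝓧) (z : Fin m → 𝓧),
        Function.update (e.symm (a, z)) 0 y = e.symm (y, z) := by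
      intro a y z
      simp only [he, MeasurableEquiv.piFinSuccAbove_symm_apply]
      exact Fin.update_insertNth (α := fun _ => 𝓧) 0 a y z
    have hupdj : ∀ (a y : 𝓧) (z : Fin m → 𝓧) (j : Fin m),
        Function.update (e.symm (a, z)) (Fin.succAbove 0 j) y
          = e.symm (a, Function.update z j y) := by
      intro a y z j
      simp only [he, MeasurableEquiv.piFinSuccAbove_symm_apply]
      exact update_succAbove_insertNth 0 j a y z
    -- ae transfer from pi to prod
    have hae : ∀ {Q : (Fin (m+1) → 𝓧) → Prop}, (∀ᵐ x ∂Measure.pi P, Q x) →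
        ∀ᵐ p ∂((P 0).prod (Measure.pi fun j => P (Fin.succAbove 0 j))), Q (e.symm p) := by
      intro Q hQ
      rw [hπmap] at hQ
      exact (Measure.tendsto_ae_map e.symm.measurable.aemeasurable).eventually hQ
    -- the conditional mean function
    have hgp : Measurable fun p : 𝓧 × (Fin m → 𝓧) => g (e.symm p) := hg.comp e.symm.measurable
    have hgpi : Integrable (fun p : 𝓧 × (Fin m → 𝓧) => g (e.symm p))
        ((P 0).prod (Measure.pi fun j => P (Fin.succAbove 0 j))) := by
      rw [hπmap] at hgi
      exact (integrable_map_equiv e.symm g).1 hgi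
    have hh_meas : Measurable fun z : Fin m → 𝓧 => ∫ a, g (e.symm (a, z)) ∂(P 0) :=
      (hgp.stronglyMeasurable.integral_prod_left').measurable
    have hhint : Integrable (fun z : Fin m → 𝓧 => ∫ a, g (e.symm (a, z)) ∂(P 0))
        (Measure.pi fun j => P (Fin.succAbove 0 j)) := hgpi.integral_prod_right
    have hmean : ∫ x', g x' ∂(Measure.pi P)
        = ∫ z, (∫ a, g (e.symm (a, z)) ∂(P 0)) ∂(Measure.pi fun j => P (Fin.succAbove 0 j)) := by
      rw [hπmap, integral_map_equiv]
      exact integral_prod_symm _ hgpi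
    -- the coordinate-0 subgaussian bound, over the remaining coordinates
    have hSGz : ∀ᵐ z ∂(Measure.pi fun j => P (Fin.succAbove 0 j)),
        Integrable (fun y => g (e.symm (y, z))) (P 0) ∧
        ∫⁻ y, ENNReal.ofReal (Real.exp (t * (g (e.symm (y, z))
            - ∫ y', g (e.symm (y', z)) ∂(P 0)))) ∂(P 0)
          ≤ ENNReal.ofReal (Real.exp (c 0 * t^2 / 2)) := by
      have h1 := hae (hSG 0)
      have h2 : ∀ᵐ p ∂((P 0).prod (Measure.pi fun j => P (Fin.succAbove 0 j))),
          Integrable (fun y => g (e.symm (y, p.2))) (P 0) ∧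
          ∫⁻ y, ENNReal.ofReal (Real.exp (t * (g (e.symm (y, p.2))
              - ∫ y', g (e.symm (y', p.2)) ∂(P 0)))) ∂(P 0)
            ≤ ENNReal.ofReal (Real.exp (c 0 * t^2 / 2)) := by
        filter_upwards [h1] with p hp
        obtain ⟨a, z⟩ := p
        simp only [hupd0] at hp
        exact hp
      obtain ⟨a, ha⟩ := (Measure.ae_ae_of_ae_prod h2).exists
      exact ha
    -- the subgaussian bounds for the conditional mean function
    have hSGh : ∀ j : Fin m, ∀ᵐ z ∂(Measure.pi fun j => P (Fin.succAbove 0 j)),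
        Integrable (fun y => ∫ a, g (e.symm (a, Function.update z j y)) ∂(P 0))
          (P (Fin.succAbove 0 j)) ∧
        ∫⁻ y, ENNReal.ofReal (Real.exp (t * ((∫ a, g (e.symm (a, Function.update z j y)) ∂(P 0))
            - ∫ y', (∫ a, g (e.symm (a, Function.update z j y')) ∂(P 0))
                ∂(P (Fin.succAbove 0 j))))) ∂(P (Fin.succAbove 0 j))
          ≤ ENNReal.ofReal (Real.exp (c (Fin.succAbove 0 j) * t^2 / 2)) := by
      intro j
      -- measure preserving rearrangement
      have hT : MeasurePreserving
          (fun w : (Fin m → 𝓧) × (𝓧 × 𝓧) => ((w.2.1 : 𝓧), Function.update w.1 j w.2.2))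
          ((Measure.pi fun j => P (Fin.succAbove 0 j)).prod ((P 0).prod (P (Fin.succAbove 0 j))))
          ((P 0).prod (Measure.pi fun j => P (Fin.succAbove 0 j))) := by
        have s1 := Measure.measurePreserving_swap
          (μ := (Measure.pi fun j => P (Fin.succAbove 0 j)))
          (ν := (P 0).prod (P (Fin.succAbove 0 j)))
        have s2 : MeasurePreserving (MeasurableEquiv.prodAssoc)
            (((P 0).prod (P (Fin.succAbove 0 j))).prod (Measure.pi fun j => P (Fin.succAbove 0 j)))
            ((P 0).prod ((P (Fin.succAbove 0 j)).prod (Measure.pi fun j => P (Fin.succAbove 0 j)))) :=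
          ⟨MeasurableEquiv.prodAssoc.measurable, Measure.prodAssoc_prod⟩
        have s3 := (MeasurePreserving.id (P 0)).prod
          (Measure.measurePreserving_swap (μ := P (Fin.succAbove 0 j))
            (ν := Measure.pi fun j => P (Fin.succAbove 0 j)))
        have s4 := (MeasurePreserving.id (P 0)).prod
          (measurePreserving_update (fun j => P (Fin.succAbove 0 j)) j)
        exact (s4.comp (s3.comp (s2.comp s1)))
      have hGint : Integrable
          (fun w : (Fin m → 𝓧) × (𝓧 × 𝓧) => g (e.symm (w.2.1, Function.update w.1 j w.2.2)))
          ((Measure.pi fun j => P (Fin.succAbove 0 j)).prod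
            ((P 0).prod (P (Fin.succAbove 0 j)))) :=
        (hT.integrable_comp hgpi.aestronglyMeasurable).2 hgpi
      have hG1 := hGint.prod_right_ae
      -- transfer coordinate j' bound and swap the order of a.e. quantifiers
      have hK1 := hae (hSG (Fin.succAbove 0 j))
      have hK2 : ∀ᵐ q ∂((Measure.pi fun j => P (Fin.succAbove 0 j)).prod (P 0)),
          Integrable (fun y => g (Function.update (e.symm (q.2, q.1)) (Fin.succAbove 0 j) y))
            (P (Fin.succAbove 0 j)) ∧
          ∫⁻ y, ENNReal.ofReal (Real.exp (t * (g (Function.update (e.symm (q.2, q.1))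
              (Fin.succAbove 0 j) y)
              - ∫ y', g (Function.update (e.symm (q.2, q.1)) (Fin.succAbove 0 j) y')
                  ∂(P (Fin.succAbove 0 j))))) ∂(P (Fin.succAbove 0 j))
            ≤ ENNReal.ofReal (Real.exp (c (Fin.succAbove 0 j) * t^2 / 2)) := by
        have hswapmap : (P 0).prod (Measure.pi fun j => P (Fin.succAbove 0 j))
            = Measure.map Prod.swap
              ((Measure.pi fun j => P (Fin.succAbove 0 j)).prod (P 0)) := Measure.prod_swap.symm
        rw [hswapmap] at hK1
        exact (Measure.tendsto_ae_map measurable_swap.aemeasurable).eventually hK1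
      have hK3 := Measure.ae_ae_of_ae_prod hK2
      filter_upwards [hG1, hK3] with z hz1 hz2
      constructor
      · exact hz1.integral_prod_right
      · have hMint : Integrable
            (fun a => ∫ y, g (e.symm (a, Function.update z j y)) ∂(P (Fin.succAbove 0 j)))
            (P 0) := hz1.integral_prod_left
        have hmh : ∫ y, (∫ a, g (e.symm (a, Function.update z j y)) ∂(P 0))
              ∂(P (Fin.succAbove 0 j))
            = ∫ a, (∫ y, g (e.symm (a, Function.update z j y)) ∂(P (Fin.succAbove 0 j))) ∂(P 0) := by
          rw [← integral_prod_symm _ hz1, integral_prod _ hz1]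
        calc ∫⁻ y, ENNReal.ofReal (Real.exp (t * ((∫ a, g (e.symm (a, Function.update z j y)) ∂(P 0))
              - ∫ y', (∫ a, g (e.symm (a, Function.update z j y')) ∂(P 0))
                  ∂(P (Fin.succAbove 0 j))))) ∂(P (Fin.succAbove 0 j))
            ≤ ∫⁻ y, ∫⁻ a, ENNReal.ofReal (Real.exp (t * (g (e.symm (a, Function.update z j y))
                - ∫ y', g (e.symm (a, Function.update z j y')) ∂(P (Fin.succAbove 0 j)))))
                ∂(P 0) ∂(P (Fin.succAbove 0 j)) := by
              refine lintegral_mono_ae ?_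
              filter_upwards [hz1.prod_left_ae] with y hy
              have hexp_eq : t * ((∫ a, g (e.symm (a, Function.update z j y)) ∂(P 0))
                  - ∫ y', (∫ a, g (e.symm (a, Function.update z j y')) ∂(P 0))
                      ∂(P (Fin.succAbove 0 j)))
                  = ∫ a, t * (g (e.symm (a, Function.update z j y))
                      - ∫ y', g (e.symm (a, Function.update z j y')) ∂(P (Fin.succAbove 0 j)))
                      ∂(P 0) := by
                rw [integral_const_mul, integral_sub hy hMint, hmh]
              rw [hexp_eq]
              exact ofReal_exp_integral_le ((hy.sub hMint).const_mul t)
          _ = ∫⁻ a, ∫⁻ y, ENNReal.ofReal (Real.exp (t * (g (e.symm (a, Function.update z j y))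
                - ∫ y', g (e.symm (a, Function.update z j y')) ∂(P (Fin.succAbove 0 j)))))
                ∂(P (Fin.succAbove 0 j)) ∂(P 0) := by
              refine lintegral_lintegral_swap ?_
              -- measurability of the joint integrand
              have hj1 : Measurable fun q : 𝓧 × 𝓧 => g (e.symm (q.2, Function.update z j q.1)) :=
                hg.comp (e.symm.measurable.comp
                  (measurable_snd.prodMk (measurable_update'.comp
                    ((measurable_const.prodMk measurable_fst) :
                      Measurable fun q : 𝓧 × 𝓧 => (z, q.1)))))
              have hj2 : Measurable fun a : 𝓧 =>
                  ∫ y', g (e.symm (a, Function.update z j y')) ∂(P (Fin.succAbove 0 j)) := by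
                have : Measurable fun q : 𝓧 × 𝓧 => g (e.symm (q.1, Function.update z j q.2)) :=
                  hg.comp (e.symm.measurable.comp
                    (measurable_fst.prodMk (measurable_update'.comp
                      ((measurable_const.prodMk measurable_snd) :
                        Measurable fun q : 𝓧 × 𝓧 => (z, q.2)))))
                exact (this.stronglyMeasurable.integral_prod_right').measurable
              exact ((measurable_exp.comp ((hj1.sub (hj2.comp measurable_snd)).const_mul
                t)).ennreal_ofReal).aemeasurable
          _ ≤ ∫⁻ _, ENNReal.ofReal (Real.exp (c (Fin.succAbove 0 j) * t^2 / 2)) ∂(P 0) := by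
              refine lintegral_mono_ae ?_
              filter_upwards [hz2] with a ha
              simp only [hupdj] at ha
              exact ha.2
          _ = ENNReal.ofReal (Real.exp (c (Fin.succAbove 0 j) * t^2 / 2)) := by
              rw [lintegral_const, measure_univ, mul_one]
    -- main chain
    have hmeas : Measurable fun p : 𝓧 × (Fin m → 𝓧) =>
        ENNReal.ofReal (Real.exp (t * (g (e.symm p) - ∫ x', g x' ∂(Measure.pi P)))) :=
      (measurable_exp.comp ((hgp.sub measurable_const).const_mul t)).ennreal_ofReal
    calc ∫⁻ x, ENNReal.ofReal (Real.exp (t * (g x - ∫ x', g x' ∂(Measure.pi P)))) ∂(Measure.pi P)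
        = ∫⁻ p, ENNReal.ofReal (Real.exp (t * (g (e.symm p) - ∫ x', g x' ∂(Measure.pi P))))
            ∂((P 0).prod (Measure.pi fun j => P (Fin.succAbove 0 j))) := by
          rw [hπmap, lintegral_map_equiv]
      _ = ∫⁻ z, ∫⁻ a, ENNReal.ofReal (Real.exp (t * (g (e.symm (a, z))
            - ∫ x', g x' ∂(Measure.pi P)))) ∂(P 0)
            ∂(Measure.pi fun j => P (Fin.succAbove 0 j)) :=
          lintegral_prod_symm _ hmeas.aemeasurable
      _ ≤ ∫⁻ z, ENNReal.ofReal (Real.exp (c 0 * t^2 / 2))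
            * ENNReal.ofReal (Real.exp (t * ((∫ a, g (e.symm (a, z)) ∂(P 0))
                - ∫ x', g x' ∂(Measure.pi P)))) ∂(Measure.pi fun j => P (Fin.succAbove 0 j)) := by
          refine lintegral_mono_ae ?_
          filter_upwards [hSGz] with z hz
          calc ∫⁻ a, ENNReal.ofReal (Real.exp (t * (g (e.symm (a, z))
                - ∫ x', g x' ∂(Measure.pi P)))) ∂(P 0)
              = ∫⁻ a, ENNReal.ofReal (Real.exp (t * (g (e.symm (a, z))
                  - ∫ y', g (e.symm (y', z)) ∂(P 0))))
                  * ENNReal.ofReal (Real.exp (t * ((∫ a', g (e.symm (a', z)) ∂(P 0))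
                    - ∫ x', g x' ∂(Measure.pi P)))) ∂(P 0) := by
                congr 1
                funext a
                rw [← ENNReal.ofReal_mul (Real.exp_pos _).le, ← Real.exp_add]
                congr 2
                ring
            _ = (∫⁻ a, ENNReal.ofReal (Real.exp (t * (g (e.symm (a, z))
                  - ∫ y', g (e.symm (y', z)) ∂(P 0)))) ∂(P 0))
                  * ENNReal.ofReal (Real.exp (t * ((∫ a', g (e.symm (a', z)) ∂(P 0))
                    - ∫ x', g x' ∂(Measure.pi P)))) :=
                lintegral_mul_const' _ _ ENNReal.ofReal_ne_top
            _ ≤ _ := mul_le_mul_left hz.2 _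
      _ = ENNReal.ofReal (Real.exp (c 0 * t^2 / 2))
            * ∫⁻ z, ENNReal.ofReal (Real.exp (t * ((∫ a, g (e.symm (a, z)) ∂(P 0))
                - ∫ x', g x' ∂(Measure.pi P)))) ∂(Measure.pi fun j => P (Fin.succAbove 0 j)) :=
          lintegral_const_mul' _ _ ENNReal.ofReal_ne_top
      _ ≤ ENNReal.ofReal (Real.exp (c 0 * t^2 / 2))
            * ENNReal.ofReal (Real.exp ((∑ j, c (Fin.succAbove 0 j)) * t^2 / 2)) := by
          refine mul_le_mul_right ?_ _
          have hIH := IH (fun j => P (Fin.succAbove 0 j)) (fun j => hP _)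
            (fun z => ∫ a, g (e.symm (a, z)) ∂(P 0)) hh_meas hhint
            (fun j => c (Fin.succAbove 0 j)) hSGh
          rw [hmean]
          exact hIH
      _ = ENNReal.ofReal (Real.exp ((∑ i, c i) * t^2 / 2)) := by
          rw [← ENNReal.ofReal_mul (Real.exp_pos _).le, ← Real.exp_add,
            Fin.sum_univ_succAbove c 0]
          congr 2
          ring

end Tensor



/-- **Entropy method / tensorization corollary.** Let `X₁,...,Xₙ` be independent with joint
product law `Measure.pi P`, and let `f` be measurable and exponentially integrable. If for
every `t > 0`, every coordinate `i`, and every configuration of the other coordinates, the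
divergence between the tilting of `P i` by `t ↦ t·fᵢ(·|x̄ⁱ)` and `P i` is at most `cᵢt²/2`,
then `P(f(Xⁿ) - E[f(Xⁿ)] ≥ r) ≤ exp(-r²/(2∑cᵢ))` for every `r > 0`. -/
theorem concentration_from_local_tilted_bounds {𝓧 : Type*} [MeasurableSpace 𝓧]
    [StandardBorelSpace 𝓧] [Nonempty 𝓧] {n : ℕ}
    (P : Fin n → Measure 𝓧) [∀ i, IsProbabilityMeasure (P i)]
    (f : (Fin n → 𝓧) → ℝ) (hf : Measurable f)
    (hexp : ∀ lam : ℝ, Integrable (fun x => Real.exp (lam * f x)) (Measure.pi P))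
    (c : Fin n → ℝ) (hc : ∀ i, 0 < c i)
    (hLSI : ∀ t : ℝ, 0 < t → ∀ i : Fin n, ∀ x : Fin n → 𝓧,
      relEnt ((P i).tilted fun y => t * f (Function.update x i y)) (P i) ≤
        ENNReal.ofReal (c i * t^2 / 2))
    {r : ℝ} (hr : 0 < r) :
    Measure.pi P {x | r ≤ f x - ∫ x', f x' ∂(Measure.pi P)} ≤
      ENNReal.ofReal (Real.exp (-(r^2) / (2 * ∑ i, c i))) := by

  haveI : IsProbabilityMeasure (Measure.pi P) := inferInstance
  cases n with
  | zero =>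
    have hsum : (∑ i : Fin 0, c i) = 0 := rfl
    rw [hsum, mul_zero, div_zero, Real.exp_zero, ENNReal.ofReal_one]
    exact prob_le_one
  | succ m =>
    set mπ := ∫ x', f x' ∂(Measure.pi P) with hmπ
    have hC : 0 < ∑ i, c i :=
      Finset.sum_pos (fun i _ => hc i) ⟨0, Finset.mem_univ 0⟩
    have hfi : Integrable f (Measure.pi P) :=
      integrable_of_forall_exp hf.aestronglyMeasurable hexp
    -- the coordinatewise subgaussian bundle, from the tilted-divergence bounds via Herbst
    have hSG : ∀ t0 : ℝ, 0 < t0 → ∀ i : Fin (m+1), ∀ᵐ x ∂(Measure.pi P),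
        Integrable (fun y => f (Function.update x i y)) (P i) ∧
        ∫⁻ y, ENNReal.ofReal (Real.exp (t0 * (f (Function.update x i y)
            - ∫ y', f (Function.update x i y') ∂(P i)))) ∂(P i)
          ≤ ENNReal.ofReal (Real.exp (c i * t0^2 / 2)) := by
      intro t0 ht0 i
      set ei := MeasurableEquiv.piFinSuccAbove (fun _ : Fin (m+1) => 𝓧) i with hei
      have mpi : MeasurePreserving ei (Measure.pi P)
          ((P i).prod (Measure.pi fun j => P (Fin.succAbove i j))) :=
        measurePreserving_piFinSuccAbove P i
      have hπmap : Measure.pi P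
          = Measure.map ei.symm ((P i).prod (Measure.pi fun j => P (Fin.succAbove i j))) :=
        (mpi.symm ei).map_eq.symm
      have hgood : ∀ᵐ z ∂(Measure.pi fun j => P (Fin.succAbove i j)),
          ∀ q : ℤ, Integrable (fun y => Real.exp ((q:ℝ) * f (ei.symm (y, z)))) (P i) := by
        rw [ae_all_iff]
        intro q
        have h1 : Integrable (fun p : 𝓧 × (Fin m → 𝓧) => Real.exp ((q:ℝ) * f (ei.symm p)))
            ((P i).prod (Measure.pi fun j => P (Fin.succAbove i j))) := by
          have h2 := hexp (q:ℝ)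
          rw [hπmap] at h2
          exact (integrable_map_equiv ei.symm _).1 h2
        exact h1.prod_left_ae
      have hbundle : ∀ᵐ z ∂(Measure.pi fun j => P (Fin.succAbove i j)),
          Integrable (fun y => f (ei.symm (y, z))) (P i) ∧
          ∫⁻ y, ENNReal.ofReal (Real.exp (t0 * (f (ei.symm (y, z))
              - ∫ y', f (ei.symm (y', z)) ∂(P i)))) ∂(P i)
            ≤ ENNReal.ofReal (Real.exp (c i * t0^2 / 2)) := by
        filter_upwards [hgood] with z hz
        have hall : ∀ lam : ℝ, Integrable (fun y => Real.exp (lam * f (ei.symm (y, z)))) (P i) := by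
          intro lam
          have h1 := hz ⌊lam⌋
          have h2 := hz (⌊lam⌋ + 1)
          refine (h1.add h2).mono' ?_ ?_
          · exact (measurable_exp.comp ((hf.comp (ei.symm.measurable.comp
              (measurable_id.prodMk measurable_const))).const_mul lam)).aestronglyMeasurable
          · filter_upwards with y
            rw [Real.norm_eq_abs, abs_of_pos (Real.exp_pos _)]
            have hb := exp_mul_le_of_between (f (ei.symm (y, z)))
              (Int.floor_le lam) (Int.lt_floor_add_one lam).le
            simpa [Int.cast_add, Int.cast_one] using hb
        have hFmeas : Measurable fun y => f (ei.symm (y, z)) :=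
          hf.comp (ei.symm.measurable.comp (measurable_id.prodMk measurable_const))
        have hD : ∀ s, 0 < s →
            relEnt ((P i).tilted fun y => s * f (ei.symm (y, z))) (P i)
              ≤ ENNReal.ofReal (c i * s^2 / 2) := by
          intro s hs
          have hx0 : ∀ y : 𝓧,
              Function.update (ei.symm (Classical.arbitrary 𝓧, z)) i y = ei.symm (y, z) := by
            intro y
            simp only [hei, MeasurableEquiv.piFinSuccAbove_symm_apply]
            exact Fin.update_insertNth (α := fun _ => 𝓧) i _ y z
          have h3 := hLSI s hs i (ei.symm (Classical.arbitrary 𝓧, z))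
          simpa only [hx0] using h3
        have hherbst := herbst hFmeas hall (le_of_lt (hc i)) hD ht0
        have hFint : Integrable (fun y => f (ei.symm (y, z))) (P i) :=
          integrable_of_forall_exp hFmeas.aestronglyMeasurable hall
        refine ⟨hFint, ?_⟩
        set mF := ∫ y', f (ei.symm (y', z)) ∂(P i) with hmF
        have hintexp : Integrable
            (fun y => Real.exp (t0 * (f (ei.symm (y, z)) - mF))) (P i) := by
          refine ((hall t0).const_mul (Real.exp (-(t0 * mF)))).congr (ae_of_all _ fun y => ?_)
          simp only [← Real.exp_add]
          congr 1
          ring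
        rw [← ofReal_integral_eq_lintegral_ofReal hintexp
          (ae_of_all _ fun y => (Real.exp_pos _).le)]
        refine ENNReal.ofReal_le_ofReal ?_
        have h3 : ∫ y, Real.exp (t0 * (f (ei.symm (y, z)) - mF)) ∂(P i)
            = Real.exp (-(t0 * mF)) * ∫ y, Real.exp (t0 * f (ei.symm (y, z))) ∂(P i) := by
          rw [← integral_const_mul]
          congr 1
          funext y
          rw [← Real.exp_add]
          congr 1
          ring
        rw [h3]
        calc Real.exp (-(t0 * mF)) * ∫ y, Real.exp (t0 * f (ei.symm (y, z))) ∂(P i)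
            ≤ Real.exp (-(t0 * mF)) * Real.exp (c i * t0^2 / 2 + t0 * mF) :=
              mul_le_mul_of_nonneg_left hherbst (Real.exp_pos _).le
          _ = Real.exp (c i * t0^2 / 2) := by
              rw [← Real.exp_add]
              congr 1
              ring
      -- transfer the bundle back to an a.e. statement over `Measure.pi P`
      have hsnd : Measure.map Prod.snd ((P i).prod (Measure.pi fun j => P (Fin.succAbove i j)))
          = (Measure.pi fun j => P (Fin.succAbove i j)) := by
        rw [Measure.map_snd_prod, measure_univ, one_smul]
      have hprod : ∀ᵐ p ∂((P i).prod (Measure.pi fun j => P (Fin.succAbove i j))),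
          Integrable (fun y => f (ei.symm (y, p.2))) (P i) ∧
          ∫⁻ y, ENNReal.ofReal (Real.exp (t0 * (f (ei.symm (y, p.2))
              - ∫ y', f (ei.symm (y', p.2)) ∂(P i)))) ∂(P i)
            ≤ ENNReal.ofReal (Real.exp (c i * t0^2 / 2)) := by
        rw [← hsnd] at hbundle
        exact (Measure.tendsto_ae_map measurable_snd.aemeasurable).eventually hbundle
      have hx : ∀ᵐ x ∂(Measure.pi P),
          Integrable (fun y => f (ei.symm (y, (ei x).2))) (P i) ∧
          ∫⁻ y, ENNReal.ofReal (Real.exp (t0 * (f (ei.symm (y, (ei x).2))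
              - ∫ y', f (ei.symm (y', (ei x).2)) ∂(P i)))) ∂(P i)
            ≤ ENNReal.ofReal (Real.exp (c i * t0^2 / 2)) := by
        have h4 : ((P i).prod (Measure.pi fun j => P (Fin.succAbove i j)))
            = Measure.map ei (Measure.pi P) := mpi.map_eq.symm
        rw [h4] at hprod
        exact (Measure.tendsto_ae_map ei.measurable.aemeasurable).eventually hprod
      filter_upwards [hx] with x hxB
      have hupdx : ∀ y : 𝓧, Function.update x i y = ei.symm (y, (ei x).2) := by
        intro y
        have h5 : ei.symm (y, (ei x).2) = Fin.insertNth i y (Fin.removeNth i x) := by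
          simp only [hei, MeasurableEquiv.piFinSuccAbove_symm_apply,
            MeasurableEquiv.piFinSuccAbove_apply]
          rfl
        rw [h5, Fin.insertNth_removeNth]
      simp only [← hupdx] at hxB
      exact hxB
    -- apply tensorization with t = r / ∑ cᵢ
    set t := r / ∑ i, c i with htdef
    have ht : 0 < t := div_pos hr hC
    have htensor := tensor t (m+1) P (fun i => inferInstance) f hf hfi c (hSG t ht)
    have hXint : Integrable (fun x => Real.exp (t * (f x - mπ))) (Measure.pi P) := by
      refine ((hexp t).const_mul (Real.exp (-(t * mπ)))).congr (ae_of_all _ fun x => ?_)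
      simp only [← Real.exp_add]
      congr 1
      ring
    have hmgf : ∫ x, Real.exp (t * (f x - mπ)) ∂(Measure.pi P)
        ≤ Real.exp ((∑ i, c i) * t^2 / 2) := by
      have h1 := ofReal_integral_eq_lintegral_ofReal hXint
        (ae_of_all _ fun x => (Real.exp_pos _).le)
      rw [← h1] at htensor
      exact (ENNReal.ofReal_le_ofReal_iff (Real.exp_pos _).le).1 htensor
    have hch := measure_ge_le_exp_mul_mgf (μ := Measure.pi P)
      (X := fun x => f x - mπ) r ht.le hXint
    have hmgf_eq : mgf (fun x => f x - mπ) (Measure.pi P) t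
        = ∫ x, Real.exp (t * (f x - mπ)) ∂(Measure.pi P) := rfl
    have hfinal : ((Measure.pi P) {x | r ≤ f x - mπ}).toReal
        ≤ Real.exp (-(r^2) / (2 * ∑ i, c i)) := by
      refine hch.trans ?_
      rw [hmgf_eq]
      calc Real.exp (-t * r) * ∫ x, Real.exp (t * (f x - mπ)) ∂(Measure.pi P)
          ≤ Real.exp (-t * r) * Real.exp ((∑ i, c i) * t^2 / 2) :=
            mul_le_mul_of_nonneg_left hmgf (Real.exp_pos _).le
        _ = Real.exp (-(r^2) / (2 * ∑ i, c i)) := by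
            rw [← Real.exp_add]
            congr 1
            rw [htdef]
            field_simp
            ring
    calc (Measure.pi P) {x | r ≤ f x - mπ}
        = ENNReal.ofReal (((Measure.pi P) {x | r ≤ f x - mπ}).toReal) :=
          (ENNReal.ofReal_toReal (measure_ne_top _ _)).symm
      _ ≤ ENNReal.ofReal (Real.exp (-(r^2) / (2 * ∑ i, c i))) :=
          ENNReal.ofReal_le_ofReal hfinal
end

section
/- Let (Ω, F, μ) be a probability space and let f : Ω → ℝ be a measurable function such that E_μ[exp(λ f)] < ∞ for all λ > 0. Then for every λ > 0, the relative entropy between the tilted measure and μ admits the exact 'thermal fluctuation' representation D(μ^{(λf)} ‖ μ) = ∫₀^λ ∫_t^λ Var_μ^{(sf)}[f] ds dt, where Var_μ^{(g)}[f] denotes the variance of f under the tilted measure μ^{(g)}. -/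
open MeasureTheory ProbabilityTheory
open scoped ENNReal NNReal Classical

lemma aux_pow_le_exp (n : ℕ) {x : ℝ} (hx : 0 ≤ x) : x ^ n ≤ (n.factorial : ℝ) * Real.exp x := by
  have h := Real.sum_le_exp_of_nonneg hx (n + 1)
  have h1 : x ^ n / (n.factorial : ℝ) ≤ Real.exp x :=
    le_trans (Finset.single_le_sum (f := fun i => x ^ i / (i.factorial : ℝ))
      (fun i _ => by positivity) (Finset.self_mem_range_succ n)) h
  have hn : (0:ℝ) < (n.factorial : ℝ) := by positivity
  calc x ^ n = (x ^ n / (n.factorial : ℝ)) * (n.factorial : ℝ) := by field_simp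
  _ ≤ Real.exp x * (n.factorial : ℝ) := by gcongr
  _ = (n.factorial : ℝ) * Real.exp x := by ring

lemma aux_bound (n : ℕ) {t : ℝ} (ht : 0 < t) (x : ℝ) :
    |x| ^ n * Real.exp (t * x) ≤ (n.factorial : ℝ) * Real.exp ((t + 1) * x) + (n.factorial : ℝ) / t ^ n := by
  have hc : (0:ℝ) ≤ (n.factorial : ℝ) / t ^ n := by positivity
  rcases le_or_gt 0 x with hx | hx
  · have h1 : |x| ^ n ≤ (n.factorial : ℝ) * Real.exp x := by
      rw [abs_of_nonneg hx]; exact aux_pow_le_exp n hx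
    have h2 : |x| ^ n * Real.exp (t * x) ≤ (n.factorial : ℝ) * Real.exp x * Real.exp (t * x) :=
      mul_le_mul_of_nonneg_right h1 (Real.exp_pos _).le
    have h3 : (n.factorial : ℝ) * Real.exp x * Real.exp (t * x) = (n.factorial : ℝ) * Real.exp ((t + 1) * x) := by
      rw [mul_assoc, ← Real.exp_add]; ring_nf
    linarith
  · have hx' : 0 ≤ t * |x| := by positivity
    have h1 : (t * |x|) ^ n ≤ (n.factorial : ℝ) * Real.exp (t * |x|) := aux_pow_le_exp n hx'
    have ht' : (0:ℝ) < t ^ n := by positivity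
    have h2 : |x| ^ n ≤ (n.factorial : ℝ) * Real.exp (t * |x|) / t ^ n := by
      rw [mul_pow] at h1
      rw [le_div_iff₀ ht']
      linarith
    have h4 : Real.exp (t * |x|) * Real.exp (t * x) = 1 := by
      rw [← Real.exp_add, abs_of_neg hx]
      ring_nf
      exact Real.exp_zero
    have h5 : |x| ^ n * Real.exp (t * x) ≤ (n.factorial : ℝ) * Real.exp (t * |x|) / t ^ n * Real.exp (t * x) :=
      mul_le_mul_of_nonneg_right h2 (Real.exp_pos _).le
    have h6 : (n.factorial : ℝ) * Real.exp (t * |x|) / t ^ n * Real.exp (t * x) = (n.factorial : ℝ) / t ^ n := by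
      field_simp
      nlinarith [h4]
    have := Real.exp_pos ((t + 1) * x)
    have hn : (0:ℝ) ≤ (n.factorial : ℝ) := by positivity
    nlinarith

section Aux

variable {Ω : Type*} [MeasurableSpace Ω] (μ : Measure Ω) [IsProbabilityMeasure μ]
  (f : Ω → ℝ) (hf : Measurable f)
  (hint : ∀ lam : ℝ, 0 < lam → Integrable (fun ω => Real.exp (lam * f ω)) μ)

include hf hint

lemma aux_int_abs (n : ℕ) {t : ℝ} (ht : 0 < t) :
    Integrable (fun ω => |f ω| ^ n * Real.exp (t * f ω)) μ := by
  have hb : Integrable (fun ω => (n.factorial : ℝ) * Real.exp ((t + 1) * f ω)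
      + (n.factorial : ℝ) / t ^ n) μ :=
    ((hint (t + 1) (by linarith)).const_mul _).add (integrable_const _)
  refine hb.mono' ?_ ?_
  · exact (((hf.abs.pow_const n).mul ((hf.const_mul t).exp))).aestronglyMeasurable
  · filter_upwards with ω
    rw [Real.norm_eq_abs, abs_of_nonneg (by positivity)]
    exact aux_bound n ht (f ω)

lemma aux_int_pow (n : ℕ) {t : ℝ} (ht : 0 < t) :
    Integrable (fun ω => f ω ^ n * Real.exp (t * f ω)) μ := by
  refine (aux_int_abs μ f hf hint n ht).mono' ?_ ?_
  · exact (((hf.pow_const n).mul ((hf.const_mul t).exp))).aestronglyMeasurable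
  · filter_upwards with ω
    rw [Real.norm_eq_abs, abs_mul, abs_pow, abs_of_nonneg (Real.exp_pos _).le]

lemma aux_hasDerivAt (n : ℕ) {t : ℝ} (ht : 0 < t) :
    HasDerivAt (fun x => ∫ ω, f ω ^ n * Real.exp (x * f ω) ∂μ)
      (∫ ω, f ω ^ (n + 1) * Real.exp (t * f ω) ∂μ) t := by
  have key := hasDerivAt_integral_of_dominated_loc_of_deriv_le (μ := μ)
    (F := fun x ω => f ω ^ n * Real.exp (x * f ω))
    (F' := fun x ω => f ω ^ (n + 1) * Real.exp (x * f ω))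
    (x₀ := t)
    (bound := fun ω => |f ω| ^ (n + 1) * (Real.exp (3 * t / 2 * f ω) + Real.exp (t / 2 * f ω)))
    (s := Metric.ball t (t / 2)) (Metric.ball_mem_nhds t (by positivity))
    (Filter.Eventually.of_forall fun x =>
      (((hf.pow_const n).mul ((hf.const_mul x).exp))).aestronglyMeasurable)
    (aux_int_pow μ f hf hint n ht)
    ((((hf.pow_const (n + 1)).mul ((hf.const_mul t).exp))).aestronglyMeasurable)
    ?_ ?_ ?_
  · exact key.2
  · filter_upwards with ω x hx
    rw [Real.norm_eq_abs, abs_mul, abs_pow, abs_of_nonneg (Real.exp_pos _).le]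
    have hx1 : t / 2 < x := by
      have := abs_lt.mp (mem_ball_iff_norm.mp hx); linarith [this.1]
    have hx2 : x < 3 * t / 2 := by
      have := abs_lt.mp (mem_ball_iff_norm.mp hx); linarith [this.2]
    have hexp : Real.exp (x * f ω) ≤ Real.exp (3 * t / 2 * f ω) + Real.exp (t / 2 * f ω) := by
      rcases le_or_gt 0 (f ω) with hc | hc
      · have : Real.exp (x * f ω) ≤ Real.exp (3 * t / 2 * f ω) :=
          Real.exp_le_exp.mpr (mul_le_mul_of_nonneg_right hx2.le hc)
        linarith [Real.exp_pos (t / 2 * f ω)]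
      · have : Real.exp (x * f ω) ≤ Real.exp (t / 2 * f ω) :=
          Real.exp_le_exp.mpr (by nlinarith)
        linarith [Real.exp_pos (3 * t / 2 * f ω)]
    have h0 : (0:ℝ) ≤ |f ω| ^ (n + 1) := by positivity
    exact mul_le_mul_of_nonneg_left hexp h0
  · have heq : (fun ω => |f ω| ^ (n + 1) * (Real.exp (3 * t / 2 * f ω) + Real.exp (t / 2 * f ω)))
        = fun ω => |f ω| ^ (n + 1) * Real.exp (3 * t / 2 * f ω)
          + |f ω| ^ (n + 1) * Real.exp (t / 2 * f ω) := by
      funext ω; ring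
    rw [heq]
    exact (aux_int_abs μ f hf hint (n + 1) (by positivity)).add
      (aux_int_abs μ f hf hint (n + 1) (by positivity))
  · filter_upwards with ω x _
    have h1 : HasDerivAt (fun y => Real.exp (y * f ω)) (Real.exp (x * f ω) * f ω) x :=
      (hasDerivAt_mul_const (f ω)).exp
    have h2 := h1.const_mul (f ω ^ n)
    convert h2 using 1
    · rfl
    ring

lemma aux_int_tilted (n : ℕ) {s : ℝ} (hs : 0 < s) :
    Integrable (fun ω => f ω ^ n) (μ.tilted fun ω => s * f ω) := by
  rw [Measure.tilted, integrable_withDensity_iff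
    (((hf.const_mul s).exp.div_const _).ennreal_ofReal)
    (Filter.Eventually.of_forall fun ω => ENNReal.ofReal_lt_top)]
  refine ((aux_int_pow μ f hf hint n hs).div_const (∫ ω, Real.exp (s * f ω) ∂μ)).congr ?_
  filter_upwards with ω
  rw [ENNReal.toReal_ofReal (by positivity), mul_div_assoc]

omit hf hint in
lemma aux_integral_tilted (n : ℕ) (s : ℝ) :
    ∫ ω, f ω ^ n ∂(μ.tilted fun ω => s * f ω)
      = (∫ ω, f ω ^ n * Real.exp (s * f ω) ∂μ) / ∫ ω, Real.exp (s * f ω) ∂μ := by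
  rw [integral_tilted]
  rw [← integral_div]
  congr 1
  funext ω
  simp only [smul_eq_mul]
  ring

lemma aux_variance {s : ℝ} (hs : 0 < s) :
    variance f (μ.tilted fun ω => s * f ω) =
      (∫ ω, f ω ^ 2 * Real.exp (s * f ω) ∂μ) / (∫ ω, Real.exp (s * f ω) ∂μ)
        - ((∫ ω, f ω * Real.exp (s * f ω) ∂μ) / (∫ ω, Real.exp (s * f ω) ∂μ)) ^ 2 := by
  haveI : NeZero μ := ⟨IsProbabilityMeasure.ne_zero μ⟩
  haveI := isProbabilityMeasure_tilted (hint s hs)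
  have hmem : MemLp f 2 (μ.tilted fun ω => s * f ω) :=
    (memLp_two_iff_integrable_sq hf.aestronglyMeasurable).mpr
      (aux_int_tilted μ f hf hint 2 hs)
  rw [variance_eq_sub hmem]
  have h2 : (∫ ω, (f ^ 2) ω ∂(μ.tilted fun ω => s * f ω))
      = ∫ ω, f ω ^ 2 ∂(μ.tilted fun ω => s * f ω) := by
    congr 1
  have h1 : (∫ ω, f ω ∂(μ.tilted fun ω => s * f ω))
      = ∫ ω, f ω ^ 1 ∂(μ.tilted fun ω => s * f ω) := by
    simp
  rw [h2, h1, aux_integral_tilted μ f 2 s, aux_integral_tilted μ f 1 s]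
  simp [pow_one]

end Aux

/-- **Maurer's thermal-fluctuation representation of the relative entropy.** If
`exp(λ f)` is `μ`-integrable for every `λ > 0`, then for every `λ > 0`
`D(μ^{(λf)} ‖ μ) = ∫₀^λ ∫_t^λ Var_{μ^{(sf)}}[f] ds dt`, where `μ^{(g)}` denotes the
`g`-tilting of `μ`. -/
theorem relEnt_tilted_eq_double_integral_variance {Ω : Type*} [MeasurableSpace Ω]
    (μ : Measure Ω) [IsProbabilityMeasure μ] (f : Ω → ℝ) (hf : Measurable f)
    (hint : ∀ lam : ℝ, 0 < lam → Integrable (fun ω => Real.exp (lam * f ω)) μ)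
    {lam : ℝ} (hlam : 0 < lam) :
    relEnt (μ.tilted fun ω => lam * f ω) μ =
      ENNReal.ofReal
        (∫ t in (0:ℝ)..lam, ∫ s in t..lam, variance f (μ.tilted fun ω => s * f ω)) := by
  haveI : NeZero μ := ⟨IsProbabilityMeasure.ne_zero μ⟩
  classical
  -- notation
  set M : ℝ → ℝ := fun x => ∫ ω, Real.exp (x * f ω) ∂μ with hMdef
  set M1 : ℝ → ℝ := fun x => ∫ ω, f ω * Real.exp (x * f ω) ∂μ with hM1def
  set M2 : ℝ → ℝ := fun x => ∫ ω, f ω ^ 2 * Real.exp (x * f ω) ∂μ with hM2def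
  set g : ℝ → ℝ := fun x => M1 x / M x with hgdef
  set V : ℝ → ℝ := fun s => variance f (μ.tilted fun ω => s * f ω) with hVdef
  have hMpos : ∀ {t : ℝ}, 0 < t → 0 < M t := fun ht => integral_exp_pos (hint _ ht)
  have hM0 : M 0 = 1 := by simp [hMdef]
  -- derivatives
  have hMd : ∀ {t : ℝ}, 0 < t → HasDerivAt M (M1 t) t := by
    intro t ht
    have h := aux_hasDerivAt μ f hf hint 0 ht
    simp only [pow_zero, one_mul, zero_add, pow_one] at h
    exact h
  have hM1d : ∀ {t : ℝ}, 0 < t → HasDerivAt M1 (M2 t) t := by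
    intro t ht
    have h := aux_hasDerivAt μ f hf hint 1 ht
    simp only [pow_one] at h
    exact h
  have hM2c : ∀ {t : ℝ}, 0 < t → ContinuousAt M2 t := by
    intro t ht
    exact (aux_hasDerivAt μ f hf hint 2 ht).continuousAt
  have hVeq : ∀ {s : ℝ}, 0 < s → V s = M2 s / M s - (g s) ^ 2 := by
    intro s hs
    exact aux_variance μ f hf hint hs
  have hgd : ∀ {s : ℝ}, 0 < s → HasDerivAt g (V s) s := by
    intro s hs
    have h := (hM1d hs).div (hMd hs) (hMpos hs).ne'
    have heq : (M2 s * M s - M1 s * M1 s) / M s ^ 2 = V s := by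
      rw [hVeq hs, hgdef]
      have hne := (hMpos hs).ne'
      field_simp
    rw [heq] at h
    exact h
  have hgc : ∀ {s : ℝ}, 0 < s → ContinuousAt g s := fun hs => (hgd hs).continuousAt
  -- continuity of V on (0, ∞)
  have hVc : ∀ {s : ℝ}, 0 < s → ContinuousAt V s := by
    intro s hs
    have hev : (fun x => M2 x / M x - (g x) ^ 2) =ᶠ[nhds s] V := by
      filter_upwards [isOpen_Ioi.mem_nhds (show s ∈ Set.Ioi (0:ℝ) from hs)] with x hx
      exact (hVeq hx).symm
    refine ContinuousAt.congr ?_ hev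
    exact (((hM2c hs).div (hMd hs).continuousAt (hMpos hs).ne')).sub ((hgc hs).pow 2)
  -- inner FTC
  have hInner : ∀ t ∈ Set.Ioc (0:ℝ) lam, (∫ s in t..lam, V s) = g lam - g t := by
    intro t ht
    have huIcc : Set.uIcc t lam = Set.Icc t lam := Set.uIcc_of_le ht.2
    refine intervalIntegral.integral_eq_sub_of_hasDerivAt ?_ ?_
    · intro s hs
      rw [huIcc] at hs
      exact hgd (lt_of_lt_of_le ht.1 hs.1)
    · refine ContinuousOn.intervalIntegrable ?_
      intro s hs
      rw [huIcc] at hs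
      exact (hVc (lt_of_lt_of_le ht.1 hs.1)).continuousWithinAt
  have hVnonneg : ∀ s : ℝ, 0 ≤ V s := fun s => variance_nonneg f _
  have hφnonneg : ∀ t ∈ Set.Ioc (0:ℝ) lam, 0 ≤ g lam - g t := by
    intro t ht
    rw [← hInner t ht]
    exact intervalIntegral.integral_nonneg ht.2 fun s _ => hVnonneg s
  -- continuity of M on [0, lam]
  have hMcont : ContinuousOn M (Set.Icc 0 lam) := by
    intro t ht
    refine continuousWithinAt_of_dominated
      (bound := fun ω => Real.exp (lam * f ω) + 1) ?_ ?_ ?_ ?_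
    · exact Filter.Eventually.of_forall fun x => ((hf.const_mul x).exp).aestronglyMeasurable
    · filter_upwards [self_mem_nhdsWithin] with x hx
      filter_upwards with ω
      rw [Real.norm_eq_abs, abs_of_nonneg (Real.exp_pos _).le]
      rcases le_or_gt 0 (f ω) with hc | hc
      · have : Real.exp (x * f ω) ≤ Real.exp (lam * f ω) :=
          Real.exp_le_exp.mpr (mul_le_mul_of_nonneg_right hx.2 hc)
        linarith
      · have hx0 : x * f ω ≤ 0 := mul_nonpos_iff.mpr (Or.inl ⟨hx.1, hc.le⟩)
        have : Real.exp (x * f ω) ≤ 1 := Real.exp_le_one_iff.mpr hx0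
        linarith [Real.exp_pos (lam * f ω)]
    · exact (hint lam hlam).add (integrable_const 1)
    · filter_upwards with ω
      exact ((Real.continuous_exp.comp (continuous_id.mul continuous_const)).continuousWithinAt)
  -- log M and FTC on [a, lam]
  have hLd : ∀ {t : ℝ}, 0 < t → HasDerivAt (fun x => Real.log (M x)) (g t) t := by
    intro t ht
    have := (hMd ht).log (hMpos ht).ne'
    simpa [hgdef] using this
  have hFTC2 : ∀ a : ℝ, 0 < a → a ≤ lam →
      (∫ t in a..lam, (g lam - g t)) = (lam - a) * g lam - (Real.log (M lam) - Real.log (M a)) := by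
    intro a ha halam
    have huIcc : Set.uIcc a lam = Set.Icc a lam := Set.uIcc_of_le halam
    have key := intervalIntegral.integral_eq_sub_of_hasDerivAt
      (f := fun t => g lam * t - Real.log (M t)) (f' := fun t => g lam - g t)
      (a := a) (b := lam) ?_ ?_
    · rw [key]; ring
    · intro t ht
      rw [huIcc] at ht
      have h1 : HasDerivAt (fun t : ℝ => g lam * t) (g lam) t := by
        simpa using (hasDerivAt_id t).const_mul (g lam)
      exact h1.sub (hLd (lt_of_lt_of_le ha ht.1))
    · refine ContinuousOn.intervalIntegrable ?_
      intro t ht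
      rw [huIcc] at ht
      exact (continuousAt_const.sub (hgc (lt_of_lt_of_le ha ht.1))).continuousWithinAt
  -- the sequence a n
  set a : ℕ → ℝ := fun n => lam / (n + 2) with hadef
  have ha_pos : ∀ n, 0 < a n := fun n => by
    have : (0:ℝ) < (n:ℝ) + 2 := by positivity
    exact div_pos hlam this
  have ha_lt : ∀ n, a n < lam := by
    intro n
    have hn0 : (0:ℝ) ≤ (n:ℝ) := Nat.cast_nonneg n
    have hpos : (0:ℝ) < (n:ℝ) + 2 := by linarith
    rw [hadef]
    rw [div_lt_iff₀ hpos]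
    nlinarith
  have ha_anti : Antitone a := by
    intro m n hmn
    apply div_le_div_of_nonneg_left hlam.le (by positivity)
    have : (m:ℝ) ≤ (n:ℝ) := Nat.cast_le.mpr hmn
    linarith
  have ha_tendsto : Filter.Tendsto a Filter.atTop (nhds 0) := by
    have h1 : Filter.Tendsto (fun n : ℕ => lam / (n:ℝ)) Filter.atTop (nhds 0) :=
      tendsto_const_div_atTop_nhds_zero_nat lam
    have h2 := h1.comp (Filter.tendsto_add_atTop_nat 2)
    have h3 : Filter.Tendsto (fun n : ℕ => lam / (((n + 2 : ℕ)) : ℝ)) Filter.atTop (nhds 0) := h2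
    have heq : (fun n : ℕ => lam / (((n + 2 : ℕ)) : ℝ)) = a := by
      funext n; rw [hadef]; push_cast; ring_nf
    rwa [heq] at h3
  -- φ and its properties
  set φ : ℝ → ℝ := fun t => g lam - g t with hφdef
  have hφcont : ContinuousOn φ (Set.Ioi 0) := by
    intro t ht
    exact (continuousAt_const.sub (hgc ht)).continuousWithinAt
  have hφmeas : AEMeasurable φ (volume.restrict (Set.Ioc (0:ℝ) lam)) :=
    (hφcont.mono Set.Ioc_subset_Ioi_self).aemeasurable measurableSet_Ioc
  -- MCT
  set ψ : ℝ → ℝ≥0∞ := fun t => ENNReal.ofReal (φ t) with hψdef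
  have hψmeas : AEMeasurable ψ (volume.restrict (Set.Ioc (0:ℝ) lam)) :=
    hφmeas.ennreal_ofReal
  set K : ℝ := lam * g lam - Real.log (M lam) with hKdef
  set Kn : ℕ → ℝ := fun n => (lam - a n) * g lam - (Real.log (M lam) - Real.log (M (a n)))
    with hKndef
  have hKn_eq : ∀ n, (∫ t in Set.Ioc (a n) lam, φ t) = Kn n := by
    intro n
    rw [← intervalIntegral.integral_of_le (ha_lt n).le]
    exact hFTC2 (a n) (ha_pos n) (ha_lt n).le
  have hIntOn : ∀ n, IntegrableOn φ (Set.Ioc (a n) lam) := by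
    intro n
    have hc : ContinuousOn φ (Set.Icc (a n) lam) := by
      refine hφcont.mono ?_
      intro x hx
      exact lt_of_lt_of_le (ha_pos n) hx.1
    exact (hc.integrableOn_Icc).mono_set Set.Ioc_subset_Icc_self
  have hlint_n : ∀ n, (∫⁻ t in Set.Ioc (a n) lam, ψ t) = ENNReal.ofReal (Kn n) := by
    intro n
    rw [← hKn_eq n]
    refine (ofReal_integral_eq_lintegral_ofReal (hIntOn n) ?_).symm
    filter_upwards [ae_restrict_mem measurableSet_Ioc] with t ht
    exact hφnonneg t ⟨lt_trans (ha_pos n) ht.1, ht.2⟩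
  have hKn_nonneg : ∀ n, 0 ≤ Kn n := by
    intro n
    rw [← hKn_eq n]
    refine setIntegral_nonneg measurableSet_Ioc fun t ht => ?_
    exact hφnonneg t ⟨lt_trans (ha_pos n) ht.1, ht.2⟩
  have hKn_tendsto : Filter.Tendsto Kn Filter.atTop (nhds K) := by
    have hMa : Filter.Tendsto (fun n => M (a n)) Filter.atTop (nhds 1) := by
      have h0 : (0:ℝ) ∈ Set.Icc (0:ℝ) lam := ⟨le_refl 0, hlam.le⟩
      have hcw : ContinuousWithinAt M (Set.Icc 0 lam) 0 := hMcont 0 h0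
      have hain : Filter.Tendsto a Filter.atTop (nhdsWithin 0 (Set.Icc 0 lam)) := by
        refine tendsto_nhdsWithin_of_tendsto_nhds_of_eventually_within _ ha_tendsto ?_
        exact Filter.Eventually.of_forall fun n => ⟨(ha_pos n).le, (ha_lt n).le⟩
      have := hcw.tendsto.comp hain
      rwa [hM0] at this
    have hloga : Filter.Tendsto (fun n => Real.log (M (a n))) Filter.atTop (nhds 0) := by
      have := (Real.continuousAt_log one_ne_zero).tendsto.comp hMa
      simpa [Function.comp_def] using this
    have h1 : Filter.Tendsto (fun n => lam - a n) Filter.atTop (nhds lam) := by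
      simpa using tendsto_const_nhds.sub ha_tendsto
    have h2c : Filter.Tendsto (fun _ : ℕ => g lam) Filter.atTop (nhds (g lam)) :=
      tendsto_const_nhds
    have h3c : Filter.Tendsto (fun _ : ℕ => Real.log (M lam)) Filter.atTop
        (nhds (Real.log (M lam))) := tendsto_const_nhds
    have hfin := (h1.mul h2c).sub (h3c.sub hloga)
    simpa [hKndef, hKdef] using hfin
  have hK_nonneg : 0 ≤ K := ge_of_tendsto' hKn_tendsto hKn_nonneg
  -- MCT conclusion
  have hMCT : (∫⁻ t in Set.Ioc (0:ℝ) lam, ψ t) = ENNReal.ofReal K := by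
    have hmono : ∀ t : ℝ, Monotone fun n => (Set.Ioc (a n) lam).indicator ψ t := by
      intro t m n hmn
      refine Set.indicator_le_indicator_of_subset ?_ (fun x => zero_le) t
      exact Set.Ioc_subset_Ioc_left (ha_anti hmn)
    have htend : ∀ᵐ t ∂(volume.restrict (Set.Ioc (0:ℝ) lam)),
        Filter.Tendsto (fun n => (Set.Ioc (a n) lam).indicator ψ t) Filter.atTop (nhds (ψ t)) := by
      filter_upwards [ae_restrict_mem measurableSet_Ioc] with t ht
      have hev : (fun n => (Set.Ioc (a n) lam).indicator ψ t) =ᶠ[Filter.atTop]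
          fun _ => ψ t := by
        have : ∀ᶠ n in Filter.atTop, a n < t := ha_tendsto.eventually_lt_const ht.1
        filter_upwards [this] with n hn
        exact Set.indicator_of_mem (show t ∈ Set.Ioc (a n) lam from ⟨hn, ht.2⟩) ψ
      exact Filter.Tendsto.congr' hev.symm tendsto_const_nhds
    have hmct := lintegral_tendsto_of_tendsto_of_monotone
      (fun n => (hψmeas.indicator measurableSet_Ioc))
      (Filter.Eventually.of_forall hmono) htend
    have hval : ∀ n, (∫⁻ t in Set.Ioc (0:ℝ) lam, (Set.Ioc (a n) lam).indicator ψ t)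
        = ENNReal.ofReal (Kn n) := by
      intro n
      rw [lintegral_indicator measurableSet_Ioc, Measure.restrict_restrict measurableSet_Ioc]
      rw [Set.inter_eq_self_of_subset_left (Set.Ioc_subset_Ioc_left (ha_pos n).le)]
      exact hlint_n n
    rw [show (fun n => ∫⁻ t in Set.Ioc (0:ℝ) lam, (Set.Ioc (a n) lam).indicator ψ t)
        = fun n => ENNReal.ofReal (Kn n) from funext hval] at hmct
    have hlim : Filter.Tendsto (fun n => ENNReal.ofReal (Kn n)) Filter.atTop
        (nhds (ENNReal.ofReal K)) := (ENNReal.continuous_ofReal.tendsto K).comp hKn_tendsto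
    exact tendsto_nhds_unique hmct hlim
  -- integrability of φ on (0, lam]
  have hφae_nonneg : 0 ≤ᵐ[volume.restrict (Set.Ioc (0:ℝ) lam)] φ := by
    filter_upwards [ae_restrict_mem measurableSet_Ioc] with t ht
    exact hφnonneg t ht
  have hφsm : AEStronglyMeasurable φ (volume.restrict (Set.Ioc (0:ℝ) lam)) :=
    hφmeas.aestronglyMeasurable
  have hφint : IntegrableOn φ (Set.Ioc (0:ℝ) lam) := by
    refine ⟨hφsm, ?_⟩
    rw [hasFiniteIntegral_iff_ofReal hφae_nonneg]
    rw [hMCT]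
    exact ENNReal.ofReal_lt_top
  have hφval : (∫ t in Set.Ioc (0:ℝ) lam, φ t) = K := by
    rw [integral_eq_lintegral_of_nonneg_ae hφae_nonneg hφsm, hMCT,
      ENNReal.toReal_ofReal hK_nonneg]
  -- assemble RHS
  have hRHS : (∫ t in (0:ℝ)..lam, ∫ s in t..lam, V s) = K := by
    rw [intervalIntegral.integral_of_le hlam.le]
    rw [setIntegral_congr_fun measurableSet_Ioc (fun t ht => hInner t ht)]
    exact hφval
  -- assemble LHS
  set ν : Measure Ω := μ.tilted fun ω => lam * f ω with hνdef
  haveI : IsProbabilityMeasure ν := isProbabilityMeasure_tilted (hint lam hlam)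
  have hνμ : ν ≪ μ := tilted_absolutelyContinuous μ _
  have hlog : (fun x => Real.log ((ν.rnDeriv μ) x).toReal)
      =ᵐ[μ] fun ω => lam * f ω - Real.log (M lam) :=
    log_rnDeriv_tilted_left_self (hint lam hlam)
  have hlogν : (fun x => Real.log ((ν.rnDeriv μ) x).toReal)
      =ᵐ[ν] fun ω => lam * f ω - Real.log (M lam) := hνμ.ae_eq hlog
  have hfν : Integrable f ν := by
    have := aux_int_tilted μ f hf hint 1 hlam
    simpa using this
  have hintν : Integrable (fun ω => lam * f ω - Real.log (M lam)) ν :=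
    (hfν.const_mul lam).sub (integrable_const _)
  have hlogint : Integrable (fun x => Real.log ((ν.rnDeriv μ) x).toReal) ν :=
    hintν.congr hlogν.symm
  have hintf : (∫ ω, f ω ∂ν) = g lam := by
    have h := aux_integral_tilted μ f 1 lam
    simpa [hgdef, hM1def, hMdef] using h
  have hLHS : (∫ x, Real.log ((ν.rnDeriv μ) x).toReal ∂ν) = K := by
    rw [integral_congr_ae hlogν,
      integral_sub (hfν.const_mul lam) (integrable_const _), integral_const_mul, hintf]
    simp [hKdef]
  rw [relEnt, if_pos ⟨hνμ, hlogint⟩, hRHS, hLHS]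
end

section
/- Let P be the uniform probability measure on the Hamming cube {0,1}^n (equivalently, the law of n i.i.d. Bernoulli(1/2) random variables). For f : {0,1}^n → ℝ define Γf(x) = sqrt(Σ_{i=1}^n (f(x ⊕ e_i) − f(x))²), where e_i ∈ {0,1}^n has a 1 in position i and zeros elsewhere and ⊕ is componentwise modulo-2 addition. Then for every function f : {0,1}^n → ℝ, the discrete logarithmic Sobolev inequality D(P^{(f)} ‖ P) ≤ (1/8) · E_P^{(f)}[(Γf)²] holds, where E_P^{(f)} denotes expectation with respect to the f-tilting of P. -/
open MeasureTheory ProbabilityTheory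
open scoped ENNReal NNReal Classical

/-- The uniform probability measure on the Hamming cube `{0,1}ⁿ` (the law of `n` i.i.d.
Bernoulli(1/2) random variables). -/
noncomputable def unifCube (n : ℕ) : Measure (Fin n → Bool) :=
  (PMF.uniformOfFintype (Fin n → Bool)).toMeasure

section Aux

open Real

open Real

noncomputable def E2 (u v : ℝ) : ℝ := u * log u + v * log v - (u + v) * log ((u + v) / 2)

private lemma psiF_nonneg (t : ℝ) :
    0 ≤ t^2/2 * cosh t + cosh t * log (cosh t) - t * sinh t := by
  set F : ℝ → ℝ := fun t => t^2/2 * cosh t + cosh t * log (cosh t) - t * sinh t with hF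
  have hder : ∀ t : ℝ, HasDerivAt F (sinh t * (t^2/2 + log (cosh t))) t := by
    intro t
    have hlog : HasDerivAt (fun t : ℝ => log (cosh t)) ((cosh t)⁻¹ * sinh t) t := by
      simpa [Function.comp_def] using
        (Real.hasDerivAt_log (Real.cosh_pos t).ne').comp t (Real.hasDerivAt_cosh t)
    have h1 := ((hasDerivAt_pow 2 t).div_const 2).mul (Real.hasDerivAt_cosh t)
    have h2 := (Real.hasDerivAt_cosh t).mul hlog
    have h3 := (hasDerivAt_id t).mul (Real.hasDerivAt_sinh t)
    have H := (h1.add h2).sub h3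
    refine H.congr_deriv ?_
    have hc := (Real.cosh_pos t).ne'
    simp only [id]
    field_simp
    ring
  have hmono : MonotoneOn F (Set.Ici (0:ℝ)) := by
    apply monotoneOn_of_deriv_nonneg (convex_Ici 0)
    · exact fun x _ => (hder x).differentiableAt.continuousAt.continuousWithinAt
    · exact fun x _ => ((hder x).differentiableAt).differentiableWithinAt
    · intro x hx
      rw [(hder x).deriv]
      have hx0 : (0:ℝ) ≤ x := le_of_lt (by simpa using hx)
      have h1 : 0 ≤ sinh x := by positivity
      have h2 : 0 ≤ log (cosh x) := Real.log_nonneg (Real.one_le_cosh x)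
      positivity
  have hF0 : F 0 = 0 := by simp [hF]
  have key : ∀ t ≥ (0:ℝ), 0 ≤ F t := by
    intro t ht
    have := hmono (Set.self_mem_Ici) (Set.mem_Ici.2 ht) ht
    rw [hF0] at this; exact this
  rcases le_total 0 t with h | h
  · exact key t h
  · have heq : F t = F (-t) := by
      simp only [hF, Real.cosh_neg, Real.sinh_neg]
      ring
    rw [show (t^2/2 * cosh t + cosh t * log (cosh t) - t * sinh t) = F t from rfl, heq]
    exact key (-t) (by linarith)

private lemma E2_exp_symm (c t : ℝ) :
    E2 (exp (c+t)) (exp (c-t)) ≤ (1/8) * ((c+t)-(c-t))^2 * (exp (c+t) + exp (c-t)) := by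
  have hL : t * sinh t - cosh t * log (cosh t) ≤ t^2/2 * cosh t := by
    have := psiF_nonneg t; linarith
  have hsum : exp (c+t) + exp (c-t) = exp c * (2 * cosh t) := by
    rw [show c - t = c + (-t) by ring, Real.exp_add, Real.exp_add, Real.cosh_eq]
    ring
  have hlog : log ((exp (c+t) + exp (c-t)) / 2) = c + log (cosh t) := by
    rw [hsum, show exp c * (2 * cosh t) / 2 = exp c * cosh t by ring,
      Real.log_mul (Real.exp_pos c).ne' (Real.cosh_pos t).ne', Real.log_exp]
  have hU : exp (c+t) = exp c * (cosh t + sinh t) := by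
    rw [Real.exp_add, Real.cosh_add_sinh]
  have hV : exp (c-t) = exp c * (cosh t - sinh t) := by
    rw [show c - t = c + (-t) by ring, Real.exp_add, Real.cosh_sub_sinh]
  rw [E2, Real.log_exp, Real.log_exp, hlog, hU, hV]
  have hmul := mul_le_mul_of_nonneg_left hL (Real.exp_pos c).le
  nlinarith [hmul]


private lemma logsum2 {a1 a2 b1 b2 : ℝ} (ha1 : 0 < a1) (ha2 : 0 < a2)
    (hb1 : 0 < b1) (hb2 : 0 < b2) :
    (a1 + a2) * log ((a1 + a2) / (b1 + b2)) ≤ a1 * log (a1 / b1) + a2 * log (a2 / b2) := by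
  have hA : (0:ℝ) < a1 + a2 := by linarith
  have hB : (0:ℝ) < b1 + b2 := by linarith
  have key : ∀ a b : ℝ, 0 < a → 0 < b →
      a * (log ((a1+a2)/(b1+b2)) - log (a / b)) ≤ b * ((a1+a2)/(b1+b2)) - a := by
    intro a b ha hb
    have h1 : log ((b/a) * ((a1+a2)/(b1+b2))) ≤ (b/a) * ((a1+a2)/(b1+b2)) - 1 :=
      log_le_sub_one_of_pos (by positivity)
    have h2 : log ((b/a) * ((a1+a2)/(b1+b2))) = log ((a1+a2)/(b1+b2)) - log (a/b) := by
      rw [Real.log_mul (by positivity) (by positivity), Real.log_div ha.ne' hb.ne',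
        Real.log_div hb.ne' ha.ne']
      ring
    rw [h2] at h1
    have := mul_le_mul_of_nonneg_left h1 ha.le
    calc a * (log ((a1+a2)/(b1+b2)) - log (a / b))
        ≤ a * ((b/a) * ((a1+a2)/(b1+b2)) - 1) := this
      _ = b * ((a1+a2)/(b1+b2)) - a := by field_simp
  have k1 := key a1 b1 ha1 hb1
  have k2 := key a2 b2 ha2 hb2
  have hq : (b1 + b2) * ((a1+a2)/(b1+b2)) = a1 + a2 := by field_simp
  nlinarith [k1, k2]

private lemma E2_repr {u v : ℝ} (hu : 0 < u) (hv : 0 < v) :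
    E2 u v = u * log (u / ((u+v)/2)) + v * log (v / ((u+v)/2)) := by
  have hm : (0:ℝ) < (u+v)/2 := by linarith
  rw [E2, Real.log_div hu.ne' hm.ne', Real.log_div hv.ne' hm.ne']
  ring

private lemma E2_add_le {u1 v1 u2 v2 : ℝ} (hu1 : 0 < u1) (hv1 : 0 < v1)
    (hu2 : 0 < u2) (hv2 : 0 < v2) :
    E2 (u1 + u2) (v1 + v2) ≤ E2 u1 v1 + E2 u2 v2 := by
  have hm1 : (0:ℝ) < (u1+v1)/2 := by linarith
  have hm2 : (0:ℝ) < (u2+v2)/2 := by linarith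
  have e0 := E2_repr (by linarith : (0:ℝ) < u1 + u2) (by linarith : (0:ℝ) < v1 + v2)
  have e1 := E2_repr hu1 hv1
  have e2 := E2_repr hu2 hv2
  have hM : (u1 + u2 + (v1 + v2))/2 = (u1+v1)/2 + ((u2+v2)/2) := by ring
  have l1 := logsum2 hu1 hu2 hm1 hm2
  have l2 := logsum2 hv1 hv2 hm1 hm2
  rw [e0, e1, e2, hM]
  linarith

private lemma E2_sum_le {ι : Type*} {s : Finset ι} (hs : s.Nonempty) (u v : ι → ℝ)
    (hu : ∀ i ∈ s, 0 < u i) (hv : ∀ i ∈ s, 0 < v i) :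
    E2 (∑ i ∈ s, u i) (∑ i ∈ s, v i) ≤ ∑ i ∈ s, E2 (u i) (v i) := by
  induction hs using Finset.Nonempty.cons_induction with
  | singleton a => simp
  | cons a s ha hs ih =>
    simp only [Finset.sum_cons]
    have hus : (0:ℝ) < ∑ i ∈ s, u i :=
      Finset.sum_pos (fun i hi => hu i (Finset.mem_cons_of_mem hi)) hs
    have hvs : (0:ℝ) < ∑ i ∈ s, v i :=
      Finset.sum_pos (fun i hi => hv i (Finset.mem_cons_of_mem hi)) hs
    calc E2 (u a + ∑ i ∈ s, u i) (v a + ∑ i ∈ s, v i)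
        ≤ E2 (u a) (v a) + E2 (∑ i ∈ s, u i) (∑ i ∈ s, v i) :=
          E2_add_le (hu a (Finset.mem_cons_self a s)) (hv a (Finset.mem_cons_self a s)) hus hvs
      _ ≤ E2 (u a) (v a) + ∑ i ∈ s, E2 (u i) (v i) := by
          have := ih (fun i hi => hu i (Finset.mem_cons_of_mem hi))
            (fun i hi => hv i (Finset.mem_cons_of_mem hi))
          linarith

private lemma E2_exp_le (a b : ℝ) :
    E2 (exp a) (exp b) ≤ (1/8) * (a - b)^2 * (exp a + exp b) := by
  have h := E2_exp_symm ((a+b)/2) ((a-b)/2)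
  rw [show (a+b)/2 + (a-b)/2 = a by ring, show (a+b)/2 - (a-b)/2 = b by ring] at h
  exact h

private lemma lsi_core : ∀ (n : ℕ) (f : (Fin n → Bool) → ℝ),
    (∑ x, f x * exp (f x)) - (∑ x, exp (f x)) * log ((∑ x, exp (f x)) / (2:ℝ)^n) ≤
      (1/8) * ∑ x, exp (f x) * ∑ i, (f (Function.update x i (!(x i))) - f x)^2 := by
  intro n
  induction n with
  | zero =>
    intro f
    have hu : ∀ g : (Fin 0 → Bool) → ℝ, ∑ x, g x = g default := by
      intro g; rw [Fintype.sum_unique g]; congr 1; exact Subsingleton.elim _ _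
    rw [hu, hu, hu]
    simp [Real.log_exp, mul_comm]
  | succ n ih =>
    intro f
    have hsplit : ∀ h : (Fin (n+1) → Bool) → ℝ,
        ∑ x, h x = (∑ y : Fin n → Bool, h (Fin.cons true y))
          + (∑ y : Fin n → Bool, h (Fin.cons false y)) := by
      intro h
      rw [← Equiv.sum_comp (Fin.consEquiv fun _ => Bool) h, Fintype.sum_prod_type,
        Fintype.sum_bool]
      rfl
    have hgamma : ∀ (b : Bool) (y : Fin n → Bool),
        (∑ i : Fin (n+1), (f (Function.update (Fin.cons b y : Fin (n+1) → Bool) i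
            (!((Fin.cons b y : Fin (n+1) → Bool) i))) - f (Fin.cons b y))^2)
        = (f (Fin.cons (!b) y) - f (Fin.cons b y))^2
          + ∑ i : Fin n, (f (Fin.cons b (Function.update y i (!(y i)))) - f (Fin.cons b y))^2 := by
      intro b y
      rw [Fin.sum_univ_succ]
      congr 1
      · rw [Fin.cons_zero, Fin.update_cons_zero]
      · apply Finset.sum_congr rfl; intro i _
        rw [Fin.cons_succ, ← Fin.cons_update]
    -- split the three sums
    have hsplit1 : (∑ x, f x * exp (f x))
        = (∑ y : Fin n → Bool, f (Fin.cons true y) * exp (f (Fin.cons true y)))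
          + (∑ y : Fin n → Bool, f (Fin.cons false y) * exp (f (Fin.cons false y))) :=
      hsplit _
    have hsplit2 : (∑ x, exp (f x))
        = (∑ y : Fin n → Bool, exp (f (Fin.cons true y)))
          + (∑ y : Fin n → Bool, exp (f (Fin.cons false y))) :=
      hsplit _
    have hsplit3 : (∑ x, exp (f x) * ∑ i, (f (Function.update x i (!(x i))) - f x)^2)
        = (∑ y : Fin n → Bool, exp (f (Fin.cons true y)) *
            ((f (Fin.cons false y) - f (Fin.cons true y))^2
              + ∑ i : Fin n, (f (Fin.cons true (Function.update y i (!(y i))))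
                  - f (Fin.cons true y))^2))
          + (∑ y : Fin n → Bool, exp (f (Fin.cons false y)) *
            ((f (Fin.cons true y) - f (Fin.cons false y))^2
              + ∑ i : Fin n, (f (Fin.cons false (Function.update y i (!(y i))))
                  - f (Fin.cons false y))^2)) := by
      rw [hsplit (fun x => exp (f x) * ∑ i, (f (Function.update x i (!(x i))) - f x)^2)]
      simp only [hgamma, Bool.not_true, Bool.not_false]
    have hS1pos : (0:ℝ) < ∑ y : Fin n → Bool, exp (f (Fin.cons true y)) :=
      Finset.sum_pos (fun y _ => exp_pos _) Finset.univ_nonempty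
    have hS0pos : (0:ℝ) < ∑ y : Fin n → Bool, exp (f (Fin.cons false y)) :=
      Finset.sum_pos (fun y _ => exp_pos _) Finset.univ_nonempty
    have hN : (0:ℝ) < (2:ℝ)^n := by positivity
    have IH1 : (∑ y : Fin n → Bool, f (Fin.cons true y) * exp (f (Fin.cons true y)))
        - (∑ y : Fin n → Bool, exp (f (Fin.cons true y)))
          * log ((∑ y : Fin n → Bool, exp (f (Fin.cons true y))) / (2:ℝ)^n)
        ≤ (1/8) * ∑ y : Fin n → Bool, exp (f (Fin.cons true y)) *
            ∑ i : Fin n, (f (Fin.cons true (Function.update y i (!(y i))))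
              - f (Fin.cons true y))^2 :=
      ih (fun y => f (Fin.cons true y))
    have IH0 : (∑ y : Fin n → Bool, f (Fin.cons false y) * exp (f (Fin.cons false y)))
        - (∑ y : Fin n → Bool, exp (f (Fin.cons false y)))
          * log ((∑ y : Fin n → Bool, exp (f (Fin.cons false y))) / (2:ℝ)^n)
        ≤ (1/8) * ∑ y : Fin n → Bool, exp (f (Fin.cons false y)) *
            ∑ i : Fin n, (f (Fin.cons false (Function.update y i (!(y i))))
              - f (Fin.cons false y))^2 :=
      ih (fun y => f (Fin.cons false y))
    -- E2 chain
    have hE2 : E2 (∑ y : Fin n → Bool, exp (f (Fin.cons true y)))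
          (∑ y : Fin n → Bool, exp (f (Fin.cons false y)))
        ≤ (1/8) * ∑ y : Fin n → Bool, (f (Fin.cons true y) - f (Fin.cons false y))^2
            * (exp (f (Fin.cons true y)) + exp (f (Fin.cons false y))) := by
      have step1 := E2_sum_le (s := Finset.univ) Finset.univ_nonempty
        (fun y => exp (f (Fin.cons true y))) (fun y => exp (f (Fin.cons false y)))
        (fun y _ => exp_pos _) (fun y _ => exp_pos _)
      have step2 : (∑ y : Fin n → Bool, E2 (exp (f (Fin.cons true y))) (exp (f (Fin.cons false y))))
          ≤ ∑ y : Fin n → Bool, (1/8) * (f (Fin.cons true y) - f (Fin.cons false y))^2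
              * (exp (f (Fin.cons true y)) + exp (f (Fin.cons false y))) :=
        Finset.sum_le_sum fun y _ => E2_exp_le _ _
      have step3 : (∑ y : Fin n → Bool, (1/8) * (f (Fin.cons true y) - f (Fin.cons false y))^2
              * (exp (f (Fin.cons true y)) + exp (f (Fin.cons false y))))
          = (1/8) * ∑ y : Fin n → Bool, (f (Fin.cons true y) - f (Fin.cons false y))^2
              * (exp (f (Fin.cons true y)) + exp (f (Fin.cons false y))) := by
        rw [Finset.mul_sum]
        exact Finset.sum_congr rfl fun y _ => by ring
      linarith
    -- distribute products in hsplit3 slices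
    have hdist1 : (∑ y : Fin n → Bool, exp (f (Fin.cons true y)) *
          ((f (Fin.cons false y) - f (Fin.cons true y))^2
            + ∑ i : Fin n, (f (Fin.cons true (Function.update y i (!(y i))))
                - f (Fin.cons true y))^2))
        = (∑ y : Fin n → Bool, (f (Fin.cons true y) - f (Fin.cons false y))^2
            * exp (f (Fin.cons true y)))
          + ∑ y : Fin n → Bool, exp (f (Fin.cons true y)) *
              ∑ i : Fin n, (f (Fin.cons true (Function.update y i (!(y i))))
                - f (Fin.cons true y))^2 := by
      rw [← Finset.sum_add_distrib]
      apply Finset.sum_congr rfl; intro y _; ring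
    have hdist0 : (∑ y : Fin n → Bool, exp (f (Fin.cons false y)) *
          ((f (Fin.cons true y) - f (Fin.cons false y))^2
            + ∑ i : Fin n, (f (Fin.cons false (Function.update y i (!(y i))))
                - f (Fin.cons false y))^2))
        = (∑ y : Fin n → Bool, (f (Fin.cons true y) - f (Fin.cons false y))^2
            * exp (f (Fin.cons false y)))
          + ∑ y : Fin n → Bool, exp (f (Fin.cons false y)) *
              ∑ i : Fin n, (f (Fin.cons false (Function.update y i (!(y i))))
                - f (Fin.cons false y))^2 := by
      rw [← Finset.sum_add_distrib]
      apply Finset.sum_congr rfl; intro y _; ring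
    have hD : (∑ y : Fin n → Bool, (f (Fin.cons true y) - f (Fin.cons false y))^2
            * (exp (f (Fin.cons true y)) + exp (f (Fin.cons false y))))
        = (∑ y : Fin n → Bool, (f (Fin.cons true y) - f (Fin.cons false y))^2
            * exp (f (Fin.cons true y)))
          + ∑ y : Fin n → Bool, (f (Fin.cons true y) - f (Fin.cons false y))^2
            * exp (f (Fin.cons false y)) := by
      rw [← Finset.sum_add_distrib]
      apply Finset.sum_congr rfl; intro y _; ring
    -- log identity
    have hId : ((∑ y : Fin n → Bool, exp (f (Fin.cons true y)))
          + (∑ y : Fin n → Bool, exp (f (Fin.cons false y))))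
          * log (((∑ y : Fin n → Bool, exp (f (Fin.cons true y)))
            + (∑ y : Fin n → Bool, exp (f (Fin.cons false y)))) / (2:ℝ)^(n+1))
        = (∑ y : Fin n → Bool, exp (f (Fin.cons true y)))
            * log ((∑ y : Fin n → Bool, exp (f (Fin.cons true y))) / (2:ℝ)^n)
          + (∑ y : Fin n → Bool, exp (f (Fin.cons false y)))
            * log ((∑ y : Fin n → Bool, exp (f (Fin.cons false y))) / (2:ℝ)^n)
          - E2 (∑ y : Fin n → Bool, exp (f (Fin.cons true y)))
              (∑ y : Fin n → Bool, exp (f (Fin.cons false y))) := by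
      have hTpos : (0:ℝ) < (∑ y : Fin n → Bool, exp (f (Fin.cons true y)))
          + (∑ y : Fin n → Bool, exp (f (Fin.cons false y))) := by linarith
      rw [E2, Real.log_div hS1pos.ne' hN.ne', Real.log_div hS0pos.ne' hN.ne',
        Real.log_div hTpos.ne' (by positivity : ((2:ℝ)^(n+1)) ≠ 0),
        Real.log_div hTpos.ne' (two_ne_zero),
        pow_succ, Real.log_mul hN.ne' (two_ne_zero)]
      ring
    rw [hsplit1, hsplit2, hsplit3]
    rw [hId]
    linarith [IH1, IH0, hE2, hdist1, hdist0, hD]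


end Aux

section Main

open Real

/-- **Discrete log-Sobolev inequality on the Hamming cube for the symmetric Bernoulli
measure.** For the uniform measure `P` on `{0,1}ⁿ` and every `f : {0,1}ⁿ → ℝ`,
`D(P^{(f)} ‖ P) ≤ (1/8) E_{P^{(f)}}[(Γf)²]`, where
`(Γf)(x)² = ∑ᵢ (f(x ⊕ eᵢ) - f(x))²`. -/
theorem discrete_logSobolev_symm_bernoulli {n : ℕ} (f : (Fin n → Bool) → ℝ) :
    relEnt ((unifCube n).tilted f) (unifCube n) ≤
      ENNReal.ofReal ((1/8) *
        ∫ x, ∑ i, (f (Function.update x i (!(x i))) - f x)^2 ∂((unifCube n).tilted f)) := by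
  have hprob : IsProbabilityMeasure (unifCube n) := PMF.toMeasure.isProbabilityMeasure _
  haveI := hprob
  have hexp : Integrable (fun x => exp (f x)) (unifCube n) := Integrable.of_finite
  haveI hQprob : IsProbabilityMeasure ((unifCube n).tilted f) := isProbabilityMeasure_tilted hexp
  have hac : (unifCube n).tilted f ≪ unifCube n := tilted_absolutelyContinuous _ f
  have hint : Integrable (fun x => log ((((unifCube n).tilted f).rnDeriv (unifCube n) x).toReal))
      ((unifCube n).tilted f) := Integrable.of_finite
  unfold relEnt
  rw [if_pos ⟨hac, hint⟩]
  have hS : (0:ℝ) < ∑ x, exp (f x) :=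
    Finset.sum_pos (fun x _ => exp_pos _) Finset.univ_nonempty
  have hN : (0:ℝ) < (2:ℝ)^n := by positivity
  have hcard : ((Fintype.card (Fin n → Bool) : ℝ)) = (2:ℝ)^n := by
    simp [Fintype.card_fun]
  have hZ : ∫ x, exp (f x) ∂(unifCube n) = (∑ x, exp (f x)) / (2:ℝ)^n := by
    rw [unifCube, PMF.integral_eq_sum, eq_div_iff hN.ne', Finset.sum_mul]
    apply Finset.sum_congr rfl
    intro x _
    simp only [PMF.uniformOfFintype_apply, smul_eq_mul, ENNReal.toReal_inv,
      ENNReal.toReal_natCast, hcard]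
    field_simp
  have hsum : ∀ g : (Fin n → Bool) → ℝ, ∫ x, g x ∂((unifCube n).tilted f)
      = (∑ x, exp (f x) * g x) / (∑ x, exp (f x)) := by
    intro g
    rw [integral_tilted, hZ]
    rw [unifCube, PMF.integral_eq_sum, eq_div_iff hS.ne', Finset.sum_mul]
    apply Finset.sum_congr rfl
    intro x _
    simp only [PMF.uniformOfFintype_apply, smul_eq_mul, ENNReal.toReal_inv,
      ENNReal.toReal_natCast, hcard]
    rw [div_div_eq_mul_div, div_mul_eq_mul_div, mul_comm]
    field_simp
  have hlogrn : ∫ x, log ((((unifCube n).tilted f).rnDeriv (unifCube n) x).toReal)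
        ∂((unifCube n).tilted f)
      = (∫ x, f x ∂((unifCube n).tilted f)) - log ((∑ x, exp (f x)) / (2:ℝ)^n) := by
    rw [integral_congr_ae ((log_rnDeriv_tilted_left_self hexp).filter_mono hac.ae_le)]
    rw [integral_sub Integrable.of_finite (integrable_const _), integral_const]
    simp [hZ]
  rw [hlogrn]
  apply ENNReal.ofReal_le_ofReal
  rw [hsum, hsum]
  have h2 := (div_le_div_iff_of_pos_right hS).mpr (lsi_core n f)
  have hcomm : (∑ x, exp (f x) * f x) = ∑ x, f x * exp (f x) :=
    Finset.sum_congr rfl fun x _ => mul_comm _ _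
  have e1 : ((∑ x, f x * exp (f x)) - (∑ x, exp (f x)) * log ((∑ x, exp (f x)) / (2:ℝ)^n))
        / (∑ x, exp (f x))
      = (∑ x, exp (f x) * f x) / (∑ x, exp (f x)) - log ((∑ x, exp (f x)) / (2:ℝ)^n) := by
    rw [hcomm]
    field_simp
  have e2 : ((1/8) * ∑ x, exp (f x) * ∑ i, (f (Function.update x i (!(x i))) - f x)^2)
        / (∑ x, exp (f x))
      = (1/8) * ((∑ x, exp (f x) * ∑ i, (f (Function.update x i (!(x i))) - f x)^2)
        / (∑ x, exp (f x))) := by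
    ring
  linarith [h2, e1, e2]

end Main
end

section
/- Let p ∈ (0,1), q = 1 − p, and let P be the law of n i.i.d. Bernoulli(p) random variables on {0,1}^n. Let f : {0,1}^n → ℝ be any function for which there exists c > 0 such that max_{1 ≤ i ≤ n} |f(x ⊕ e_i) − f(x)| ≤ c for all x ∈ {0,1}^n. For f : {0,1}^n → ℝ define Γf(x) = sqrt(Σ_{i=1}^n (f(x ⊕ e_i) − f(x))²), where e_i ∈ {0,1}^n has a 1 in position i and zeros elsewhere and ⊕ is componentwise modulo-2 addition. Then D(P^{(f)} ‖ P) ≤ pq · ((c−1)e^c + 1)/c² · E_P^{(f)}[(Γf)²]. -/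
open MeasureTheory ProbabilityTheory
open scoped ENNReal NNReal Classical

/-- The Bernoulli(p) probability measure on `Bool` (`true` has probability `p`). -/
noncomputable def bernoulliMeasure (p : ℝ) : Measure Bool :=
  ENNReal.ofReal p • Measure.dirac true + ENNReal.ofReal (1 - p) • Measure.dirac false


open Real
section Analysis

lemma nonneg_of_hasDerivAt {f f' : ℝ → ℝ} (hf : ∀ x, HasDerivAt f (f' x) x)
    (h' : ∀ x, 0 ≤ x → 0 ≤ f' x) (h0 : f 0 = 0) {d : ℝ} (hd : 0 ≤ d) : 0 ≤ f d := by
  have hmono : MonotoneOn f (Set.Ici 0) := by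
    apply monotoneOn_of_deriv_nonneg (convex_Ici 0)
    · exact fun x _ => (hf x).continuousAt.continuousWithinAt
    · exact fun x hx => (hf x).differentiableAt.differentiableWithinAt
    · intro x hx
      rw [interior_Ici] at hx
      rw [(hf x).deriv]
      exact h' x (le_of_lt hx)
  have := hmono (Set.self_mem_Ici) (by exact hd) hd
  linarith [h0 ▸ this]

variable {p : ℝ}

private lemma A_pos (hp0 : 0 < p) (hp1 : p < 1) (d : ℝ) : 0 < p * exp d + (1 - p) :=
  add_pos (mul_pos hp0 (exp_pos d)) (by linarith)

private lemma V_nonneg (hp0 : 0 < p) (hp1 : p < 1) {d : ℝ} (hd : 0 ≤ d) :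
    0 ≤ (1-p)*exp d + 2*(1-p)*(d*exp d) - 1 - (1-p) + exp d / (p*exp d + (1-p)) := by
  have hA := fun d => A_pos hp0 hp1 d
  refine nonneg_of_hasDerivAt
    (f := fun d => (1-p)*exp d + 2*(1-p)*(d*exp d) - 1 - (1-p) + exp d / (p*exp d + (1-p)))
    (f' := fun d => 3*(1-p)*exp d + 2*(1-p)*(d*exp d) + (1-p)*exp d/(p*exp d + (1-p))^2)
    ?_ ?_ ?_ hd
  · intro x
    have hexp := Real.hasDerivAt_exp x
    have hAx : HasDerivAt (fun d => p*exp d + (1-p)) (p * exp x) x :=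
      (hexp.const_mul p).add_const _
    have hbuilt := ((((hexp.const_mul ((1:ℝ)-p)).add
        (((hasDerivAt_id' x).mul hexp).const_mul (2*(1-p)))).sub_const 1).sub_const
        ((1:ℝ)-p)).add (hexp.div hAx (hA x).ne')
    refine hbuilt.congr_deriv ?_
    field_simp [(hA x).ne']
    ring
  · intro x hx
    have h1 : (0:ℝ) ≤ 1 - p := by linarith
    have h2 : (0:ℝ) ≤ exp x := (exp_pos x).le
    have h3 : (0:ℝ) ≤ x * exp x := mul_nonneg hx h2
    have h4 : (0:ℝ) ≤ (1-p)*exp x/(p*exp x + (1-p))^2 :=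
      div_nonneg (mul_nonneg h1 h2) (sq_nonneg _)
    nlinarith
  · have h1 : p * exp 0 + (1 - p) = 1 := by rw [Real.exp_zero]; ring
    simp only [h1]
    norm_num [Real.exp_zero]
    ring

private lemma W_nonneg (hp0 : 0 < p) (hp1 : p < 1) {d : ℝ} (hd : 0 ≤ d) :
    0 ≤ (1-p)*(d*(p*exp d + (1-p))) + p*(1-p)*((d-1)*exp d + 1) - d
      + log (p*exp d + (1-p)) := by
  have hA := fun d => A_pos hp0 hp1 d
  refine nonneg_of_hasDerivAt
    (f := fun d => (1-p)*(d*(p*exp d + (1-p))) + p*(1-p)*((d-1)*exp d + 1) - d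
      + log (p*exp d + (1-p)))
    (f' := fun d =>
      p * ((1-p)*exp d + 2*(1-p)*(d*exp d) - 1 - (1-p) + exp d / (p*exp d + (1-p))))
    ?_ ?_ ?_ hd
  · intro x
    have hexp := Real.hasDerivAt_exp x
    have hAx : HasDerivAt (fun d => p*exp d + (1-p)) (p * exp x) x :=
      (hexp.const_mul p).add_const _
    have hbuilt := (((((hasDerivAt_id' x).mul hAx).const_mul ((1:ℝ)-p)).add
        (((((hasDerivAt_id' x).sub_const 1).mul hexp).add_const 1).const_mul (p*(1-p)))).sub
        (hasDerivAt_id' x)).add (hAx.log (hA x).ne')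
    refine hbuilt.congr_deriv ?_
    field_simp [(hA x).ne']
    ring
  · intro x hx
    exact mul_nonneg hp0.le (V_nonneg hp0 hp1 hx)
  · have h1 : p * exp 0 + (1 - p) = 1 := by rw [Real.exp_zero]; ring
    simp only [h1]
    norm_num [Real.exp_zero, Real.log_one]

private lemma E_nonneg (hp0 : 0 < p) (hp1 : p < 1) {d : ℝ} (hd : 0 ≤ d) :
    0 ≤ p*(1-p)*(((d-1)*exp d + 1) * (p*exp d + (1-p))) - p*(d*exp d)
      + (p*exp d + (1-p)) * log (p*exp d + (1-p)) := by
  have hA := fun d => A_pos hp0 hp1 d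
  refine nonneg_of_hasDerivAt
    (f := fun d => p*(1-p)*(((d-1)*exp d + 1) * (p*exp d + (1-p))) - p*(d*exp d)
      + (p*exp d + (1-p)) * log (p*exp d + (1-p)))
    (f' := fun d =>
      p * exp d * ((1-p)*(d*(p*exp d + (1-p))) + p*(1-p)*((d-1)*exp d + 1) - d
        + log (p*exp d + (1-p))))
    ?_ ?_ ?_ hd
  · intro x
    have hexp := Real.hasDerivAt_exp x
    have hAx : HasDerivAt (fun d => p*exp d + (1-p)) (p * exp x) x :=
      (hexp.const_mul p).add_const _
    have hpsi : HasDerivAt (fun d => (d-1)*exp d + 1) ((1*exp x + (x-1)*exp x)) x :=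
      (((hasDerivAt_id' x).sub_const 1).mul hexp).add_const 1
    have hbuilt := (((hpsi.mul hAx).const_mul (p*((1:ℝ)-p))).sub
        (((hasDerivAt_id' x).mul hexp).const_mul p)).add (hAx.mul (hAx.log (hA x).ne'))
    refine hbuilt.congr_deriv ?_
    field_simp [(hA x).ne']
    ring
  · intro x hx
    exact mul_nonneg (mul_nonneg hp0.le (exp_pos x).le) (W_nonneg hp0 hp1 hx)
  · have h1 : p * exp 0 + (1 - p) = 1 := by rw [Real.exp_zero]; ring
    simp only [h1]
    norm_num [Real.exp_zero, Real.log_one]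

end Analysis
section OneDim
open Real

variable {p : ℝ}

private lemma claimD (hp0 : 0 < p) (hp1 : p < 1) (d : ℝ) :
    p*d*exp d - (p*exp d + (1-p))*log (p*exp d + (1-p))
      ≤ p*(1-p)*((|d|-1)*exp |d| + 1)*(p*exp d + (1-p)) := by
  rcases le_or_gt 0 d with hd | hd
  · rw [abs_of_nonneg hd]
    have := E_nonneg hp0 hp1 hd
    nlinarith [this]
  · rw [abs_of_neg hd]
    have key := E_nonneg (p := 1-p) (by linarith) (by linarith) (d := -d) (by linarith)
    rw [show (1:ℝ) - (1-p) = p by ring] at key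
    rw [Real.exp_neg] at key
    have hE1pos := exp_pos d
    have hE1ne := (exp_pos d).ne'
    have hA := A_pos hp0 hp1 d
    have hA2 : (1-p) * (exp d)⁻¹ + p = (exp d)⁻¹ * (p * exp d + (1-p)) := by
      field_simp
      ring
    rw [hA2] at key
    rw [Real.log_mul (inv_ne_zero hE1ne) hA.ne', Real.log_inv, Real.log_exp] at key
    -- key : 0 ≤ X where X is the transported quantity
    have key2 := mul_nonneg hE1pos.le key
    have hgap : p*(1-p)*((-d-1)*exp (-d) + 1)*(p*exp d + (1-p))
        - (p*d*exp d - (p*exp d + (1-p))*log (p*exp d + (1-p)))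
        = exp d * ((1-p)*p*(((-d-1)*(exp d)⁻¹ + 1) * ((exp d)⁻¹*(p*exp d + (1-p))))
          - (1-p)*(-d*(exp d)⁻¹)
          + (exp d)⁻¹*(p*exp d + (1-p)) * (-d + log (p*exp d + (1-p)))) := by
      rw [Real.exp_neg]
      field_simp
      ring
    linarith [key2, hgap]

private lemma psi_aux {v : ℝ} (hv : 0 ≤ v) : 0 ≤ exp v * (v^2 - 2*v + 2) - 2 := by
  refine nonneg_of_hasDerivAt (f := fun v => exp v * (v^2 - 2*v + 2) - 2)
    (f' := fun v => v^2 * exp v) ?_ (fun x hx => by positivity) ?_ hv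
  · intro x
    have hexp := Real.hasDerivAt_exp x
    have hquad : HasDerivAt (fun v : ℝ => v^2 - 2*v + 2) (2*x - 2) x := by
      have := ((hasDerivAt_pow 2 x).sub (((hasDerivAt_id' x)).const_mul 2)).add_const 2
      refine this.congr_deriv ?_
      push_cast
      ring
    have hbuilt := (hexp.mul hquad).sub_const 2
    refine hbuilt.congr_deriv ?_
    ring
  · norm_num [Real.exp_zero]

private lemma psi_ratio {u c : ℝ} (hu : 0 < u) (huc : u ≤ c) :
    ((u-1)*exp u + 1) * c^2 ≤ ((c-1)*exp c + 1) * u^2 := by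
  have hc : 0 < c := lt_of_lt_of_le hu huc
  have hder : ∀ x : ℝ, 0 < x → HasDerivAt (fun u => ((u-1)*exp u + 1)/u^2)
      (((1*exp x + (x-1)*exp x)*x^2 - ((x-1)*exp x + 1)*(↑2*x^1))/(x^2)^2) x := by
    intro x hx
    have hexp := Real.hasDerivAt_exp x
    have hpsi : HasDerivAt (fun u : ℝ => (u-1)*exp u + 1) (1*exp x + (x-1)*exp x) x :=
      (((hasDerivAt_id' x).sub_const 1).mul hexp).add_const 1
    exact hpsi.div (hasDerivAt_pow 2 x) (pow_ne_zero 2 hx.ne')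
  have hmono : MonotoneOn (fun u : ℝ => ((u-1)*exp u + 1)/u^2) (Set.Ioi 0) := by
    apply monotoneOn_of_deriv_nonneg (convex_Ioi 0)
    · apply ContinuousOn.div
      · fun_prop
      · fun_prop
      · exact fun x hx => pow_ne_zero 2 (ne_of_gt hx)
    · intro x hx
      rw [interior_Ioi] at hx
      exact (hder x hx).differentiableAt.differentiableWithinAt
    · intro x hx
      rw [interior_Ioi] at hx
      rw [(hder x hx).deriv]
      apply div_nonneg _ (by positivity)
      have haux := psi_aux hx.le
      have hnn : 0 ≤ x * (exp x * (x^2 - 2*x + 2) - 2) := mul_nonneg hx.le haux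
      nlinarith [hnn]
  have h2 := hmono (Set.mem_Ioi.mpr hu) (Set.mem_Ioi.mpr hc) huc
  rw [div_le_div_iff₀ (by positivity) (by positivity)] at h2
  linarith [h2]

private lemma onedim (hp0 : 0 < p) (hp1 : p < 1) {c d : ℝ} (hc : 0 < c) (hd : |d| ≤ c) :
    p*d*exp d - (p*exp d + (1-p))*log (p*exp d + (1-p))
      ≤ p*(1-p)*(((c-1)*exp c + 1)/c^2)*d^2*(p*exp d + (1-p)) := by
  have hA := A_pos hp0 hp1 d
  have hD := claimD hp0 hp1 d
  have hpsile : ((|d|-1)*exp |d| + 1) ≤ ((c-1)*exp c + 1)/c^2*d^2 := by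
    rcases eq_or_ne d 0 with h0 | h0
    · simp [h0, Real.exp_zero]
    · have habs : 0 < |d| := abs_pos.mpr h0
      have hr := psi_ratio habs hd
      rw [div_mul_eq_mul_div, le_div_iff₀ (by positivity)]
      calc ((|d|-1)*exp |d| + 1) * c^2 ≤ ((c-1)*exp c + 1) * |d|^2 := hr
        _ = ((c-1)*exp c + 1) * d^2 := by rw [sq_abs]
  calc p*d*exp d - (p*exp d + (1-p))*log (p*exp d + (1-p))
      ≤ p*(1-p)*((|d|-1)*exp |d| + 1)*(p*exp d + (1-p)) := hD
    _ ≤ p*(1-p)*(((c-1)*exp c + 1)/c^2*d^2)*(p*exp d + (1-p)) := by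
        apply mul_le_mul_of_nonneg_right _ hA.le
        exact mul_le_mul_of_nonneg_left hpsile
          (mul_nonneg hp0.le (by linarith))
    _ = p*(1-p)*(((c-1)*exp c + 1)/c^2)*d^2*(p*exp d + (1-p)) := by ring

end OneDim
section Ent2
open Real

/-- two-point entropy functional with weights `(1-p, p)` on `(false, true)` values `(a,b)`. -/
noncomputable def ent2 (p a b : ℝ) : ℝ :=
  (1-p)*(a*log a) + p*(b*log b) - ((1-p)*a + p*b)*log ((1-p)*a + p*b)

variable {p : ℝ}

private lemma ent2_le (hp0 : 0 < p) (hp1 : p < 1) {c : ℝ} (hc : 0 < c) {a b : ℝ}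
    (ha : 0 < a) (hb : 0 < b) (hd : |log b - log a| ≤ c) :
    ent2 p a b ≤ p*(1-p)*(((c-1)*exp c + 1)/c^2)*(log b - log a)^2*((1-p)*a + p*b) := by
  set d := log b - log a with hdd
  have hexpd : exp d = b / a := by
    rw [hdd, Real.exp_sub, Real.exp_log hb, Real.exp_log ha]
  have hbad : b = a * exp d := by rw [hexpd]; field_simp
  have hA := A_pos hp0 hp1 d
  have hm : (1-p)*a + p*b = a * (p*exp d + (1-p)) := by rw [hbad]; ring
  have hlm : log ((1-p)*a + p*b) = log a + log (p*exp d + (1-p)) := by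
    rw [hm, Real.log_mul ha.ne' hA.ne']
  have hlb : log b = log a + d := by rw [hdd]; ring
  have key := onedim hp0 hp1 hc hd
  have key2 := mul_le_mul_of_nonneg_left key ha.le
  have hid : ent2 p a b
      = a * (p*d*exp d - (p*exp d + (1-p))*log (p*exp d + (1-p))) := by
    rw [ent2, hlm, hlb]
    rw [hbad]
    ring
  have hid2 : p*(1-p)*(((c-1)*exp c + 1)/c^2)*d^2*((1-p)*a + p*b)
      = a * (p*(1-p)*(((c-1)*exp c + 1)/c^2)*d^2*(p*exp d + (1-p))) := by
    rw [hm]; ring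
  rw [hid, hid2]
  exact key2

private lemma log_sum_two {x₁ x₂ y₁ y₂ : ℝ} (hx₁ : 0 < x₁) (hx₂ : 0 < x₂)
    (hy₁ : 0 < y₁) (hy₂ : 0 < y₂) :
    (x₁+x₂) * (log (x₁+x₂) - log (y₁+y₂))
      ≤ x₁*(log x₁ - log y₁) + x₂*(log x₂ - log y₂) := by
  have hX : 0 < x₁ + x₂ := by linarith
  have hY : 0 < y₁ + y₂ := by linarith
  have hlb : ∀ t : ℝ, 0 < t → 1 - 1/t ≤ log t := by
    intro t ht
    have := Real.log_le_sub_one_of_pos (inv_pos.mpr ht)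
    rw [Real.log_inv] at this
    have h1t : (1:ℝ)/t = t⁻¹ := one_div t
    linarith [this]
  have h1 : 1 - (y₁*(x₁+x₂))/(x₁*(y₁+y₂)) ≤ log x₁ - log y₁ - log (x₁+x₂) + log (y₁+y₂) := by
    have ht : 0 < (x₁*(y₁+y₂))/(y₁*(x₁+x₂)) := by positivity
    have := hlb _ ht
    rw [Real.log_div (by positivity) (by positivity), Real.log_mul hx₁.ne' hY.ne',
      Real.log_mul hy₁.ne' hX.ne'] at this
    have heq : 1/((x₁*(y₁+y₂))/(y₁*(x₁+x₂))) = (y₁*(x₁+x₂))/(x₁*(y₁+y₂)) := by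
      rw [one_div, inv_div]
    rw [heq] at this
    linarith
  have h2 : 1 - (y₂*(x₁+x₂))/(x₂*(y₁+y₂)) ≤ log x₂ - log y₂ - log (x₁+x₂) + log (y₁+y₂) := by
    have ht : 0 < (x₂*(y₁+y₂))/(y₂*(x₁+x₂)) := by positivity
    have := hlb _ ht
    rw [Real.log_div (by positivity) (by positivity), Real.log_mul hx₂.ne' hY.ne',
      Real.log_mul hy₂.ne' hX.ne'] at this
    have heq : 1/((x₂*(y₁+y₂))/(y₂*(x₁+x₂))) = (y₂*(x₁+x₂))/(x₂*(y₁+y₂)) := by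
      rw [one_div, inv_div]
    rw [heq] at this
    linarith
  have h1' := mul_le_mul_of_nonneg_left h1 hx₁.le
  have h2' := mul_le_mul_of_nonneg_left h2 hx₂.le
  have hzero : x₁*(1 - (y₁*(x₁+x₂))/(x₁*(y₁+y₂))) + x₂*(1 - (y₂*(x₁+x₂))/(x₂*(y₁+y₂))) = 0 := by
    field_simp
    ring
  nlinarith [h1', h2', hzero]

/-- convexity (Jensen) for the two-point entropy functional. -/
private lemma ent2_jensen (hp0 : 0 < p) (hp1 : p < 1) {a₀ a₁ b₀ b₁ : ℝ}
    (ha₀ : 0 < a₀) (ha₁ : 0 < a₁) (hb₀ : 0 < b₀) (hb₁ : 0 < b₁) :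
    ent2 p ((1-p)*a₀ + p*a₁) ((1-p)*b₀ + p*b₁)
      ≤ (1-p) * ent2 p a₀ b₀ + p * ent2 p a₁ b₁ := by
  have hq : (0:ℝ) < 1 - p := by linarith
  have hm₀ : 0 < (1-p)*a₀ + p*b₀ := by positivity
  have hm₁ : 0 < (1-p)*a₁ + p*b₁ := by positivity
  have hAbar : 0 < (1-p)*a₀ + p*a₁ := by positivity
  have hBbar : 0 < (1-p)*b₀ + p*b₁ := by positivity
  -- rewrite ent2 in "relative" form and apply log_sum_two twice
  have hT1 := log_sum_two (mul_pos hq ha₀) (mul_pos hp0 ha₁) (mul_pos hq hm₀) (mul_pos hp0 hm₁)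
  have hT2 := log_sum_two (mul_pos hq hb₀) (mul_pos hp0 hb₁) (mul_pos hq hm₀) (mul_pos hp0 hm₁)
  -- clean up the scaled logs
  rw [Real.log_mul hq.ne' ha₀.ne', Real.log_mul hp0.ne' ha₁.ne',
    Real.log_mul hq.ne' hm₀.ne', Real.log_mul hp0.ne' hm₁.ne'] at hT1
  rw [Real.log_mul hq.ne' hb₀.ne', Real.log_mul hp0.ne' hb₁.ne',
    Real.log_mul hq.ne' hm₀.ne', Real.log_mul hp0.ne' hm₁.ne'] at hT2
  -- identify the mixed denominators
  have hmix : (1-p)*((1-p)*a₀ + p*b₀) + p*((1-p)*a₁ + p*b₁)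
      = (1-p)*((1-p)*a₀ + p*a₁) + p*((1-p)*b₀ + p*b₁) := by ring
  -- ent2 expansion lemma
  have expand : ∀ x y : ℝ, 0 < x → 0 < y →
      ent2 p x y = (1-p)*x*(log x - log ((1-p)*x + p*y)) + p*y*(log y - log ((1-p)*x + p*y)) := by
    intro x y hx hy
    rw [ent2]
    ring
  rw [expand _ _ hAbar hBbar, expand _ _ ha₀ hb₀, expand _ _ ha₁ hb₁]
  have hT1' := mul_le_mul_of_nonneg_left hT1 hq.le
  have hT2' := mul_le_mul_of_nonneg_left hT2 hp0.le
  -- the log of the mixture denominator for the LHS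
  have hkey : log ((1-p)*((1-p)*a₀ + p*a₁) + p*((1-p)*b₀ + p*b₁))
      = log ((1-p)*((1-p)*a₀ + p*b₀) + p*((1-p)*a₁ + p*b₁)) := by rw [← hmix]
  rw [hkey]
  nlinarith [hT1', hT2']

end Ent2
section Combinatorics
open Real

/-- weight of one Bernoulli coordinate. -/
noncomputable def nu (p : ℝ) (b : Bool) : ℝ := if b then p else 1 - p

/-- product Bernoulli weight. -/
noncomputable def wgt (p : ℝ) {n : ℕ} (x : Fin n → Bool) : ℝ := ∏ i, nu p (x i)

/-- entropy functional at the level of sums. -/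
noncomputable def EntS (p : ℝ) {n : ℕ} (h : (Fin n → Bool) → ℝ) : ℝ :=
  (∑ x, wgt p x * (h x * log (h x)))
    - (∑ x, wgt p x * h x) * log (∑ x, wgt p x * h x)

variable {p : ℝ}

private lemma nu_pos (hp0 : 0 < p) (hp1 : p < 1) (b : Bool) : 0 < nu p b := by
  cases b <;> simp [nu] <;> linarith

private lemma wgt_pos (hp0 : 0 < p) (hp1 : p < 1) {n : ℕ} (x : Fin n → Bool) :
    0 < wgt p x :=
  Finset.prod_pos fun i _ => nu_pos hp0 hp1 (x i)

private lemma wgt_cons {n : ℕ} (b : Bool) (y : Fin n → Bool) :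
    wgt p (Fin.cons b y) = nu p b * wgt p y := by
  rw [wgt, wgt, Fin.prod_univ_succ]
  simp

private lemma resample (hp0 : 0 < p) (hp1 : p < 1) {n : ℕ} (i : Fin n)
    (χ : (Fin n → Bool) → ℝ) :
    ∑ x, wgt p x * ((1-p) * χ (Function.update x i false) + p * χ (Function.update x i true))
      = ∑ x, wgt p x * χ x := by
  classical
  set e := Equiv.funSplitAt i Bool with he
  have hsymm_at : ∀ (b : Bool) (g : {j // j ≠ i} → Bool), (e.symm (b, g)) i = b := by
    intro b g
    simp [he, Equiv.funSplitAt, Equiv.piSplitAt]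
  have hsymm_ne : ∀ (b : Bool) (g : {j // j ≠ i} → Bool) (j : {j // j ≠ i}),
      (e.symm (b, g)) j.1 = g j := by
    intro b g j
    simp [he, Equiv.funSplitAt, Equiv.piSplitAt, j.2]
  have hupdate : ∀ (b b' : Bool) (g : {j // j ≠ i} → Bool),
      Function.update (e.symm (b, g)) i b' = e.symm (b', g) := by
    intro b b' g
    funext j
    rcases eq_or_ne j i with rfl | hji
    · rw [Function.update_self, hsymm_at]
    · rw [Function.update_of_ne hji]
      rw [hsymm_ne b g ⟨j, hji⟩, hsymm_ne b' g ⟨j, hji⟩]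
  have hwgt : ∀ (b : Bool) (g : {j // j ≠ i} → Bool),
      wgt p (e.symm (b, g)) = nu p b * ∏ j : {j // j ≠ i}, nu p (g j) := by
    intro b g
    rw [wgt, ← Finset.mul_prod_erase Finset.univ _ (Finset.mem_univ i), hsymm_at]
    congr 1
    rw [Finset.prod_subtype (Finset.univ.erase i)
      (fun j => by simp : ∀ j : Fin n, j ∈ Finset.univ.erase i ↔ j ≠ i)
      (fun j => nu p ((e.symm (b, g)) j))]
    exact Fintype.prod_congr _ _ fun j => by rw [hsymm_ne]
  rw [← Equiv.sum_comp e.symm (fun x => wgt p x *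
        ((1-p) * χ (Function.update x i false) + p * χ (Function.update x i true))),
    ← Equiv.sum_comp e.symm (fun x => wgt p x * χ x)]
  rw [Fintype.sum_prod_type, Fintype.sum_prod_type, Fintype.sum_bool, Fintype.sum_bool,
    ← Finset.sum_add_distrib, ← Finset.sum_add_distrib]
  apply Finset.sum_congr rfl
  intro g _
  simp only [hupdate, hwgt]
  simp [nu]
  ring

private lemma sum_cons_eq {n : ℕ} (F : (Fin (n+1) → Bool) → ℝ) :
    ∑ x, wgt p x * F x
      = ∑ y, wgt p y * ((1-p) * F (Fin.cons false y) + p * F (Fin.cons true y)) := by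
  classical
  rw [← Equiv.sum_comp (Fin.consEquiv (fun _ : Fin (n+1) => Bool)) (fun x => wgt p x * F x),
    Fintype.sum_prod_type, Fintype.sum_bool, ← Finset.sum_add_distrib]
  apply Finset.sum_congr rfl
  intro y _
  have hce : ∀ b : Bool, (Fin.consEquiv fun _ : Fin (n+1) => Bool) (b, y) = Fin.cons b y :=
    fun b => rfl
  rw [hce, hce, wgt_cons, wgt_cons]
  simp [nu]
  ring

private lemma tensorization (hp0 : 0 < p) (hp1 : p < 1) :
    ∀ {n : ℕ} (h : (Fin n → Bool) → ℝ), (∀ x, 0 < h x) →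
      EntS p h ≤ ∑ i, ∑ x, wgt p x *
        ent2 p (h (Function.update x i false)) (h (Function.update x i true)) := by
  intro n
  induction n with
  | zero =>
    intro h hpos
    have huniq : ∀ g : (Fin 0 → Bool) → ℝ, ∑ x, g x = g (fun i => i.elim0) := by
      intro g
      apply Finset.sum_eq_single_of_mem _ (Finset.mem_univ _)
      intro b _ hne
      exact absurd (Subsingleton.elim b _) hne
    rw [EntS, huniq, huniq]
    have hw : wgt p (fun i : Fin 0 => i.elim0) = 1 := by
      simp [wgt]
    rw [hw]
    simp
  | succ n ih =>
    intro h hpos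
    classical
    set H : (Fin n → Bool) → ℝ :=
      fun y => (1-p) * h (Fin.cons false y) + p * h (Fin.cons true y) with hH
    have hHpos : ∀ y, 0 < H y := by
      intro y
      have h1 := hpos (Fin.cons false y)
      have h2 := hpos (Fin.cons true y)
      have : (0:ℝ) < 1 - p := by linarith
      rw [hH]
      positivity
    -- decomposition identity
    have hZ : ∑ x, wgt p x * h x = ∑ y, wgt p y * H y := by
      rw [sum_cons_eq]
    have hL : ∑ x, wgt p x * (h x * log (h x))
        = ∑ y, wgt p y * ((1-p) * (h (Fin.cons false y) * log (h (Fin.cons false y)))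
            + p * (h (Fin.cons true y) * log (h (Fin.cons true y)))) := by
      rw [sum_cons_eq]
    have hsplit : ∑ y, wgt p y * ent2 p (h (Fin.cons false y)) (h (Fin.cons true y))
        = (∑ y, wgt p y * ((1-p) * (h (Fin.cons false y) * log (h (Fin.cons false y)))
            + p * (h (Fin.cons true y) * log (h (Fin.cons true y)))))
          - ∑ y, wgt p y * (H y * log (H y)) := by
      rw [← Finset.sum_sub_distrib]
      apply Finset.sum_congr rfl
      intro y _
      rw [ent2, hH]
      ring
    have hdecomp : EntS p h
        = (∑ y, wgt p y * ent2 p (h (Fin.cons false y)) (h (Fin.cons true y)))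
          + EntS p H := by
      rw [EntS, EntS, hZ, hL, hsplit]
      ring
    -- apply IH and Jensen
    have hIH := ih H hHpos
    have hjensen : ∀ (i : Fin n) (y : Fin n → Bool),
        ent2 p (H (Function.update y i false)) (H (Function.update y i true))
          ≤ (1-p) * ent2 p (h (Fin.cons false (Function.update y i false)))
                (h (Fin.cons false (Function.update y i true)))
            + p * ent2 p (h (Fin.cons true (Function.update y i false)))
                (h (Fin.cons true (Function.update y i true))) := by
      intro i y
      rw [hH]
      exact ent2_jensen hp0 hp1 (hpos _) (hpos _) (hpos _) (hpos _)
    have hstep2 : EntS p H ≤ ∑ i : Fin n, ∑ x : Fin (n+1) → Bool, wgt p x *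
        ent2 p (h (Function.update x i.succ false)) (h (Function.update x i.succ true)) := by
      refine hIH.trans (Finset.sum_le_sum fun i _ => ?_)
      have hub : ∑ y, wgt p y *
          ent2 p (H (Function.update y i false)) (H (Function.update y i true))
          ≤ ∑ y, wgt p y *
            ((1-p) * ent2 p (h (Fin.cons false (Function.update y i false)))
                (h (Fin.cons false (Function.update y i true)))
              + p * ent2 p (h (Fin.cons true (Function.update y i false)))
                (h (Fin.cons true (Function.update y i true)))) := by
        apply Finset.sum_le_sum
        intro y _
        exact mul_le_mul_of_nonneg_left (hjensen i y) (wgt_pos hp0 hp1 y).le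
      refine hub.trans (le_of_eq ?_)
      rw [sum_cons_eq (F := fun x =>
        ent2 p (h (Function.update x i.succ false)) (h (Function.update x i.succ true)))]
      apply Finset.sum_congr rfl
      intro y _
      rw [← Fin.cons_update, ← Fin.cons_update, ← Fin.cons_update, ← Fin.cons_update]
    have hfirst : ∑ y, wgt p y * ent2 p (h (Fin.cons false y)) (h (Fin.cons true y))
        = ∑ x : Fin (n+1) → Bool, wgt p x *
            ent2 p (h (Function.update x 0 false)) (h (Function.update x 0 true)) := by
      rw [sum_cons_eq (F := fun x =>
        ent2 p (h (Function.update x 0 false)) (h (Function.update x 0 true)))]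
      apply Finset.sum_congr rfl
      intro y _
      rw [Fin.update_cons_zero, Fin.update_cons_zero, Fin.update_cons_zero,
        Fin.update_cons_zero]
      ring
    rw [Fin.sum_univ_succ]
    rw [hdecomp, hfirst]
    linarith [hstep2]

end Combinatorics
section SumMain
open Real

variable {p : ℝ}

private lemma sumMain (hp0 : 0 < p) (hp1 : p < 1) {n : ℕ} {c : ℝ} (hc : 0 < c)
    (f : (Fin n → Bool) → ℝ)
    (hflip : ∀ (x : Fin n → Bool) (i : Fin n),
      |f (Function.update x i (!(x i))) - f x| ≤ c) :
    (∑ x, wgt p x * (exp (f x) * f x))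
      - (∑ x, wgt p x * exp (f x)) * log (∑ x, wgt p x * exp (f x))
    ≤ p*(1-p)*(((c-1)*exp c + 1)/c^2)
        * ∑ x, wgt p x * (exp (f x) * ∑ i, (f (Function.update x i (!(x i))) - f x)^2) := by
  classical
  have hEnt : EntS p (fun x => exp (f x))
      = (∑ x, wgt p x * (exp (f x) * f x))
        - (∑ x, wgt p x * exp (f x)) * log (∑ x, wgt p x * exp (f x)) := by
    simp [EntS, Real.log_exp]
  have hbd : ∀ (i : Fin n) (x : Fin n → Bool),
      ent2 p (exp (f (Function.update x i false))) (exp (f (Function.update x i true)))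
        ≤ p*(1-p)*(((c-1)*exp c + 1)/c^2)
          * (f (Function.update x i true) - f (Function.update x i false))^2
          * ((1-p) * exp (f (Function.update x i false))
              + p * exp (f (Function.update x i true))) := by
    intro i x
    have hd : |log (exp (f (Function.update x i true)))
        - log (exp (f (Function.update x i false)))| ≤ c := by
      rw [Real.log_exp, Real.log_exp]
      have h := hflip (Function.update x i false) i
      rw [Function.update_self, Function.update_idem] at h
      simpa using h
    have hle := ent2_le hp0 hp1 hc (exp_pos _) (exp_pos _) hd
    rwa [Real.log_exp, Real.log_exp] at hle
  have hline : ∀ i : Fin n,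
      ∑ x, wgt p x * ent2 p (exp (f (Function.update x i false)))
          (exp (f (Function.update x i true)))
        ≤ ∑ x, wgt p x * (p*(1-p)*(((c-1)*exp c + 1)/c^2)
            * (f (Function.update x i true) - f (Function.update x i false))^2 * exp (f x)) := by
    intro i
    have h1 : ∑ x, wgt p x * ent2 p (exp (f (Function.update x i false)))
          (exp (f (Function.update x i true)))
        ≤ ∑ x, wgt p x * ((1-p) * (p*(1-p)*(((c-1)*exp c + 1)/c^2)
              * (f (Function.update (Function.update x i false) i true)
                  - f (Function.update (Function.update x i false) i false))^2
              * exp (f (Function.update x i false)))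
            + p * (p*(1-p)*(((c-1)*exp c + 1)/c^2)
              * (f (Function.update (Function.update x i true) i true)
                  - f (Function.update (Function.update x i true) i false))^2
              * exp (f (Function.update x i true)))) := by
      apply Finset.sum_le_sum
      intro x _
      apply mul_le_mul_of_nonneg_left _ (wgt_pos hp0 hp1 x).le
      have := hbd i x
      simp only [Function.update_idem]
      calc ent2 p (exp (f (Function.update x i false))) (exp (f (Function.update x i true)))
          ≤ _ := this
        _ = _ := by ring
    have h2 := resample hp0 hp1 i (fun z => p*(1-p)*(((c-1)*exp c + 1)/c^2)
        * (f (Function.update z i true) - f (Function.update z i false))^2 * exp (f z))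
    calc ∑ x, wgt p x * ent2 p (exp (f (Function.update x i false)))
          (exp (f (Function.update x i true))) ≤ _ := h1
      _ = ∑ x, wgt p x * (p*(1-p)*(((c-1)*exp c + 1)/c^2)
            * (f (Function.update x i true) - f (Function.update x i false))^2
            * exp (f x)) := h2
  have hsq : ∀ (i : Fin n) (x : Fin n → Bool),
      (f (Function.update x i true) - f (Function.update x i false))^2
        = (f (Function.update x i (!(x i))) - f x)^2 := by
    intro i x
    cases hxi : x i
    · have h1 : Function.update x i false = x := by
        rw [← hxi]; exact Function.update_eq_self i x
      simp [h1]
    · have h1 : Function.update x i true = x := by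
        rw [← hxi]; exact Function.update_eq_self i x
      simp [h1]
      ring
  calc (∑ x, wgt p x * (exp (f x) * f x))
      - (∑ x, wgt p x * exp (f x)) * log (∑ x, wgt p x * exp (f x))
      = EntS p (fun x => exp (f x)) := hEnt.symm
    _ ≤ ∑ i, ∑ x, wgt p x * ent2 p (exp (f (Function.update x i false)))
          (exp (f (Function.update x i true))) :=
        tensorization hp0 hp1 (fun x => exp (f x)) (fun x => exp_pos (f x))
    _ ≤ ∑ i, ∑ x, wgt p x * (p*(1-p)*(((c-1)*exp c + 1)/c^2)
          * (f (Function.update x i true) - f (Function.update x i false))^2 * exp (f x)) :=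
        Finset.sum_le_sum fun i _ => hline i
    _ = p*(1-p)*(((c-1)*exp c + 1)/c^2)
        * ∑ x, wgt p x * (exp (f x) * ∑ i, (f (Function.update x i (!(x i))) - f x)^2) := by
        rw [Finset.sum_comm, Finset.mul_sum]
        apply Finset.sum_congr rfl
        intro x _
        calc ∑ i, wgt p x * (p*(1-p)*(((c-1)*exp c + 1)/c^2)
              * (f (Function.update x i true) - f (Function.update x i false))^2 * exp (f x))
            = ∑ i, p*(1-p)*(((c-1)*exp c + 1)/c^2)
              * (wgt p x * (exp (f x) * (f (Function.update x i (!(x i))) - f x)^2)) := by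
              apply Finset.sum_congr rfl
              intro i _
              rw [hsq i x]
              ring
          _ = p*(1-p)*(((c-1)*exp c + 1)/c^2)
              * ∑ i, wgt p x * (exp (f x) * (f (Function.update x i (!(x i))) - f x)^2) := by
              rw [Finset.mul_sum]
          _ = p*(1-p)*(((c-1)*exp c + 1)/c^2)
              * (wgt p x * (exp (f x) * ∑ i, (f (Function.update x i (!(x i))) - f x)^2)) := by
              rw [← Finset.mul_sum, ← Finset.mul_sum]

end SumMain
section Bridge
open Real

variable {p : ℝ}

private lemma nu_nonneg (hp0 : 0 ≤ p) (hp1 : p ≤ 1) (b : Bool) : 0 ≤ nu p b := by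
  cases b <;> simp [nu] <;> linarith

private lemma bern_prob (hp0 : 0 ≤ p) (hp1 : p ≤ 1) :
    IsProbabilityMeasure (bernoulliMeasure p) := by
  constructor
  rw [_root_.bernoulliMeasure]
  simp only [Measure.coe_add, Pi.add_apply, Measure.smul_apply, smul_eq_mul, measure_univ,
    mul_one]
  rw [← ENNReal.ofReal_add hp0 (by linarith)]
  norm_num

private lemma bern_single (hp0 : 0 ≤ p) (hp1 : p ≤ 1) (b : Bool) :
    bernoulliMeasure p {b} = ENNReal.ofReal (nu p b) := by
  cases b <;>
    simp [_root_.bernoulliMeasure, nu, Measure.dirac_apply, Set.indicator]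

private lemma pi_single (hp0 : 0 ≤ p) (hp1 : p ≤ 1) {n : ℕ} (x : Fin n → Bool) :
    (Measure.pi fun _ : Fin n => bernoulliMeasure p) {x} = ENNReal.ofReal (wgt p x) := by
  have h1 : ({x} : Set (Fin n → Bool)) = Set.pi Set.univ (fun i => {x i}) :=
    (Set.univ_pi_singleton x).symm
  haveI := bern_prob hp0 hp1
  haveI : ∀ _ : Fin n, SigmaFinite (bernoulliMeasure p) := fun _ => inferInstance
  rw [h1, Measure.pi_pi]
  calc ∏ i, bernoulliMeasure p {x i} = ∏ i, ENNReal.ofReal (nu p (x i)) :=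
        Finset.prod_congr rfl fun i _ => bern_single hp0 hp1 (x i)
    _ = ENNReal.ofReal (∏ i, nu p (x i)) :=
        (ENNReal.ofReal_prod_of_nonneg fun i _ => nu_nonneg hp0 hp1 (x i)).symm
    _ = ENNReal.ofReal (wgt p x) := rfl

private lemma integral_eq_sum (hp0 : 0 < p) (hp1 : p < 1) {n : ℕ}
    (g : (Fin n → Bool) → ℝ) :
    ∫ x, g x ∂(Measure.pi fun _ : Fin n => bernoulliMeasure p) = ∑ x, wgt p x * g x := by
  haveI := bern_prob hp0.le hp1.le
  haveI : ∀ _ : Fin n, SigmaFinite (bernoulliMeasure p) := fun _ => inferInstance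
  rw [integral_fintype (Integrable.of_finite)]
  apply Finset.sum_congr rfl
  intro x _
  rw [measureReal_def, pi_single hp0.le hp1.le x, ENNReal.toReal_ofReal (wgt_pos hp0 hp1 x).le, smul_eq_mul]

end Bridge
/-- **Log-Sobolev inequality for the asymmetric Bernoulli measure (Ledoux).** Let `P` be the
law of `n` i.i.d. Bernoulli(p) variables on `{0,1}ⁿ`, and let `f` satisfy the bounded bit-flip
condition `|f(x ⊕ eᵢ) - f(x)| ≤ c` for all `x` and `i`. Then
`D(P^{(f)} ‖ P) ≤ pq·((c-1)eᶜ + 1)/c² · E_{P^{(f)}}[(Γf)²]`, where `q = 1 - p` and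
`(Γf)(x)² = ∑ᵢ (f(x ⊕ eᵢ) - f(x))²`. -/
theorem logSobolev_bernoulli_p {n : ℕ} {p : ℝ} (hp0 : 0 < p) (hp1 : p < 1)
    (f : (Fin n → Bool) → ℝ) {c : ℝ} (hc : 0 < c)
    (hflip : ∀ (x : Fin n → Bool) (i : Fin n),
      |f (Function.update x i (!(x i))) - f x| ≤ c) :
    relEnt ((Measure.pi fun _ : Fin n => bernoulliMeasure p).tilted f)
        (Measure.pi fun _ : Fin n => bernoulliMeasure p) ≤
      ENNReal.ofReal (p * (1 - p) * (((c - 1) * Real.exp c + 1) / c^2) *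
        ∫ x, ∑ i, (f (Function.update x i (!(x i))) - f x)^2
          ∂((Measure.pi fun _ : Fin n => bernoulliMeasure p).tilted f)) := by
  classical
  haveI hPM : IsProbabilityMeasure (bernoulliMeasure p) := bern_prob hp0.le hp1.le
  haveI : ∀ _ : Fin n, SigmaFinite (bernoulliMeasure p) := fun _ => inferInstance
  set μ : Measure (Fin n → Bool) := Measure.pi fun _ : Fin n => bernoulliMeasure p with hμ
  haveI : IsProbabilityMeasure μ := by rw [hμ]; infer_instance
  have hint : Integrable (fun x => Real.exp (f x)) μ := .of_finite
  have hZpos : 0 < ∫ x, Real.exp (f x) ∂μ := integral_exp_pos hint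
  haveI hQprob : IsProbabilityMeasure (μ.tilted f) := isProbabilityMeasure_tilted hint
  rw [relEnt, if_pos ⟨tilted_absolutelyContinuous μ f, Integrable.of_finite⟩]
  have hae : (fun x => Real.log (((μ.tilted f).rnDeriv μ) x).toReal)
      =ᵐ[μ.tilted f] fun x => f x - Real.log (∫ x, Real.exp (f x) ∂μ) :=
    (tilted_absolutelyContinuous μ f).ae_eq (log_rnDeriv_tilted_left_self hint)
  rw [integral_congr_ae hae]
  rw [integral_sub (Integrable.of_finite) (integrable_const _)]
  rw [integral_const]
  simp only [measure_univ, probReal_univ, ENNReal.toReal_one, one_smul]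
  apply ENNReal.ofReal_le_ofReal
  have hZ : ∫ x, Real.exp (f x) ∂μ = ∑ x, wgt p x * Real.exp (f x) :=
    integral_eq_sum hp0 hp1 _
  have hZpos' : 0 < ∑ x, wgt p x * Real.exp (f x) := hZ ▸ hZpos
  have hT : ∫ x, f x ∂(μ.tilted f)
      = (∑ x, wgt p x * (Real.exp (f x) * f x)) / ∑ x, wgt p x * Real.exp (f x) := by
    rw [integral_tilted, hZ, integral_eq_sum hp0 hp1, Finset.sum_div]
    apply Finset.sum_congr rfl
    intro x _
    rw [smul_eq_mul]
    ring
  have hS : ∫ x, (∑ i, (f (Function.update x i (!(x i))) - f x)^2) ∂(μ.tilted f)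
      = (∑ x, wgt p x * (Real.exp (f x) * ∑ i, (f (Function.update x i (!(x i))) - f x)^2))
        / ∑ x, wgt p x * Real.exp (f x) := by
    rw [integral_tilted, hZ, integral_eq_sum hp0 hp1, Finset.sum_div]
    apply Finset.sum_congr rfl
    intro x _
    rw [smul_eq_mul]
    ring
  rw [hT, hS, hZ]
  have key := sumMain hp0 hp1 hc f hflip
  set T := ∑ x, wgt p x * (Real.exp (f x) * f x) with hTd
  set Z := ∑ x, wgt p x * Real.exp (f x) with hZd
  set S := ∑ x, wgt p x * (Real.exp (f x)
      * ∑ i, (f (Function.update x i (!(x i))) - f x)^2) with hSd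
  have h1 : T/Z - Real.log Z = (T - Z * Real.log Z)/Z := by
    field_simp
  have h2 : (T - Z * Real.log Z)/Z
      ≤ (p * (1 - p) * (((c - 1) * Real.exp c + 1) / c^2) * S)/Z := by
    apply div_le_div_of_nonneg_right ?_ ?_
    · exact key
    · exact hZpos'.le
  have h3 : (p * (1 - p) * (((c - 1) * Real.exp c + 1) / c^2) * S)/Z
      = p * (1 - p) * (((c - 1) * Real.exp c + 1) / c^2) * (S/Z) := by
    ring
  linarith
end
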